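/- arXiv:1908.04665 — 3 statements merged into one kernel-verified Lean document; each statement's English description precedes it below -/
import Mathlib

section
/- Let F be in the Hardy–Sobolev space W^{1,2} with finitely many roots α_1,…,α_m in D and Blaschke decomposition F = B·G. Then ‖G‖_{W^{1,2}}^2 ≤ ‖F‖_{W^{1,2}}^2 − Σ_{j=1}^m (1−|α_j|^2)·[ 2‖G(e^{i·})/(1−ᾱ_j e^{i·})‖_D^2 − ‖G(e^{i·})/(1−ᾱ_j e^{i·})‖_{H^2}^2 ]. -/
open Finset

noncomputable section BD

namespace BD

def prevc (k : ℕ → ℂ) : ℕ → ℂ := fun n => match n with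
  | 0 => 0
  | m + 1 => k m

@[simp] lemma prevc_zero (k : ℕ → ℂ) : prevc k 0 = 0 := rfl
@[simp] lemma prevc_succ (k : ℕ → ℂ) (n : ℕ) : prevc k (n+1) = k n := rfl

def blc (α : ℂ) (k : ℕ → ℂ) : ℕ → ℂ := fun n => prevc k n - α * k n

def cmc (α : ℂ) (k : ℕ → ℂ) : ℕ → ℂ := fun n => k n - (starRingEnd ℂ) α * prevc k n

def tailc (α : ℂ) (b : ℕ → ℂ) : ℕ → ℂ := fun n => ∑' j : ℕ, α ^ j * b (n + 1 + j)

def phic (a : ℕ → ℂ) (z : ℂ) : ℂ := ∑' n, a n * z ^ n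

lemma hasSum_prevc {k : ℕ → ℂ} {z V : ℂ} (h : HasSum (fun n => k n * z ^ n) V) :
    HasSum (fun n => prevc k n * z ^ n) (z * V) := by
  have h2 : HasSum ((fun n => prevc k n * z ^ n) ∘ Nat.succ) (z * V) :=
    (h.mul_left z).congr_fun (fun n => by simp [Function.comp]; ring)
  refine (Function.Injective.hasSum_iff Nat.succ_injective ?_).mp h2
  intro x hx
  have : x = 0 := by
    rcases x with _ | n
    · rfl
    · exact absurd ⟨n, rfl⟩ hx
  simp [this]

lemma hasSum_blc {α : ℂ} {k : ℕ → ℂ} {z V : ℂ} (h : HasSum (fun n => k n * z ^ n) V) :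
    HasSum (fun n => blc α k n * z ^ n) ((z - α) * V) := by
  have h2 := (hasSum_prevc h).sub (h.mul_left α)
  have h3 : HasSum (fun n => blc α k n * z ^ n) (z * V - α * V) :=
    h2.congr_fun (fun n => by unfold blc; ring)
  simpa [sub_mul] using h3

lemma hasSum_cmc {α : ℂ} {k : ℕ → ℂ} {z V : ℂ} (h : HasSum (fun n => k n * z ^ n) V) :
    HasSum (fun n => cmc α k n * z ^ n) ((1 - (starRingEnd ℂ) α * z) * V) := by
  have h2 := h.sub ((hasSum_prevc h).mul_left ((starRingEnd ℂ) α))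
  have h3 : HasSum (fun n => cmc α k n * z ^ n) (V - (starRingEnd ℂ) α * (z * V)) :=
    h2.congr_fun (fun n => by unfold cmc; ring)
  have : (1 - (starRingEnd ℂ) α * z) * V = V - (starRingEnd ℂ) α * (z * V) := by ring
  rwa [this]

def TempC (a : ℕ → ℂ) : Prop := ∀ r : ℝ, 0 ≤ r → r < 1 → Summable fun n => ‖a n‖ * r ^ n

lemma tempC_of_bdd {a : ℕ → ℂ} {C : ℝ} (h : ∀ n, ‖a n‖ ≤ C) : TempC a := by
  intro r hr0 hr1
  refine Summable.of_nonneg_of_le (fun n => by positivity) (fun n => ?_)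
    (((summable_geometric_of_lt_one hr0 hr1).mul_left (max C 0)))
  exact mul_le_mul_of_nonneg_right ((h n).trans (le_max_left _ _)) (by positivity)

lemma exists_real_notin {S : Set ℂ} (hS : S.Finite) {r : ℝ} (hr : r < 1) :
    ∃ x : ℝ, r < x ∧ 0 < x ∧ x < 1 ∧ (x : ℂ) ∉ S := by
  have h1 : (Set.Ioo (max r 0) 1).Infinite := Set.Ioo_infinite (by simp [hr])
  have h2 : ((fun x : ℝ => (x : ℂ)) '' Set.Ioo (max r 0) 1).Infinite :=
    h1.image (Complex.ofReal_injective.injOn)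
  obtain ⟨z, hz⟩ := (h2.diff hS).nonempty
  obtain ⟨⟨x, hx, rfl⟩, hzS⟩ := hz
  exact ⟨x, (le_max_left r 0).trans_lt hx.1, (le_max_right r 0).trans_lt hx.1, hx.2, hzS⟩

lemma tempC_of_hasSum {a : ℕ → ℂ} {S : Set ℂ} {F : ℂ → ℂ} (hS : S.Finite)
    (h : ∀ z : ℂ, ‖z‖ < 1 → z ∉ S → HasSum (fun n => a n * z ^ n) (F z)) : TempC a := by
  intro r hr0 hr1
  obtain ⟨x, hrx, hx0, hx1, hxS⟩ := exists_real_notin hS hr1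
  have hx : ‖(x : ℂ)‖ < 1 := by
    rw [Complex.norm_real, Real.norm_eq_abs, abs_of_pos hx0]; exact hx1
  have htend : Filter.Tendsto (fun n => ‖a n‖ * x ^ n) Filter.atTop (nhds 0) := by
    have := (h _ hx hxS).summable.tendsto_atTop_zero
    have h2 := this.norm
    simp only [norm_zero] at h2
    refine h2.congr (fun n => ?_)
    rw [norm_mul, norm_pow, Complex.norm_real, Real.norm_eq_abs, abs_of_pos hx0]
  obtain ⟨C, hC⟩ := htend.bddAbove_range
  simp only [mem_upperBounds, Set.mem_range, forall_exists_index] at hC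
  have hCb : ∀ n, ‖a n‖ * x ^ n ≤ C := fun n => hC _ n rfl
  refine Summable.of_nonneg_of_le (fun n => by positivity) (fun n => ?_)
    ((summable_geometric_of_lt_one (r := r / x) (by positivity) (by
      rw [div_lt_one hx0]; exact hrx)).mul_left C)
  have hxn : (0:ℝ) < x ^ n := by positivity
  calc ‖a n‖ * r ^ n = (‖a n‖ * x ^ n) * (r / x) ^ n := by
        rw [div_pow]
        field_simp
    _ ≤ C * (r / x) ^ n := mul_le_mul_of_nonneg_right (hCb n) (by positivity)

lemma summable_norm_pow {a : ℕ → ℂ} (hT : TempC a) {z : ℂ} (hz : ‖z‖ < 1) :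
    Summable fun n => ‖a n * z ^ n‖ := by
  have := hT ‖z‖ (norm_nonneg z) hz
  refine this.congr (fun n => ?_)
  rw [norm_mul, norm_pow]

lemma hasSum_phic {a : ℕ → ℂ} (hT : TempC a) {z : ℂ} (hz : ‖z‖ < 1) :
    HasSum (fun n => a n * z ^ n) (phic a z) :=
  (Summable.of_norm (summable_norm_pow hT hz)).hasSum

lemma continuousAt_phic {a : ℕ → ℂ} (hT : TempC a) {z0 : ℂ} (hz0 : ‖z0‖ < 1) :
    ContinuousAt (phic a) z0 := by
  set r : ℝ := (‖z0‖ + 1) / 2 with hrdef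
  have hr0 : 0 ≤ r := by positivity
  have hr1 : r < 1 := by rw [hrdef]; linarith
  have hz0r : ‖z0‖ < r := by rw [hrdef]; linarith
  have hcont : ContinuousOn (phic a) (Metric.closedBall (0:ℂ) r) := by
    have hu : Summable fun n => ‖a n‖ * r ^ n := hT r hr0 hr1
    have := tendstoUniformlyOn_tsum hu
      (f := fun n z => a n * z ^ n) (s := Metric.closedBall (0:ℂ) r) (fun n x hx => by
        rw [norm_mul, norm_pow]
        have : ‖x‖ ≤ r := by simpa [Complex.dist_eq] using hx
        exact mul_le_mul_of_nonneg_left (pow_le_pow_left₀ (norm_nonneg x) this n) (norm_nonneg _))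
    exact this.continuousOn (Filter.Eventually.of_forall (fun t =>
      (continuous_finset_sum t (fun n _ => by fun_prop)).continuousOn)).frequently
  exact hcont.continuousAt (Metric.closedBall_mem_nhds_of_mem (by
    simpa [Complex.dist_eq] using hz0r))


open Filter Topology in
lemma neBot_ball_diff {S : Set ℂ} (hS : S.Finite) {z : ℂ} (hz : ‖z‖ < 1) :
    (𝓝[(Metric.ball (0:ℂ) 1) \ S] z).NeBot := by
  have hzb : z ∈ Metric.ball (0:ℂ) 1 := by simpa [Complex.dist_eq] using hz
  have h1 : Metric.ball (0:ℂ) 1 \ S = Metric.ball (0:ℂ) 1 ∩ Sᶜ := rfl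
  rw [h1, nhdsWithin_inter, (Metric.isOpen_ball).nhdsWithin_eq hzb]
  have h2 : 𝓝[Sᶜ] z ≥ 𝓝[((S \ {z})ᶜ ∩ {z}ᶜ)] z := by
    apply nhdsWithin_mono
    intro w hw
    simp only [Set.mem_inter_iff, Set.mem_compl_iff, Set.mem_diff, Set.mem_singleton_iff] at hw ⊢
    intro hwS
    exact hw.1 ⟨hwS, hw.2⟩
  have h3 : 𝓝[((S \ {z})ᶜ ∩ {z}ᶜ)] z = 𝓝[{z}ᶜ] z := by
    rw [nhdsWithin_inter, IsOpen.nhdsWithin_eq ((hS.subset (Set.diff_subset)).isClosed.isOpen_compl) (by simp),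
      inf_eq_right.2 nhdsWithin_le_nhds]
  rw [h3] at h2
  have : (𝓝[{z}ᶜ] z).NeBot := by
    have := Complex.instNontrivial
    infer_instance
  have hne : (𝓝 z ⊓ 𝓝[Sᶜ] z).NeBot := by
    refine Filter.neBot_of_le (f := 𝓝[{z}ᶜ] z) ?_
    exact le_inf nhdsWithin_le_nhds h2
  exact hne

open Filter Topology in
lemma ext_hasSum {a : ℕ → ℂ} {S : Set ℂ} {H : ℂ → ℂ} (hT : TempC a) (hS : S.Finite)
    (h : ∀ z : ℂ, ‖z‖ < 1 → z ∉ S → HasSum (fun n => a n * z ^ n) (H z))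
    {z0 : ℂ} (hz0 : ‖z0‖ < 1)
    (hH : Filter.Tendsto H (𝓝[(Metric.ball (0:ℂ) 1) \ S] z0) (𝓝 (H z0))) :
    HasSum (fun n => a n * z0 ^ n) (H z0) := by
  have key : phic a z0 = H z0 := by
    have hNB : (𝓝[(Metric.ball (0:ℂ) 1) \ S] z0).NeBot := neBot_ball_diff hS hz0
    have h1 : Filter.Tendsto (phic a) (𝓝[(Metric.ball (0:ℂ) 1) \ S] z0) (𝓝 (phic a z0)) :=
      ((continuousAt_phic hT hz0).continuousWithinAt)
    have heq : ∀ᶠ w in 𝓝[(Metric.ball (0:ℂ) 1) \ S] z0, phic a w = H w := by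
      filter_upwards [self_mem_nhdsWithin] with w hw
      have hw1 : ‖w‖ < 1 := by simpa [Complex.dist_eq] using hw.1
      exact (h w hw1 hw.2).tsum_eq
    exact tendsto_nhds_unique (h1.congr' heq) hH
  rw [← key]
  exact hasSum_phic hT hz0

lemma coeff_zero {a : ℕ → ℂ} {S : Set ℂ} (hS : S.Finite)
    (h : ∀ z : ℂ, ‖z‖ < 1 → z ∉ S → HasSum (fun n => a n * z ^ n) 0) : ∀ n, a n = 0 := by
  intro n
  induction n generalizing a S with
  | zero =>
    have hT : TempC a := tempC_of_hasSum (F := fun _ => 0) hS h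
    have h0 : HasSum (fun n => a n * (0:ℂ) ^ n) 0 :=
      ext_hasSum hT hS h (by norm_num) tendsto_const_nhds
    have h1 : HasSum (fun n => a n * (0:ℂ) ^ n) (a 0) := by
      have : (fun n => a n * (0:ℂ) ^ n) = (fun n => if n = 0 then a 0 else 0) := by
        funext n; rcases n with _ | n <;> simp
      rw [this]
      exact hasSum_ite_eq 0 (a 0)
    exact h1.unique h0
  | succ n ih =>
    have ha0 : a 0 = 0 := by
      have hT : TempC a := tempC_of_hasSum (F := fun _ => 0) hS h
      have h0 : HasSum (fun n => a n * (0:ℂ) ^ n) 0 :=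
        ext_hasSum hT hS h (by norm_num) tendsto_const_nhds
      have h1 : HasSum (fun n => a n * (0:ℂ) ^ n) (a 0) := by
        have : (fun n => a n * (0:ℂ) ^ n) = (fun n => if n = 0 then a 0 else 0) := by
          funext n; rcases n with _ | n <;> simp
        rw [this]
        exact hasSum_ite_eq 0 (a 0)
      exact h1.unique h0
    refine ih (a := fun n => a (n + 1)) (S := S ∪ {0}) (hS.union (Set.finite_singleton 0)) ?_
    intro z hz hzS
    have hz0 : z ≠ 0 := by
      intro hzz; exact hzS (by simp [hzz])
    have hzSS : z ∉ S := fun hc => hzS (Set.mem_union_left _ hc)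
    have h1 := h z hz hzSS
    have h2 : HasSum (fun n => a (n + 1) * z ^ (n + 1)) 0 :=
      (hasSum_nat_add_iff (f := fun n => a n * z ^ n) (g := 0) 1).mpr (by simpa [ha0] using h1)
    have h3 : HasSum (fun n => z⁻¹ * (a (n + 1) * z ^ (n + 1))) 0 := by
      simpa using h2.mul_left z⁻¹
    refine h3.congr_fun (fun n => ?_)
    field_simp
    ring

lemma coeff_unique {a b : ℕ → ℂ} {S : Set ℂ} {H : ℂ → ℂ} (hS : S.Finite)
    (ha : ∀ z : ℂ, ‖z‖ < 1 → z ∉ S → HasSum (fun n => a n * z ^ n) (H z))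
    (hb : ∀ z : ℂ, ‖z‖ < 1 → z ∉ S → HasSum (fun n => b n * z ^ n) (H z)) : a = b := by
  funext n
  have := coeff_zero (a := fun n => a n - b n) hS (fun z hz hzS => by
    have := (ha z hz hzS).sub (hb z hz hzS)
    simpa [sub_mul] using this) n
  exact sub_eq_zero.mp this
  

lemma norm_le_sqrt_tsum {w : ℕ → ℝ} (hw1 : ∀ n, 1 ≤ w n) {b : ℕ → ℂ}
    (hb : Summable fun n => w n * ‖b n‖ ^ 2) :
    ∀ n, ‖b n‖ ≤ Real.sqrt (∑' n, w n * ‖b n‖ ^ 2) := by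
  intro n
  have h1 : ‖b n‖ ^ 2 ≤ ∑' n, w n * ‖b n‖ ^ 2 := by
    calc ‖b n‖ ^ 2 ≤ w n * ‖b n‖ ^ 2 := by nlinarith [hw1 n, sq_nonneg ‖b n‖]
    _ ≤ _ := Summable.le_tsum hb n (fun j _ => mul_nonneg (by linarith [hw1 j]) (sq_nonneg _))
  exact Real.le_sqrt (norm_nonneg _) (tsum_nonneg (fun j =>
    mul_nonneg (by linarith [hw1 j]) (sq_nonneg _)) ) |>.mpr h1

lemma tsum_cs {r : ℝ} (hr0 : 0 ≤ r) (hr1 : r < 1) {c : ℕ → ℝ} (hc0 : ∀ j, 0 ≤ c j)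
    (hc1 : Summable fun j => r ^ j * c j)
    (hc2 : Summable fun j => r ^ j * c j ^ 2) :
    (∑' j, r ^ j * c j) ^ 2 ≤ (1 - r)⁻¹ * ∑' j, r ^ j * c j ^ 2 := by
  set M : ℝ := (1 - r)⁻¹ * ∑' j, r ^ j * c j ^ 2 with hM
  have hM0 : 0 ≤ M := mul_nonneg (by rw [inv_nonneg]; linarith)
    (tsum_nonneg fun j => mul_nonneg (pow_nonneg hr0 j) (sq_nonneg _))
  have key : ∑' j, r ^ j * c j ≤ Real.sqrt M := by
    refine Summable.tsum_le_of_sum_le hc1 (fun s => ?_)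
    have hs0 : 0 ≤ ∑ j ∈ s, r ^ j * c j :=
      Finset.sum_nonneg fun j _ => mul_nonneg (pow_nonneg hr0 j) (hc0 j)
    rw [Real.le_sqrt hs0 hM0]
    have cs := sum_mul_sq_le_sq_mul_sq s (fun j => Real.sqrt (r ^ j))
      (fun j => Real.sqrt (r ^ j) * c j)
    have h1 : ∀ j : ℕ, Real.sqrt (r ^ j) * (Real.sqrt (r ^ j) * c j) = r ^ j * c j := by
      intro j
      rw [← mul_assoc, Real.mul_self_sqrt (pow_nonneg hr0 j)]
    have h2 : ∀ j : ℕ, Real.sqrt (r ^ j) ^ 2 = r ^ j := fun j => Real.sq_sqrt (pow_nonneg hr0 j)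
    have h3 : ∀ j : ℕ, (Real.sqrt (r ^ j) * c j) ^ 2 = r ^ j * c j ^ 2 := by
      intro j; rw [mul_pow, h2]
    simp only [h1, h2, h3] at cs
    refine cs.trans ?_
    rw [hM]
    have hg : Summable fun j : ℕ => r ^ j := summable_geometric_of_lt_one hr0 hr1
    have e1 : ∑ j ∈ s, r ^ j ≤ (1 - r)⁻¹ := by
      rw [← tsum_geometric_of_lt_one hr0 hr1]
      exact Summable.sum_le_tsum s (fun j _ => pow_nonneg hr0 j) hg
    have e2 : ∑ j ∈ s, r ^ j * c j ^ 2 ≤ ∑' j, r ^ j * c j ^ 2 :=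
      Summable.sum_le_tsum s (fun j _ => mul_nonneg (pow_nonneg hr0 j) (sq_nonneg _)) hc2
    exact mul_le_mul e1 e2 (Finset.sum_nonneg fun j _ =>
      mul_nonneg (pow_nonneg hr0 j) (sq_nonneg _)) (by rw [inv_nonneg]; linarith)
  calc (∑' j, r ^ j * c j) ^ 2 ≤ Real.sqrt M ^ 2 := by
        have h0 : 0 ≤ ∑' j, r ^ j * c j :=
          tsum_nonneg fun j => mul_nonneg (pow_nonneg hr0 j) (hc0 j)
        exact pow_le_pow_left₀ h0 key 2
    _ = M := Real.sq_sqrt hM0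

lemma norm_sq_id (α x y : ℂ) :
    ‖x - α * y‖ ^ 2 - ‖y - (starRingEnd ℂ) α * x‖ ^ 2
      = (1 - ‖α‖ ^ 2) * (‖x‖ ^ 2 - ‖y‖ ^ 2) := by
  have h : ∀ z : ℂ, ‖z‖ ^ 2 = Complex.normSq z := fun z => by
    rw [Complex.sq_norm]
  simp only [h]
  simp only [Complex.normSq_apply, Complex.sub_re, Complex.sub_im, Complex.mul_re, Complex.mul_im,
    Complex.conj_re, Complex.conj_im]
  ring

lemma summable_prevc {w : ℕ → ℝ} {k : ℕ → ℂ}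
    (S2 : Summable fun n => w (n + 1) * ‖k n‖ ^ 2) :
    Summable fun n => w n * ‖prevc k n‖ ^ 2 := by
  have hinj : Function.Injective Nat.succ := Nat.succ_injective
  have h0 : ∀ x ∉ Set.range Nat.succ, w x * ‖prevc k x‖ ^ 2 = 0 := by
    intro x hx
    rcases x with _ | n
    · simp
    · exact absurd ⟨n, rfl⟩ hx
  exact (Function.Injective.summable_iff hinj h0).mp (S2.congr fun n => by simp)

lemma tsum_prevc {w : ℕ → ℝ} {k : ℕ → ℂ} :
    ∑' n, w n * ‖prevc k n‖ ^ 2 = ∑' n, w (n + 1) * ‖k n‖ ^ 2 := by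
  have hinj : Function.Injective Nat.succ := Nat.succ_injective
  have h0 : ∀ x ∉ Set.range Nat.succ, w x * ‖prevc k x‖ ^ 2 = 0 := by
    intro x hx
    rcases x with _ | n
    · simp
    · exact absurd ⟨n, rfl⟩ hx
  rw [← Function.Injective.tsum_eq hinj (by
    intro x hx
    simp only [Function.mem_support] at hx
    by_contra hc
    exact hx (h0 x hc))]
  rfl

lemma core_identity {w : ℕ → ℝ} (hw0 : ∀ n, 0 ≤ w n) {k : ℕ → ℂ} (α : ℂ)
    (S1 : Summable fun n => w n * ‖k n‖ ^ 2)
    (S2 : Summable fun n => w (n + 1) * ‖k n‖ ^ 2) :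
    Summable (fun n => w n * ‖blc α k n‖ ^ 2) ∧
    Summable (fun n => w n * ‖cmc α k n‖ ^ 2) ∧
    ∑' n, w n * ‖blc α k n‖ ^ 2 = ∑' n, w n * ‖cmc α k n‖ ^ 2
      + (1 - ‖α‖ ^ 2) * (∑' n, w (n + 1) * ‖k n‖ ^ 2 - ∑' n, w n * ‖k n‖ ^ 2) := by
  have Sprev : Summable fun n => w n * ‖prevc k n‖ ^ 2 := summable_prevc S2
  have hmaj : Summable fun n => 2 * (w n * ‖prevc k n‖ ^ 2) + 2 * ‖α‖^2 * (w n * ‖k n‖ ^ 2) :=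
    ((Sprev.mul_left 2).add ((S1.mul_left (2 * ‖α‖^2)).congr (fun n => by ring)))
  have hble : ∀ n, w n * ‖blc α k n‖ ^ 2
      ≤ 2 * (w n * ‖prevc k n‖ ^ 2) + 2 * ‖α‖^2 * (w n * ‖k n‖ ^ 2) := by
    intro n
    have h1 : ‖blc α k n‖ ≤ ‖prevc k n‖ + ‖α‖ * ‖k n‖ := by
      refine (norm_sub_le _ _).trans ?_
      rw [norm_mul]
    have h2 : ‖blc α k n‖ ^ 2 ≤ (‖prevc k n‖ + ‖α‖ * ‖k n‖) ^ 2 :=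
      pow_le_pow_left₀ (norm_nonneg _) h1 2
    have h3 : (‖prevc k n‖ + ‖α‖ * ‖k n‖) ^ 2 ≤ 2 * ‖prevc k n‖ ^ 2 + 2 * ‖α‖ ^ 2 * ‖k n‖ ^ 2 := by
      nlinarith [sq_nonneg (‖prevc k n‖ - ‖α‖ * ‖k n‖)]
    calc w n * ‖blc α k n‖ ^ 2
        ≤ w n * (2 * ‖prevc k n‖ ^ 2 + 2 * ‖α‖ ^ 2 * ‖k n‖ ^ 2) :=
          mul_le_mul_of_nonneg_left (h2.trans h3) (hw0 n)
      _ = 2 * (w n * ‖prevc k n‖ ^ 2) + 2 * ‖α‖ ^ 2 * (w n * ‖k n‖ ^ 2) := by ring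
  have Sbl : Summable fun n => w n * ‖blc α k n‖ ^ 2 :=
    Summable.of_nonneg_of_le (fun n => mul_nonneg (hw0 n) (sq_nonneg _)) hble hmaj
  have hmaj2 : Summable fun n => 2 * (w n * ‖k n‖ ^ 2) + 2 * ‖α‖^2 * (w n * ‖prevc k n‖ ^ 2) :=
    ((S1.mul_left 2).add ((Sprev.mul_left (2 * ‖α‖^2)).congr (fun n => by ring)))
  have hcme : ∀ n, w n * ‖cmc α k n‖ ^ 2
      ≤ 2 * (w n * ‖k n‖ ^ 2) + 2 * ‖α‖^2 * (w n * ‖prevc k n‖ ^ 2) := by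
    intro n
    have h1 : ‖cmc α k n‖ ≤ ‖k n‖ + ‖α‖ * ‖prevc k n‖ := by
      refine (norm_sub_le _ _).trans ?_
      rw [norm_mul, RCLike.norm_conj]
    have h2 : ‖cmc α k n‖ ^ 2 ≤ (‖k n‖ + ‖α‖ * ‖prevc k n‖) ^ 2 :=
      pow_le_pow_left₀ (norm_nonneg _) h1 2
    have h3 : (‖k n‖ + ‖α‖ * ‖prevc k n‖) ^ 2 ≤ 2 * ‖k n‖ ^ 2 + 2 * ‖α‖ ^ 2 * ‖prevc k n‖ ^ 2 := by
      nlinarith [sq_nonneg (‖k n‖ - ‖α‖ * ‖prevc k n‖)]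
    calc w n * ‖cmc α k n‖ ^ 2
        ≤ w n * (2 * ‖k n‖ ^ 2 + 2 * ‖α‖ ^ 2 * ‖prevc k n‖ ^ 2) :=
          mul_le_mul_of_nonneg_left (h2.trans h3) (hw0 n)
      _ = 2 * (w n * ‖k n‖ ^ 2) + 2 * ‖α‖ ^ 2 * (w n * ‖prevc k n‖ ^ 2) := by ring
  have Scm : Summable fun n => w n * ‖cmc α k n‖ ^ 2 :=
    Summable.of_nonneg_of_le (fun n => mul_nonneg (hw0 n) (sq_nonneg _)) hcme hmaj2
  refine ⟨Sbl, Scm, ?_⟩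
  have hpt : ∀ n, w n * ‖blc α k n‖ ^ 2 - w n * ‖cmc α k n‖ ^ 2
      = (1 - ‖α‖ ^ 2) * (w n * ‖prevc k n‖ ^ 2 - w n * ‖k n‖ ^ 2) := by
    intro n
    have h := norm_sq_id α (prevc k n) (k n)
    unfold blc cmc
    linear_combination w n * h
  have h1 : ∑' n, (w n * ‖blc α k n‖ ^ 2 - w n * ‖cmc α k n‖ ^ 2)
      = ∑' n, w n * ‖blc α k n‖ ^ 2 - ∑' n, w n * ‖cmc α k n‖ ^ 2 := Summable.tsum_sub Sbl Scm
  have h2 : ∑' n, (w n * ‖blc α k n‖ ^ 2 - w n * ‖cmc α k n‖ ^ 2)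
      = (1 - ‖α‖ ^ 2) * (∑' n, w (n + 1) * ‖k n‖ ^ 2 - ∑' n, w n * ‖k n‖ ^ 2) := by
    calc ∑' n, (w n * ‖blc α k n‖ ^ 2 - w n * ‖cmc α k n‖ ^ 2)
        = ∑' n, (1 - ‖α‖ ^ 2) * (w n * ‖prevc k n‖ ^ 2 - w n * ‖k n‖ ^ 2) := by
          exact tsum_congr hpt
      _ = (1 - ‖α‖ ^ 2) * ∑' n, (w n * ‖prevc k n‖ ^ 2 - w n * ‖k n‖ ^ 2) := tsum_mul_left
      _ = (1 - ‖α‖ ^ 2) * (∑' n, w n * ‖prevc k n‖ ^ 2 - ∑' n, w n * ‖k n‖ ^ 2) := by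
          rw [Summable.tsum_sub Sprev S1]
      _ = (1 - ‖α‖ ^ 2) * (∑' n, w (n + 1) * ‖k n‖ ^ 2 - ∑' n, w n * ‖k n‖ ^ 2) := by
          rw [tsum_prevc]
  linarith [h1, h2]


lemma summable_tail_term {w : ℕ → ℝ} (hw1 : ∀ n, 1 ≤ w n) {b : ℕ → ℂ}
    (hb : Summable fun n => w n * ‖b n‖ ^ 2) {α : ℂ} (hα : ‖α‖ < 1) (n : ℕ) :
    Summable fun j => α ^ j * b (n + 1 + j) := by
  set C := Real.sqrt (∑' n, w n * ‖b n‖ ^ 2) with hC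
  have hCb := norm_le_sqrt_tsum hw1 hb
  refine Summable.of_norm (Summable.of_nonneg_of_le (fun j => norm_nonneg _) (fun j => ?_)
    ((summable_geometric_of_lt_one (norm_nonneg α) hα).mul_left C))
  rw [norm_mul, norm_pow]
  calc ‖α‖ ^ j * ‖b (n + 1 + j)‖ ≤ ‖α‖ ^ j * C :=
        mul_le_mul_of_nonneg_left (hCb _) (pow_nonneg (norm_nonneg α) j)
    _ = C * ‖α‖ ^ j := by ring

lemma tail_summable_gen {w v : ℕ → ℝ} (hw1 : ∀ n, 1 ≤ w n) (hv0 : ∀ n, 0 ≤ v n)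
    (hvw : ∀ n j, v n ≤ w (n + 1 + j))
    {b : ℕ → ℂ} (hb : Summable fun n => w n * ‖b n‖ ^ 2)
    {α : ℂ} (hα : ‖α‖ < 1) :
    Summable fun n => v n * ‖tailc α b n‖ ^ 2 := by
  set r := ‖α‖ with hrdef
  have hr0 : 0 ≤ r := norm_nonneg α
  have hr1 : r < 1 := hα
  set T := ∑' n, w n * ‖b n‖ ^ 2 with hT
  have hterm0 : ∀ m, 0 ≤ w m * ‖b m‖ ^ 2 :=
    fun m => mul_nonneg (by linarith [hw1 m]) (sq_nonneg _)
  have hT0 : 0 ≤ T := tsum_nonneg hterm0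
  have htermT : ∀ m, w m * ‖b m‖ ^ 2 ≤ T := fun m => Summable.le_tsum hb m (fun j _ => hterm0 j)
  -- summability of inner series
  have hS2 : ∀ n, Summable fun j => r ^ j * (w (n + 1 + j) * ‖b (n + 1 + j)‖ ^ 2) := by
    intro n
    refine Summable.of_nonneg_of_le (fun j => mul_nonneg (pow_nonneg hr0 j) (hterm0 _))
      (fun j => ?_) ((summable_geometric_of_lt_one hr0 hr1).mul_left T)
    calc r ^ j * (w (n + 1 + j) * ‖b (n + 1 + j)‖ ^ 2) ≤ r ^ j * T :=
          mul_le_mul_of_nonneg_left (htermT _) (pow_nonneg hr0 j)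
      _ = T * r ^ j := by ring
  have hS2' : ∀ n, Summable fun j => r ^ j * ‖b (n + 1 + j)‖ ^ 2 := by
    intro n
    refine Summable.of_nonneg_of_le (fun j => mul_nonneg (pow_nonneg hr0 j) (sq_nonneg _))
      (fun j => ?_) (hS2 n)
    have := hw1 (n + 1 + j)
    have hb2 : ‖b (n + 1 + j)‖ ^ 2 ≤ w (n + 1 + j) * ‖b (n + 1 + j)‖ ^ 2 := by
      nlinarith [sq_nonneg ‖b (n + 1 + j)‖]
    exact mul_le_mul_of_nonneg_left hb2 (pow_nonneg hr0 j)
  have hS1 : ∀ n, Summable fun j => r ^ j * ‖b (n + 1 + j)‖ := by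
    intro n
    have := summable_tail_term hw1 hb hα n
    have h2 := this.norm
    refine h2.congr (fun j => ?_)
    rw [norm_mul, norm_pow]
  -- pointwise bound
  have key : ∀ n, v n * ‖tailc α b n‖ ^ 2
      ≤ (1 - r)⁻¹ * ∑' j, r ^ j * (w (n + 1 + j) * ‖b (n + 1 + j)‖ ^ 2) := by
    intro n
    have hnorm : ‖tailc α b n‖ ≤ ∑' j, r ^ j * ‖b (n + 1 + j)‖ := by
      refine (norm_tsum_le_tsum_norm ((hS1 n).congr (fun j => by rw [norm_mul, norm_pow]))).trans ?_
      exact le_of_eq (tsum_congr fun j => by rw [norm_mul, norm_pow])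
    have hsq : ‖tailc α b n‖ ^ 2 ≤ (∑' j, r ^ j * ‖b (n + 1 + j)‖) ^ 2 :=
      pow_le_pow_left₀ (norm_nonneg _) hnorm 2
    have hcs := tsum_cs hr0 hr1 (c := fun j => ‖b (n + 1 + j)‖) (fun j => norm_nonneg _)
      (hS1 n) (hS2' n)
    have h4 : v n * ‖tailc α b n‖ ^ 2 ≤ v n * ((1 - r)⁻¹ * ∑' j, r ^ j * ‖b (n + 1 + j)‖ ^ 2) :=
      mul_le_mul_of_nonneg_left (hsq.trans hcs) (hv0 n)
    refine h4.trans ?_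
    rw [← mul_assoc, mul_comm (v n) (1 - r)⁻¹, mul_assoc, ← tsum_mul_left (a := v n)]
    refine mul_le_mul_of_nonneg_left (Summable.tsum_le_tsum (fun j => ?_) ?_ (hS2 n))
      (by rw [inv_nonneg]; linarith)
    · calc v n * (r ^ j * ‖b (n + 1 + j)‖ ^ 2) = r ^ j * (v n * ‖b (n + 1 + j)‖ ^ 2) := by ring
        _ ≤ r ^ j * (w (n + 1 + j) * ‖b (n + 1 + j)‖ ^ 2) := by
            refine mul_le_mul_of_nonneg_left ?_ (pow_nonneg hr0 j)
            exact mul_le_mul_of_nonneg_right (hvw n j) (sq_nonneg _)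
    · exact ((hS2' n).mul_left (v n)).congr (fun j => by ring)
  -- partial sums bounded
  refine summable_of_sum_range_le (c := (1 - r)⁻¹ * ((1 - r)⁻¹ * T))
    (fun n => mul_nonneg (hv0 n) (sq_nonneg _)) (fun N => ?_)
  have h5 : ∑ n ∈ range N, v n * ‖tailc α b n‖ ^ 2
      ≤ ∑ n ∈ range N, (1 - r)⁻¹ * ∑' j, r ^ j * (w (n + 1 + j) * ‖b (n + 1 + j)‖ ^ 2) :=
    Finset.sum_le_sum (fun n _ => key n)
  refine h5.trans ?_
  rw [← Finset.mul_sum]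
  refine mul_le_mul_of_nonneg_left ?_ (by rw [inv_nonneg]; linarith)
  have hswap : ∑ n ∈ range N, ∑' j, r ^ j * (w (n + 1 + j) * ‖b (n + 1 + j)‖ ^ 2)
      = ∑' j : ℕ, ∑ n ∈ range N, r ^ j * (w (n + 1 + j) * ‖b (n + 1 + j)‖ ^ 2) :=
    (Summable.tsum_finsetSum (fun n _ => hS2 n)).symm
  rw [hswap]
  have hinner : ∀ j : ℕ, ∑ n ∈ range N, r ^ j * (w (n + 1 + j) * ‖b (n + 1 + j)‖ ^ 2)
      ≤ r ^ j * T := by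
    intro j
    rw [← Finset.mul_sum]
    refine mul_le_mul_of_nonneg_left ?_ (pow_nonneg hr0 j)
    have himg : ∑ n ∈ range N, w (n + 1 + j) * ‖b (n + 1 + j)‖ ^ 2
        = ∑ m ∈ (range N).image (fun n => n + 1 + j), w m * ‖b m‖ ^ 2 := by
      rw [Finset.sum_image (fun a _ b _ h => by omega)]
    rw [himg]
    exact Summable.sum_le_tsum _ (fun m _ => hterm0 m) hb
  have hsum1 : Summable fun j : ℕ => ∑ n ∈ range N, r ^ j * (w (n + 1 + j) * ‖b (n + 1 + j)‖ ^ 2) := by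
    refine Summable.of_nonneg_of_le (fun j => Finset.sum_nonneg fun n _ =>
      mul_nonneg (pow_nonneg hr0 j) (hterm0 _)) hinner ?_
    exact ((summable_geometric_of_lt_one hr0 hr1).mul_right T).congr (fun j => rfl)
  calc ∑' j : ℕ, ∑ n ∈ range N, r ^ j * (w (n + 1 + j) * ‖b (n + 1 + j)‖ ^ 2)
      ≤ ∑' j : ℕ, r ^ j * T := Summable.tsum_le_tsum hinner hsum1
        (((summable_geometric_of_lt_one hr0 hr1).mul_right T).congr (fun j => rfl))
    _ = (∑' j : ℕ, r ^ j) * T := tsum_mul_right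
    _ = (1 - r)⁻¹ * T := by rw [tsum_geometric_of_lt_one hr0 hr1]

lemma tailc_spec {w : ℕ → ℝ} (hw1 : ∀ n, 1 ≤ w n) {b : ℕ → ℂ}
    (hb : Summable fun n => w n * ‖b n‖ ^ 2) {α : ℂ} (hα : ‖α‖ < 1)
    (hb0 : HasSum (fun n => b n * α ^ n) 0) :
    b = blc α (tailc α b) := by
  have hsum : ∀ n : ℕ, Summable fun j => α ^ j * b (n + 1 + j) :=
    summable_tail_term hw1 hb hα
  have hrec : ∀ n : ℕ, tailc α b n = b (n + 1) + α * tailc α b (n + 1) := by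
    intro n
    unfold tailc
    rw [Summable.tsum_eq_zero_add (hsum n)]
    congr 1
    · simp
    · rw [← tsum_mul_left]
      exact tsum_congr fun j => by
        rw [← mul_assoc, ← pow_succ']
        congr 2
        omega
  funext n
  rcases n with _ | n
  · have h2 := hb0.tsum_eq
    rw [Summable.tsum_eq_zero_add hb0.summable] at h2
    have h3 : α * tailc α b 0 = ∑' j : ℕ, b (j + 1) * α ^ (j + 1) := by
      unfold tailc
      rw [← tsum_mul_left]
      refine tsum_congr fun j => ?_
      have hj : 0 + 1 + j = j + 1 := by omega
      rw [hj, pow_succ]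
      ring
    show b 0 = blc α (tailc α b) 0
    unfold blc
    simp only [prevc_zero]
    linear_combination h2 + h3
  · rw [blc, prevc_succ, hrec n]
    ring

lemma denom_ne {α z : ℂ} (hα : ‖α‖ < 1) (hz : ‖z‖ < 1) :
    (1 : ℂ) - (starRingEnd ℂ) α * z ≠ 0 := by
  intro h
  have h1 : (1 : ℂ) = (starRingEnd ℂ) α * z := by linear_combination h
  have h2 : (1 : ℝ) = ‖(starRingEnd ℂ) α * z‖ := by rw [← h1]; simp
  rw [norm_mul, RCLike.norm_conj] at h2
  nlinarith [norm_nonneg α, norm_nonneg z]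

lemma step_down {w : ℕ → ℝ} (hw1 : ∀ n, 1 ≤ w n) (hwm : Monotone w)
    {α : ℂ} (hα : ‖α‖ < 1) {b : ℕ → ℂ} {W : ℂ → ℂ} {S : Set ℂ}
    (hb : Summable fun n => w n * ‖b n‖ ^ 2)
    (hHS : ∀ z : ℂ, ‖z‖ < 1 → z ∉ S →
      HasSum (fun n => b n * z ^ n) ((z - α) / (1 - (starRingEnd ℂ) α * z) * W z))
    (hb0 : HasSum (fun n => b n * α ^ n) 0) :
    (Summable fun n => w n * ‖tailc α b n‖ ^ 2) ∧
    (Summable fun n => w (n + 1) * ‖tailc α b n‖ ^ 2) ∧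
    (Summable fun n => w n * ‖cmc α (tailc α b) n‖ ^ 2) ∧
    (∑' n, w n * ‖b n‖ ^ 2 = ∑' n, w n * ‖cmc α (tailc α b) n‖ ^ 2
      + (1 - ‖α‖ ^ 2) * (∑' n, w (n + 1) * ‖tailc α b n‖ ^ 2
          - ∑' n, w n * ‖tailc α b n‖ ^ 2)) ∧
    (∀ z : ℂ, ‖z‖ < 1 → z ∉ S ∪ {α} →
      HasSum (fun n => cmc α (tailc α b) n * z ^ n) (W z)) ∧
    (∀ z : ℂ, ‖z‖ < 1 → z ∉ S ∪ {α} →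
      HasSum (fun n => tailc α b n * z ^ n) (W z / (1 - (starRingEnd ℂ) α * z))) := by
  set k := tailc α b with hk
  have hw0 : ∀ n, 0 ≤ w n := fun n => le_trans zero_le_one (hw1 n)
  have S1 : Summable fun n => w n * ‖k n‖ ^ 2 :=
    tail_summable_gen hw1 hw0 (fun n j => hwm (by omega)) hb hα
  have S2 : Summable fun n => w (n + 1) * ‖k n‖ ^ 2 :=
    tail_summable_gen hw1 (fun n => hw0 (n + 1)) (fun n j => hwm (by omega)) hb hα
  have hbl : b = blc α k := tailc_spec hw1 hb hα hb0
  obtain ⟨Sbl, Scm, hid⟩ := core_identity hw0 α S1 S2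
  have hkHS : ∀ z : ℂ, ‖z‖ < 1 → z ∉ S ∪ {α} →
      HasSum (fun n => k n * z ^ n) (W z / (1 - (starRingEnd ℂ) α * z)) := by
    intro z hz hzS
    have hzS' : z ∉ S := fun hc => hzS (Set.mem_union_left _ hc)
    have hzα : z ≠ α := fun hc => hzS (Set.mem_union_right _ (by simp [hc]))
    have hCk := norm_le_sqrt_tsum hw1 S1
    have hk_sum : HasSum (fun n => k n * z ^ n) (phic k z) :=
      hasSum_phic (tempC_of_bdd hCk) hz
    have hbl_z : HasSum (fun n => blc α k n * z ^ n) ((z - α) * phic k z) :=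
      hasSum_blc hk_sum
    have hb_z : HasSum (fun n => b n * z ^ n) ((z - α) * phic k z) := by
      rw [hbl]; exact hbl_z
    have huniq : (z - α) * phic k z = (z - α) / (1 - (starRingEnd ℂ) α * z) * W z :=
      hb_z.unique (hHS z hz hzS')
    have hphis : phic k z = W z / (1 - (starRingEnd ℂ) α * z) := by
      have hzα' : z - α ≠ 0 := sub_ne_zero.mpr hzα
      have hd := denom_ne hα hz
      exact mul_left_cancel₀ hzα' (by rw [huniq]; ring)
    rwa [hphis] at hk_sum
  refine ⟨S1, S2, Scm, ?_, ?_, hkHS⟩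
  · have : ∑' n, w n * ‖b n‖ ^ 2 = ∑' n, w n * ‖blc α k n‖ ^ 2 := by rw [← hbl]
    rw [this, hid]
  · intro z hz hzS
    have hd := denom_ne hα hz
    have := hasSum_cmc (α := α) (hkHS z hz hzS)
    have hval : (1 - (starRingEnd ℂ) α * z) * (W z / (1 - (starRingEnd ℂ) α * z)) = W z := by
      field_simp
    rwa [hval] at this


open Filter Topology in
lemma tendsto_within_of_eqOn {H H' : ℂ → ℂ} {S : Set ℂ} {pt : ℂ}
    (hpt : ‖pt‖ < 1) (hcont : ContinuousAt H' pt)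
    (heq : ∀ z : ℂ, ‖z‖ < 1 → H z = H' z) :
    Filter.Tendsto H (𝓝[(Metric.ball (0:ℂ) 1) \ S] pt) (𝓝 (H pt)) := by
  rw [heq pt hpt]
  refine (hcont.mono_left nhdsWithin_le_nhds).congr' ?_
  filter_upwards [self_mem_nhdsWithin] with z hz
  exact (heq z (by simpa [Complex.dist_eq] using hz.1)).symm

lemma continuousAt_blaschke {a pt : ℂ} (ha : ‖a‖ < 1) (hpt : ‖pt‖ < 1) :
    ContinuousAt (fun z : ℂ => (z - a) / (1 - (starRingEnd ℂ) a * z)) pt :=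
  ContinuousAt.div (by fun_prop) (by fun_prop) (denom_ne ha hpt)

/-- One full step of the Blaschke peeling argument. -/
lemma step_full {w : ℕ → ℝ} (hw1 : ∀ n, 1 ≤ w n) (hwm : Monotone w)
    {α0 : ℂ} (hα0 : ‖α0‖ < 1) {b : ℕ → ℂ} {W0 W' : ℂ → ℂ} {S : Set ℂ}
    (hS : S.Finite) (hα0S : α0 ∈ S)
    (hb : Summable fun n => w n * ‖b n‖ ^ 2)
    (hcont : ContinuousAt W' α0) (hW'eq : ∀ z : ℂ, ‖z‖ < 1 → W0 z = W' z)
    (hHS : ∀ z : ℂ, ‖z‖ < 1 → z ∉ S →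
      HasSum (fun n => b n * z ^ n) ((z - α0) / (1 - (starRingEnd ℂ) α0 * z) * W0 z)) :
    (Summable fun n => w n * ‖tailc α0 b n‖ ^ 2) ∧
    (Summable fun n => w (n + 1) * ‖tailc α0 b n‖ ^ 2) ∧
    (Summable fun n => w n * ‖cmc α0 (tailc α0 b) n‖ ^ 2) ∧
    (∑' n, w n * ‖b n‖ ^ 2 = ∑' n, w n * ‖cmc α0 (tailc α0 b) n‖ ^ 2
      + (1 - ‖α0‖ ^ 2) * (∑' n, w (n + 1) * ‖tailc α0 b n‖ ^ 2
          - ∑' n, w n * ‖tailc α0 b n‖ ^ 2)) ∧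
    (∀ z : ℂ, ‖z‖ < 1 → z ∉ S →
      HasSum (fun n => cmc α0 (tailc α0 b) n * z ^ n) (W0 z)) ∧
    (∀ z : ℂ, ‖z‖ < 1 → z ∉ S →
      HasSum (fun n => tailc α0 b n * z ^ n) (W0 z / (1 - (starRingEnd ℂ) α0 * z))) := by
  -- the `b`-sum vanishes at `α0`
  have hTb : TempC b := tempC_of_bdd (norm_le_sqrt_tsum hw1 hb)
  have hb0 : HasSum (fun n => b n * α0 ^ n) 0 := by
    have hH' : ContinuousAt
        (fun z : ℂ => (z - α0) / (1 - (starRingEnd ℂ) α0 * z) * W' z) α0 :=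
      (continuousAt_blaschke hα0 hα0).mul hcont
    have htend := tendsto_within_of_eqOn (S := S) hα0 hH'
      (fun z hz => by rw [hW'eq z hz])
      (H := fun z => (z - α0) / (1 - (starRingEnd ℂ) α0 * z) * W0 z)
    have := ext_hasSum hTb hS hHS hα0 htend
    simpa using this
  have hstep := step_down hw1 hwm hα0 hb hHS hb0
  have hU : S ∪ {α0} = S := Set.union_eq_self_of_subset_right (by simpa using hα0S)
  rw [hU] at hstep
  exact hstep


def w1r : ℕ → ℝ := fun n => 1 + (n : ℝ) ^ 2
def wQr : ℕ → ℝ := fun n => 2 * (n : ℝ) + 1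

lemma w1r_one : ∀ n, 1 ≤ w1r n := fun n => by unfold w1r; nlinarith [sq_nonneg ((n:ℝ))]
lemma wQr_one : ∀ n, 1 ≤ wQr n := fun n => by unfold wQr; have := Nat.cast_nonneg (α := ℝ) n; linarith
lemma w1r_mono : Monotone w1r := fun a b hab => by
  unfold w1r
  have : (a : ℝ) ≤ (b : ℝ) := Nat.cast_le.mpr hab
  nlinarith [Nat.cast_nonneg (α := ℝ) a]
lemma wQr_mono : Monotone wQr := fun a b hab => by
  unfold wQr
  have : (a : ℝ) ≤ (b : ℝ) := Nat.cast_le.mpr hab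
  linarith
lemma wQr_le_w1r (n : ℕ) : wQr n ≤ 2 * w1r n := by
  unfold wQr w1r
  nlinarith [sq_nonneg ((n : ℝ) - 1)]
lemma w1r_succ_sub (n : ℕ) : w1r (n + 1) - w1r n = wQr n := by
  unfold w1r wQr
  push_cast
  ring

def VVc (a : ℕ → ℂ) (k0 : ℕ → ℂ) (base : ℕ) : ℕ → ℕ → ℂ
  | 0 => k0
  | s + 1 => cmc (a (base + s + 1)) (tailc (a (base + s + 1)) (VVc a k0 base s))

lemma chain {a : ℕ → ℂ} {m base : ℕ} {S : Set ℂ} (hS : S.Finite)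
    (hα : ∀ j, 1 ≤ j → j ≤ m → ‖a j‖ < 1)
    (hmem : ∀ j, 1 ≤ j → j ≤ m → a j ∈ S)
    {w : ℕ → ℝ} (hw1 : ∀ n, 1 ≤ w n) (hwm : Monotone w)
    {k0 : ℕ → ℂ} {Gb Gb' : ℂ → ℂ}
    (hGc : ∀ pt : ℂ, ‖pt‖ < 1 → ContinuousAt Gb' pt)
    (hGeq : ∀ z : ℂ, ‖z‖ < 1 → Gb z = Gb' z)
    (h0 : Summable fun n => w n * ‖k0 n‖ ^ 2)
    (hHS0 : ∀ z : ℂ, ‖z‖ < 1 → z ∉ S → HasSum (fun n => k0 n * z ^ n)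
      ((∏ j ∈ Icc (base + 1) m, (z - a j) / (1 - (starRingEnd ℂ) (a j) * z)) * Gb z)) :
    ∀ s, base + s ≤ m →
      (Summable fun n => w n * ‖VVc a k0 base s n‖ ^ 2) ∧
      (∀ z : ℂ, ‖z‖ < 1 → z ∉ S → HasSum (fun n => VVc a k0 base s n * z ^ n)
        ((∏ j ∈ Icc (base + s + 1) m, (z - a j) / (1 - (starRingEnd ℂ) (a j) * z)) * Gb z)) ∧
      (∑' n, w n * ‖VVc a k0 base s n‖ ^ 2
        = ∑' n, w n * ‖k0 n‖ ^ 2 - ∑ u ∈ range s, (1 - ‖a (base + u + 1)‖ ^ 2) *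
            (∑' n, w (n + 1) * ‖tailc (a (base + u + 1)) (VVc a k0 base u) n‖ ^ 2
              - ∑' n, w n * ‖tailc (a (base + u + 1)) (VVc a k0 base u) n‖ ^ 2)) ∧
      (∀ u, u < s →
        (Summable fun n => w n * ‖tailc (a (base + u + 1)) (VVc a k0 base u) n‖ ^ 2) ∧
        (Summable fun n => w (n + 1) * ‖tailc (a (base + u + 1)) (VVc a k0 base u) n‖ ^ 2) ∧
        (∀ z : ℂ, ‖z‖ < 1 → z ∉ S →
          HasSum (fun n => tailc (a (base + u + 1)) (VVc a k0 base u) n * z ^ n)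
            ((∏ j ∈ Icc (base + u + 2) m, (z - a j) / (1 - (starRingEnd ℂ) (a j) * z))
              * Gb z / (1 - (starRingEnd ℂ) (a (base + u + 1)) * z)))) := by
  intro s
  induction s with
  | zero =>
    intro _
    refine ⟨h0, ?_, by simp [VVc], fun u hu => absurd hu (Nat.not_lt_zero u)⟩
    intro z hz hzS
    simpa [VVc] using hHS0 z hz hzS
  | succ s ih =>
    intro hsm
    have hsm' : base + s ≤ m := by omega
    obtain ⟨ihA, ihB, ihC, ihE⟩ := ih hsm'
    set α0 := a (base + s + 1) with hα0def
    have hα0 : ‖α0‖ < 1 := hα _ (by omega) (by omega)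
    have hα0S : α0 ∈ S := hmem _ (by omega) (by omega)
    set W0 : ℂ → ℂ := fun z =>
      (∏ j ∈ Icc (base + s + 2) m, (z - a j) / (1 - (starRingEnd ℂ) (a j) * z)) * Gb z with hW0
    set W' : ℂ → ℂ := fun z =>
      (∏ j ∈ Icc (base + s + 2) m, (z - a j) / (1 - (starRingEnd ℂ) (a j) * z)) * Gb' z with hW'
    have hsplit : ∀ z : ℂ,
        (∏ j ∈ Icc (base + s + 1) m, (z - a j) / (1 - (starRingEnd ℂ) (a j) * z))
        = (z - α0) / (1 - (starRingEnd ℂ) α0 * z)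
          * ∏ j ∈ Icc (base + s + 2) m, (z - a j) / (1 - (starRingEnd ℂ) (a j) * z) := by
      intro z
      have hins : Icc (base + s + 1) m = insert (base + s + 1) (Icc (base + s + 2) m) := by
        ext x
        simp only [Finset.mem_Icc, Finset.mem_insert]
        omega
      rw [hins, Finset.prod_insert (by simp only [Finset.mem_Icc]; omega)]
    have hHS : ∀ z : ℂ, ‖z‖ < 1 → z ∉ S → HasSum (fun n => VVc a k0 base s n * z ^ n)
        ((z - α0) / (1 - (starRingEnd ℂ) α0 * z) * W0 z) := by
      intro z hz hzS
      have := ihB z hz hzS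
      rw [hsplit z, mul_assoc] at this
      exact this
    have hcont : ContinuousAt W' α0 := by
      refine ContinuousAt.mul ?_ (hGc α0 hα0)
      exact tendsto_finset_prod _ (fun j hj => by
        have hj' := Finset.mem_Icc.mp hj
        exact continuousAt_blaschke (hα j (by omega) (by omega)) hα0)
    have hW'eq : ∀ z : ℂ, ‖z‖ < 1 → W0 z = W' z := fun z hz => by
      rw [hW0, hW']
      simp only []
      rw [hGeq z hz]
    obtain ⟨O1, O2, O3, O4, O5, O6⟩ :=
      step_full hw1 hwm hα0 hS hα0S ihA hcont hW'eq hHS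
    refine ⟨O3, ?_, ?_, ?_⟩
    · intro z hz hzS
      exact O5 z hz hzS
    · rw [Finset.sum_range_succ]
      have hVs1 : (VVc a k0 base (s + 1)) = cmc α0 (tailc α0 (VVc a k0 base s)) := rfl
      rw [hVs1]
      simp only [hα0def] at O4
      linarith [O4, ihC]
    · intro u hu
      rcases Nat.lt_succ_iff_lt_or_eq.mp hu with hu' | rfl
      · exact ihE u hu'
      · refine ⟨O1, O2, fun z hz hzS => ?_⟩
        have := O6 z hz hzS
        rw [hW0] at this
        rw [mul_div_assoc] at this ⊢
        exact this
end BD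
end BD

open BD

/-- Hardy–Sobolev `W^{1,2}` norm squared in terms of Taylor coefficients. -/
noncomputable def wnorm2 (a : ℕ → ℂ) : ℝ := ∑' n : ℕ, (1 + (n : ℝ) ^ 2) * ‖a n‖ ^ 2

/-- Dirichlet norm squared. -/
noncomputable def dnorm2 (a : ℕ → ℂ) : ℝ := ∑' n : ℕ, ((n : ℝ) + 1) * ‖a n‖ ^ 2

/-- `H²` norm squared. -/
noncomputable def h2norm2 (a : ℕ → ℂ) : ℝ := ∑' n, ‖a n‖ ^ 2

def IsCoeffs (a : ℕ → ℂ) (F : ℂ → ℂ) : Prop :=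
  ∀ z : ℂ, ‖z‖ < 1 → HasSum (fun n => a n * z ^ n) (F z)

/-- Corollary 2: for `F ∈ W^{1,2}` with finitely many roots `α_1,…,α_m` in `𝔻` and
Blaschke decomposition `F = B·G`,
`‖G‖²_{W^{1,2}} ≤ ‖F‖²_{W^{1,2}} − Σ_j (1-|α_j|²)[2‖G/(1-ᾱ_j·)‖²_𝒟 − ‖G/(1-ᾱ_j·)‖²_{H²}]`. -/
theorem stmt6 (m : ℕ) (α : ℕ → ℂ) (hα : ∀ j ∈ Icc 1 m, ‖α j‖ < 1)
    (F G : ℂ → ℂ) (f g : ℕ → ℂ) (K : ℕ → ℕ → ℂ)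
    (hf : IsCoeffs f F) (hg : IsCoeffs g G)
    (hG0 : ∀ z : ℂ, ‖z‖ < 1 → G z ≠ 0)
    (hfac : ∀ z : ℂ, ‖z‖ < 1 →
      F z = (∏ j ∈ Icc 1 m, (z - α j) / (1 - (starRingEnd ℂ) (α j) * z)) * G z)
    -- `K j` are the Taylor coefficients of `G(z)/(1-ᾱ_j z)`
    (hK : ∀ j ∈ Icc 1 m, ∀ z : ℂ, ‖z‖ < 1 →
      HasSum (fun n => K j n * z ^ n) (G z / (1 - (starRingEnd ℂ) (α j) * z)))
    -- `F ∈ W^{1,2}`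
    (hW : Summable fun n : ℕ => (1 + (n : ℝ) ^ 2) * ‖f n‖ ^ 2) :
    (∀ j ∈ Icc 1 m, Summable fun n : ℕ => ((n : ℝ) + 1) * ‖K j n‖ ^ 2) ∧
      wnorm2 g ≤ wnorm2 f -
        ∑ j ∈ Icc 1 m,
          (1 - ‖α j‖ ^ 2) * (2 * dnorm2 (K j) - h2norm2 (K j)) := by
  classical
  set S : Set ℂ := ↑((Icc 1 m).image α) with hSdef
  have hSfin : S.Finite := ((Icc 1 m).image α).finite_toSet
  have hαmem : ∀ j, 1 ≤ j → j ≤ m → α j ∈ S := by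
    intro j h1 h2
    rw [hSdef]
    simp only [Finset.coe_image, Set.mem_image, Finset.mem_coe, Finset.mem_Icc]
    exact ⟨j, ⟨h1, h2⟩, rfl⟩
  have hα' : ∀ j, 1 ≤ j → j ≤ m → ‖α j‖ < 1 := fun j h1 h2 => hα j (mem_Icc.mpr ⟨h1, h2⟩)
  have hTg : TempC g := tempC_of_hasSum (S := ∅) Set.finite_empty (fun z hz _ => hg z hz)
  have hGc : ∀ pt : ℂ, ‖pt‖ < 1 → ContinuousAt (phic g) pt :=
    fun pt hpt => continuousAt_phic hTg hpt
  have hGeq : ∀ z : ℂ, ‖z‖ < 1 → G z = phic g z := fun z hz => ((hg z hz).tsum_eq).symm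
  have hWs : Summable fun n => w1r n * ‖f n‖ ^ 2 := hW
  -- the main chain
  have hHS0 : ∀ z : ℂ, ‖z‖ < 1 → z ∉ S → HasSum (fun n => f n * z ^ n)
      ((∏ j ∈ Icc (0 + 1) m, (z - α j) / (1 - (starRingEnd ℂ) (α j) * z)) * G z) := by
    intro z hz _
    have := hf z hz
    rw [hfac z hz] at this
    simpa using this
  have hmain := chain hSfin hα' hαmem w1r_one w1r_mono hGc hGeq hWs hHS0 m (by omega)
  obtain ⟨hA, hB, hC, hE⟩ := hmain
  simp only [Nat.zero_add] at hB hC hE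
  -- identify `g` with the bottom of the main chain
  have hgVV : VVc α f 0 m = g := by
    refine coeff_unique hSfin (H := G) (fun z hz hzS => ?_) (fun z hz _ => hg z hz)
    have := hB z hz hzS
    rw [show Icc (m + 1) m = ∅ from Finset.Icc_eq_empty (by omega)] at this
    simpa using this
  have hwg : wnorm2 g = ∑' n, w1r n * ‖VVc α f 0 m n‖ ^ 2 := by rw [hgVV]; rfl
  -- notation for the intermediate quotient coefficients
  let KK : ℕ → ℕ → ℂ := fun u => tailc (α (u + 1)) (VVc α f 0 u)
  have hKK : ∀ u, KK u = tailc (α (u + 1)) (VVc α f 0 u) := fun u => rfl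
  -- per-zero analysis
  have hper : ∀ u, u < m →
      (Summable fun n : ℕ => wQr n * ‖K (u + 1) n‖ ^ 2) ∧
      (∑' n, wQr n * ‖K (u + 1) n‖ ^ 2 ≤ ∑' n, wQr n * ‖KK u n‖ ^ 2) := by
    intro u hum
    obtain ⟨hS1u, hS2u, hHSu⟩ := hE u hum
    -- base data for the Q-chain
    have h0Q : Summable fun n => wQr n * ‖KK u n‖ ^ 2 := by
      rw [hKK]
      refine Summable.of_nonneg_of_le (fun n => mul_nonneg (by linarith [wQr_one n]) (sq_nonneg _))
        (fun n => ?_) (hS1u.mul_left 2)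
      have := wQr_le_w1r n
      nlinarith [sq_nonneg ‖tailc (α (u + 1)) (VVc α f 0 u) n‖, w1r_one n]
    have hHS0Q : ∀ z : ℂ, ‖z‖ < 1 → z ∉ S → HasSum (fun n => KK u n * z ^ n)
        ((∏ j ∈ Icc ((u + 1) + 1) m, (z - α j) / (1 - (starRingEnd ℂ) (α j) * z)) *
          (G z / (1 - (starRingEnd ℂ) (α (u + 1)) * z))) := by
      intro z hz hzS
      have := hHSu z hz hzS
      rw [mul_div_assoc] at this
      rw [hKK]
      rw [show u + 2 = (u + 1) + 1 from by omega] at this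
      exact this
    have hQchain := chain hSfin hα' hαmem wQr_one wQr_mono
      (Gb := fun z => G z / (1 - (starRingEnd ℂ) (α (u + 1)) * z))
      (Gb' := fun z => phic g z / (1 - (starRingEnd ℂ) (α (u + 1)) * z))
      (fun pt hpt => ContinuousAt.div (hGc pt hpt) (by fun_prop)
        (denom_ne (hα' (u + 1) (by omega) (by omega)) hpt))
      (fun z hz => by rw [hGeq z hz])
      h0Q hHS0Q (m - (u + 1)) (by omega)
    obtain ⟨hA', hB', hC', hE'⟩ := hQchain
    -- identify `K (u+1)` with the bottom of the Q-chain
    have hKid : VVc α (KK u) (u + 1) (m - (u + 1)) = K (u + 1) := by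
      refine coeff_unique hSfin
        (H := fun z => G z / (1 - (starRingEnd ℂ) (α (u + 1)) * z))
        (fun z hz hzS => ?_) (fun z hz _ => hK (u + 1) (mem_Icc.mpr ⟨by omega, by omega⟩) z hz)
      have := hB' z hz hzS
      rw [show Icc ((u + 1) + (m - (u + 1)) + 1) m = ∅ from Finset.Icc_eq_empty (by omega)]
        at this
      simpa using this
    constructor
    · rw [← hKid]; exact hA'
    · rw [← hKid, hC']
      have hnn : ∀ v ∈ range (m - (u + 1)), 0 ≤ (1 - ‖α ((u + 1) + v + 1)‖ ^ 2) *
          (∑' n, wQr (n + 1) * ‖tailc (α ((u + 1) + v + 1)) (VVc α (KK u) (u + 1) v) n‖ ^ 2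
            - ∑' n, wQr n * ‖tailc (α ((u + 1) + v + 1)) (VVc α (KK u) (u + 1) v) n‖ ^ 2) := by
        intro v hv
        have hvm := Finset.mem_range.mp hv
        obtain ⟨hSv1, hSv2, _⟩ := hE' v hvm
        have hco : (0:ℝ) ≤ 1 - ‖α ((u + 1) + v + 1)‖ ^ 2 := by
          have := hα' ((u + 1) + v + 1) (by omega) (by omega)
          nlinarith [norm_nonneg (α ((u + 1) + v + 1))]
        refine mul_nonneg hco (sub_nonneg.mpr (Summable.tsum_le_tsum (fun n => ?_) hSv1 hSv2))
        exact mul_le_mul_of_nonneg_right (wQr_mono (by omega)) (sq_nonneg _)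
      have := Finset.sum_nonneg hnn
      linarith
  -- rewrite the main-chain brackets as `wQr`-sums
  have hbrk : ∀ u, u < m →
      (∑' n, w1r (n + 1) * ‖KK u n‖ ^ 2 - ∑' n, w1r n * ‖KK u n‖ ^ 2)
        = ∑' n, wQr n * ‖KK u n‖ ^ 2 := by
    intro u hum
    obtain ⟨hS1u, hS2u, _⟩ := hE u hum
    rw [hKK, ← Summable.tsum_sub hS2u hS1u]
    exact tsum_congr fun n => by rw [← sub_mul, w1r_succ_sub]
  -- summability part of the conclusion
  have part1 : ∀ j ∈ Icc 1 m, Summable fun n : ℕ => ((n : ℝ) + 1) * ‖K j n‖ ^ 2 := by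
    intro j hj
    have hj' := mem_Icc.mp hj
    have hu : j - 1 < m := by omega
    have hQ := (hper (j - 1) hu).1
    rw [show j - 1 + 1 = j from by omega] at hQ
    refine Summable.of_nonneg_of_le (fun n => mul_nonneg (by positivity) (sq_nonneg _))
      (fun n => ?_) hQ
    have : ((n : ℝ) + 1) ≤ wQr n := by unfold wQr; have := Nat.cast_nonneg (α := ℝ) n; linarith
    exact mul_le_mul_of_nonneg_right this (sq_nonneg _)
  refine ⟨part1, ?_⟩
  -- rewrite `2*dnorm2 - h2norm2` as the `wQr`-sum
  have hQform : ∀ j ∈ Icc 1 m,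
      2 * dnorm2 (K j) - h2norm2 (K j) = ∑' n, wQr n * ‖K j n‖ ^ 2 := by
    intro j hj
    have hj' := mem_Icc.mp hj
    have hu : j - 1 < m := by omega
    have hQ := (hper (j - 1) hu).1
    rw [show j - 1 + 1 = j from by omega] at hQ
    have Sd : Summable fun n : ℕ => ((n : ℝ) + 1) * ‖K j n‖ ^ 2 := part1 j hj
    have Sh : Summable fun n : ℕ => ‖K j n‖ ^ 2 := by
      refine Summable.of_nonneg_of_le (fun n => sq_nonneg _) (fun n => ?_) Sd
      nlinarith [sq_nonneg ‖K j n‖, Nat.cast_nonneg (α := ℝ) n]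
    unfold dnorm2 h2norm2
    rw [← tsum_mul_left, ← Summable.tsum_sub (Sd.mul_left 2) Sh]
    exact tsum_congr fun n => by unfold wQr; push_cast; ring
  -- the main identity
  have hid : wnorm2 f = wnorm2 g + ∑ u ∈ range m, (1 - ‖α (u + 1)‖ ^ 2) *
      (∑' n, wQr n * ‖KK u n‖ ^ 2) := by
    have hCm := hC
    rw [hwg]
    have hsum : ∑ u ∈ range m, (1 - ‖α (u + 1)‖ ^ 2) *
        (∑' n, w1r (n + 1) * ‖tailc (α (u + 1)) (VVc α f 0 u) n‖ ^ 2
          - ∑' n, w1r n * ‖tailc (α (u + 1)) (VVc α f 0 u) n‖ ^ 2)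
        = ∑ u ∈ range m, (1 - ‖α (u + 1)‖ ^ 2) * (∑' n, wQr n * ‖KK u n‖ ^ 2) := by
      refine Finset.sum_congr rfl (fun u hu => ?_)
      rw [← hbrk u (Finset.mem_range.mp hu), hKK]
    rw [hsum] at hCm
    have hwf : wnorm2 f = ∑' n, w1r n * ‖f n‖ ^ 2 := rfl
    rw [hwf]
    linarith [hCm]
  -- convert the `Icc` sum to a `range` sum and conclude
  have hconv : ∑ j ∈ Icc 1 m, (1 - ‖α j‖ ^ 2) * (2 * dnorm2 (K j) - h2norm2 (K j))
      = ∑ u ∈ range m, (1 - ‖α (u + 1)‖ ^ 2) * (∑' n, wQr n * ‖K (u + 1) n‖ ^ 2) := by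
    have hIccRange : ∀ (h : ℕ → ℝ) (M : ℕ), ∑ j ∈ Icc 1 M, h j = ∑ u ∈ range M, h (u + 1) := by
      intro h M
      induction M with
      | zero => rw [show Icc 1 0 = ∅ from Finset.Icc_eq_empty (by omega)]; simp
      | succ M ih => rw [Finset.sum_Icc_succ_top (by omega), ih, Finset.sum_range_succ]
    rw [hIccRange]
    refine Finset.sum_congr rfl (fun u hu => ?_)
    have humem : u + 1 ∈ Icc 1 m := mem_Icc.mpr ⟨by omega, by
      have := Finset.mem_range.mp hu; omega⟩
    rw [hQform (u + 1) humem]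
  rw [hconv, hid]
  have hterm : ∀ u ∈ range m, (1 - ‖α (u + 1)‖ ^ 2) * (∑' n, wQr n * ‖K (u + 1) n‖ ^ 2)
      ≤ (1 - ‖α (u + 1)‖ ^ 2) * (∑' n, wQr n * ‖KK u n‖ ^ 2) := by
    intro u hu
    have hum := Finset.mem_range.mp hu
    have hco : (0:ℝ) ≤ 1 - ‖α (u + 1)‖ ^ 2 := by
      have := hα' (u + 1) (by omega) (by omega)
      nlinarith [norm_nonneg (α (u + 1))]
    exact mul_le_mul_of_nonneg_left (hper u hum).2 hco
  have := Finset.sum_le_sum hterm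
  linarith
end

section
/- Let (γ_n) be monotone increasing with γ_0=0 and suppose Γ_n = γ_{n+1}−γ_n is monotone decreasing (γ_{n+2}−2γ_{n+1}+γ_n ≤ 0). If F ∈ X_γ has finitely many zeros α_1,…,α_m in D with Blaschke decomposition F = B·G, then ‖G‖_{X_γ}^2 ≤ ‖F‖_{X_γ}^2 − Σ_{j=1}^m (1−|α_j|^2)·‖F(e^{i·})/(e^{i·}−α_j)‖_{Y_γ}^2. -/
open Finset

noncomputable def xnorm2 (γ : ℕ → ℝ) (a : ℕ → ℂ) : ℝ := ∑' n, γ n * ‖a n‖ ^ 2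

noncomputable def ynorm2 (γ : ℕ → ℝ) (a : ℕ → ℂ) : ℝ :=
  ∑' n, (γ (n + 1) - γ n) * ‖a n‖ ^ 2

open Complex Filter

noncomputable section BlaschkeAux

/-- prepend a zero -/
def shiftC (k : ℕ → ℂ) : ℕ → ℂ
  | 0 => 0
  | (n+1) => k n

/-- coefficients of `(z-α)·K` -/
def Tm (α : ℂ) (k : ℕ → ℂ) : ℕ → ℂ := fun n => shiftC k n - α * k n

/-- coefficients of `K/(1-conj α·z)` -/
def Sd (α : ℂ) (c : ℕ → ℂ) : ℕ → ℂ :=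
  fun n => ∑ i ∈ range (n+1), (starRingEnd ℂ) α ^ (n-i) * c i

/-- coefficients of `K·(z-α)/(1-conj α·z)` -/
def bl (α : ℂ) (c : ℕ → ℂ) : ℕ → ℂ := Tm α (Sd α c)

/-- iterated Blaschke multiplication by factors α 1, …, α s -/
def chainB (α : ℕ → ℂ) (g : ℕ → ℂ) : ℕ → (ℕ → ℂ)
  | 0 => g
  | (t+1) => bl (α (t+1)) (chainB α g t)

lemma Sd_zero (α : ℂ) (c : ℕ → ℂ) : Sd α c 0 = c 0 := by simp [Sd]

lemma Sd_succ (α : ℂ) (c : ℕ → ℂ) (n : ℕ) :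
    Sd α c (n+1) = (starRingEnd ℂ) α * Sd α c n + c (n+1) := by
  unfold Sd
  rw [Finset.sum_range_succ]
  simp only [Nat.sub_self, pow_zero, one_mul]
  congr 1
  rw [Finset.mul_sum]
  refine Finset.sum_congr rfl fun i hi => ?_
  have hi' : i ≤ n := by simpa [Nat.lt_succ_iff] using hi
  rw [← mul_assoc, ← pow_succ']
  congr 2
  omega

/-- `c = (1 - conj α z)·(Sd α c)` at the level of coefficients. -/
lemma Sd_inv (α : ℂ) (c : ℕ → ℂ) (n : ℕ) :
    c n = Sd α c n - (starRingEnd ℂ) α * shiftC (Sd α c) n := by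
  cases n with
  | zero => simp [Sd_zero, shiftC]
  | succ n => rw [shiftC, Sd_succ]; ring

/-- the fundamental norm identity -/
lemma norm_alg (α a b : ℂ) :
    ‖a - α * b‖^2 - ‖b - (starRingEnd ℂ) α * a‖^2 = (1 - ‖α‖^2) * (‖a‖^2 - ‖b‖^2) := by
  simp only [← Complex.normSq_eq_norm_sq]
  simp only [Complex.normSq_apply, Complex.sub_re, Complex.sub_im, Complex.mul_re,
    Complex.mul_im, Complex.conj_re, Complex.conj_im]
  ring


noncomputable def bf (β z : ℂ) : ℂ := (z - β) / (1 - (starRingEnd ℂ) β * z)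

lemma exists_z (α : ℂ) {t : ℝ} (ht : 0 < t) : ∃ z : ℂ, ‖z‖ = t ∧ z ≠ α := by
  by_cases h : (t : ℂ) = α
  · refine ⟨-t, by simp [abs_of_pos ht], fun hc => ?_⟩
    have h2 : (t : ℝ) = 0 := by
      have : ((-t : ℝ) : ℂ) = (t : ℝ) := by rw [← h] at hc; exact_mod_cast hc
      have := Complex.ofReal_inj.1 this
      linarith
    linarith
  · exact ⟨t, by simp [abs_of_pos ht], h⟩

lemma abs_summable_of_punctured {c : ℕ → ℂ} {α : ℂ}
    (h : ∀ z : ℂ, ‖z‖ < 1 → z ≠ α → Summable (fun n => c n * z ^ n))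
    {ρ : ℝ} (h0 : 0 ≤ ρ) (h1 : ρ < 1) :
    Summable (fun n => ‖c n‖ * ρ ^ n) := by
  set t : ℝ := (ρ + 1) / 2 with ht
  have ht0 : 0 < t := by positivity
  have ht1 : t < 1 := by rw [ht]; linarith
  have hρt : ρ < t := by rw [ht]; linarith
  clear_value t
  obtain ⟨z, hz, hzα⟩ := exists_z α ht0
  have hs := h z (by rw [hz]; exact ht1) hzα
  have htend : Filter.Tendsto (fun n => ‖c n‖ * t ^ n) Filter.atTop (nhds 0) := by
    have := hs.tendsto_atTop_zero.norm
    simpa [norm_mul, norm_pow, hz, abs_of_pos ht0] using this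
  obtain ⟨M, hM⟩ := htend.bddAbove_range
  have hM' : ∀ n, ‖c n‖ * t ^ n ≤ M := fun n => hM (Set.mem_range_self n)
  have hgeom : Summable (fun n : ℕ => M * (ρ / t) ^ n) :=
    (summable_geometric_of_lt_one (by positivity) (by rwa [div_lt_one ht0])).mul_left M
  refine hgeom.of_nonneg_of_le (fun n => by positivity) (fun n => ?_)
  have hne : t ≠ 0 := ne_of_gt ht0
  have : ‖c n‖ * ρ ^ n = (‖c n‖ * t ^ n) * (ρ / t) ^ n := by
    rw [mul_assoc, ← mul_pow]
    congr 2
    field_simp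
  rw [this]
  exact mul_le_mul_of_nonneg_right (hM' n) (by positivity)

lemma coeff_unique {c : ℕ → ℂ} {α : ℂ}
    (h : ∀ z : ℂ, ‖z‖ < 1 → z ≠ α → HasSum (fun n => c n * z ^ n) 0) :
    ∀ n, c n = 0 := by
  have habs : ∀ ρ : ℝ, 0 ≤ ρ → ρ < 1 → Summable (fun n => ‖c n‖ * ρ ^ n) :=
    fun ρ h0 h1 => abs_summable_of_punctured (fun z hz hzα => (h z hz hzα).summable) h0 h1
  have hhalf : Summable (fun n => ‖c n‖ * (1/2 : ℝ) ^ n) := habs _ (by norm_num) (by norm_num)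
  set C : ℝ := ∑' n, ‖c n‖ * (1/2 : ℝ) ^ n with hC
  have hC0 : 0 ≤ C := tsum_nonneg (fun n => by positivity)
  intro N
  induction N using Nat.strong_induction_on with
  | _ N ih =>
  -- key estimate
  have key : ∀ z : ℂ, z ≠ α → 0 < ‖z‖ → ‖z‖ ≤ 1/2 →
      ‖c N‖ ≤ ‖z‖ * (2 ^ (N+1) * C) := by
    intro z hzα hz0 hz12
    have hz1 : ‖z‖ < 1 := lt_of_le_of_lt hz12 (by norm_num)
    have hs := h z hz1 hzα
    have hsum := hs.summable
    have hsplit := Summable.sum_add_tsum_nat_add (f := fun n => c n * z ^ n) (N+1) hsum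
    rw [hs.tsum_eq] at hsplit
    have hfin : ∑ i ∈ range (N+1), c i * z ^ i = c N * z ^ N := by
      rw [Finset.sum_eq_single_of_mem N (by simp)]
      intro i hi hiN
      have : i < N := by simp at hi; omega
      rw [ih i this]; ring
    have hmain : c N * z ^ N = -∑' i, c (N+1+i) * z ^ (N+1+i) := by
      rw [hfin] at hsplit
      have h4 : (∑' i, c (i + (N+1)) * z ^ (i + (N+1))) = ∑' i, c (N+1+i) * z ^ (N+1+i) :=
        tsum_congr (fun i => by rw [add_comm])
      rw [h4] at hsplit
      have h5 : c N * z ^ N + ∑' i, c (N+1+i) * z ^ (N+1+i) = 0 := by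
        rw [hsplit]
      exact eq_neg_of_add_eq_zero_left h5
    have hsumtail : Summable (fun i => ‖c (N+1+i)‖ * ‖z‖ ^ (N+1+i)) := by
      have := (summable_nat_add_iff (f := fun n => ‖c n‖ * ‖z‖ ^ n) (N+1)).2
        (habs ‖z‖ (le_of_lt hz0) hz1)
      simpa [add_comm] using this
    have hhalftail : Summable (fun i => ‖c (N+1+i)‖ * (1/2:ℝ) ^ (N+1+i)) := by
      have := (summable_nat_add_iff (f := fun n => ‖c n‖ * (1/2:ℝ) ^ n) (N+1)).2 hhalf
      simpa [add_comm] using this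
    have hnorm1 : ‖c N‖ * ‖z‖ ^ N ≤ ∑' i, ‖c (N+1+i)‖ * ‖z‖ ^ (N+1+i) := by
      have h1 : ‖c N‖ * ‖z‖ ^ N = ‖c N * z ^ N‖ := by rw [norm_mul, norm_pow]
      rw [h1, hmain, norm_neg]
      have := norm_tsum_le_tsum_norm (f := fun i => c (N+1+i) * z ^ (N+1+i))
        (by simpa [norm_mul, norm_pow] using hsumtail)
      simpa [norm_mul, norm_pow] using this
    have hterm : ∀ i : ℕ, ‖c (N+1+i)‖ * ‖z‖ ^ (N+1+i) ≤
        (‖z‖ ^ (N+1) * 2 ^ (N+1)) * (‖c (N+1+i)‖ * (1/2:ℝ) ^ (N+1+i)) := by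
      intro i
      have h3 : ‖z‖ ^ i ≤ (1/2:ℝ) ^ i := pow_le_pow_left₀ (le_of_lt hz0) hz12 i
      have hcanc : (2:ℝ)^(N+1) * (1/2:ℝ)^(N+1) = 1 := by rw [← mul_pow]; norm_num
      have step : ‖c (N+1+i)‖ * (‖z‖ ^ (N+1) * ‖z‖ ^ i) ≤
          ‖c (N+1+i)‖ * (‖z‖ ^ (N+1) * (1/2:ℝ) ^ i) := by
        apply mul_le_mul_of_nonneg_left _ (norm_nonneg _)
        apply mul_le_mul_of_nonneg_left h3 (by positivity)
      calc ‖c (N+1+i)‖ * ‖z‖ ^ (N+1+i) = ‖c (N+1+i)‖ * (‖z‖ ^ (N+1) * ‖z‖ ^ i) := by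
            rw [pow_add]
        _ ≤ ‖c (N+1+i)‖ * (‖z‖ ^ (N+1) * (1/2:ℝ) ^ i) := step
        _ = (‖z‖ ^ (N+1) * 2 ^ (N+1)) * (‖c (N+1+i)‖ * ((1/2:ℝ) ^ (N+1) * (1/2:ℝ) ^ i)) := by
            linear_combination (-(‖c (N+1+i)‖ * (1/2:ℝ)^i * ‖z‖^(N+1))) * hcanc
        _ = (‖z‖ ^ (N+1) * 2 ^ (N+1)) * (‖c (N+1+i)‖ * (1/2:ℝ) ^ (N+1+i)) := by
            rw [pow_add (1/2:ℝ) (N+1) i]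
    have htail : ∑' i, ‖c (N+1+i)‖ * (1/2:ℝ) ^ (N+1+i) ≤ C := by
      have hsp := Summable.sum_add_tsum_nat_add (f := fun n => ‖c n‖ * (1/2:ℝ) ^ n) (N+1) hhalf
      have hpos : 0 ≤ ∑ i ∈ range (N+1), ‖c i‖ * (1/2:ℝ) ^ i :=
        Finset.sum_nonneg (fun i _ => by positivity)
      have : ∑' i, ‖c (i + (N+1))‖ * (1/2:ℝ) ^ (i + (N+1)) ≤ C := by
        rw [hC]; linarith [hsp]
      simpa [add_comm] using this
    have hnorm2 : ‖c N‖ * ‖z‖ ^ N ≤ (‖z‖ ^ (N+1) * 2 ^ (N+1)) * C := by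
      calc ‖c N‖ * ‖z‖ ^ N ≤ ∑' i, ‖c (N+1+i)‖ * ‖z‖ ^ (N+1+i) := hnorm1
        _ ≤ ∑' i, (‖z‖ ^ (N+1) * 2 ^ (N+1)) * (‖c (N+1+i)‖ * (1/2:ℝ) ^ (N+1+i)) :=
            Summable.tsum_le_tsum hterm hsumtail (hhalftail.mul_left _)
        _ = (‖z‖ ^ (N+1) * 2 ^ (N+1)) * ∑' i, ‖c (N+1+i)‖ * (1/2:ℝ) ^ (N+1+i) := tsum_mul_left
        _ ≤ (‖z‖ ^ (N+1) * 2 ^ (N+1)) * C := by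
            apply mul_le_mul_of_nonneg_left htail (by positivity)
    have hzN : (0:ℝ) < ‖z‖ ^ N := pow_pos hz0 N
    have : ‖c N‖ * ‖z‖ ^ N ≤ (‖z‖ * (2 ^ (N+1) * C)) * ‖z‖ ^ N := by
      calc ‖c N‖ * ‖z‖ ^ N ≤ (‖z‖ ^ (N+1) * 2 ^ (N+1)) * C := hnorm2
        _ = (‖z‖ * (2 ^ (N+1) * C)) * ‖z‖ ^ N := by ring
    exact le_of_mul_le_mul_right this hzN
  -- now let ‖z‖ → 0
  have hj : ∀ j : ℕ, ‖c N‖ ≤ (1/((j:ℝ)+2)) * (2 ^ (N+1) * C) := by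
    intro j
    have ht0 : (0:ℝ) < 1/((j:ℝ)+2) := by positivity
    obtain ⟨z, hz, hzα⟩ := exists_z α ht0
    have h12 : ‖z‖ ≤ 1/2 := by
      rw [hz]
      rw [div_le_div_iff₀ (by positivity) (by norm_num)]
      have hj0 : (0:ℝ) ≤ (j:ℝ) := by positivity
      have : (2:ℝ) ≤ (j:ℝ) + 2 := by linarith
      linarith
    have := key z hzα (by rw [hz]; exact ht0) h12
    rwa [hz] at this
  have htend : Filter.Tendsto (fun j : ℕ => (1/((j:ℝ)+2)) * (2 ^ (N+1) * C))
      Filter.atTop (nhds 0) := by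
    have h1 : Filter.Tendsto (fun j : ℕ => ((j:ℝ)+2)) Filter.atTop Filter.atTop :=
      Filter.tendsto_atTop_add_const_right _ 2 tendsto_natCast_atTop_atTop
    have h2 : Filter.Tendsto (fun j : ℕ => 1/((j:ℝ)+2)) Filter.atTop (nhds 0) := by
      simpa [one_div, Function.comp_def] using tendsto_inv_atTop_zero.comp h1
    simpa using h2.mul_const (2 ^ (N+1) * C)
  have : ‖c N‖ ≤ 0 := ge_of_tendsto' htend hj
  exact norm_le_zero_iff.1 this

lemma hasSum_Tm {k : ℕ → ℂ} {z S : ℂ} (α : ℂ) (h : HasSum (fun n => k n * z ^ n) S) :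
    HasSum (fun n => Tm α k n * z ^ n) ((z - α) * S) := by
  have h2 : HasSum (fun n => shiftC k (n+1) * z ^ (n+1)) (z * S) := by
    have h1 := h.mul_left z
    have he : (fun n => shiftC k (n+1) * z ^ (n+1)) = (fun n => z * (k n * z ^ n)) := by
      funext n; simp [shiftC]; ring
    rw [he]; exact h1
  have h3 := (hasSum_nat_add_iff (f := fun n => shiftC k n * z ^ n) 1).1 h2
  have h3' : HasSum (fun n => shiftC k n * z ^ n) (z * S) := by
    simpa [shiftC] using h3
  have h4 := h.mul_left α
  have h5 := h3'.sub h4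
  have he2 : (fun n => Tm α k n * z ^ n) =
      (fun n => shiftC k n * z ^ n - α * (k n * z ^ n)) := by
    funext n; simp [Tm]; ring
  rw [he2]
  have : (z - α) * S = z * S - α * S := by ring
  rw [this]
  exact h5

lemma onenz {α z : ℂ} (hα : ‖α‖ < 1) (hz : ‖z‖ < 1) : 1 - (starRingEnd ℂ) α * z ≠ 0 := by
  intro hc
  have h1 : (starRingEnd ℂ) α * z = 1 := by linear_combination -hc
  have := congrArg norm h1
  rw [norm_mul, norm_one] at this
  have hα' : ‖(starRingEnd ℂ) α‖ = ‖α‖ := by simp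
  rw [hα'] at this
  nlinarith [norm_nonneg α, norm_nonneg z]

/-- HasSum for division by `(1 - conj α · z)` -/
lemma hasSum_Sd {c : ℕ → ℂ} {z S : ℂ} (α : ℂ) (hα : ‖α‖ < 1) (hz : ‖z‖ < 1)
    (hnorm : Summable (fun n => ‖c n‖ * ‖z‖ ^ n))
    (h : HasSum (fun n => c n * z ^ n) S) :
    HasSum (fun n => Sd α c n * z ^ n) (S * (1 - (starRingEnd ℂ) α * z)⁻¹) := by
  set w := (starRingEnd ℂ) α * z with hw
  have hw1 : ‖w‖ < 1 := by
    rw [hw, norm_mul]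
    calc ‖(starRingEnd ℂ) α‖ * ‖z‖ = ‖α‖ * ‖z‖ := by simp
      _ ≤ 1 * ‖z‖ := by
          apply mul_le_mul_of_nonneg_right (le_of_lt hα) (norm_nonneg z)
      _ < 1 := by simpa using hz
  have hf : Summable (fun n => ‖c n * z ^ n‖) := by
    simpa [norm_mul, norm_pow] using hnorm
  have hg : Summable (fun n => ‖w ^ n‖) := by
    simpa [norm_pow] using summable_geometric_of_lt_one (norm_nonneg w)
      (by simpa [norm_pow] using hw1)
  have hkey : ∀ n : ℕ, ∑ i ∈ range (n+1), (c i * z ^ i) * w ^ (n - i) =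
      Sd α c n * z ^ n := by
    intro n
    rw [Sd, Finset.sum_mul]
    refine Finset.sum_congr rfl fun i hi => ?_
    have hi' : i ≤ n := by simpa [Nat.lt_succ_iff] using hi
    rw [hw, mul_pow]
    have hzp : z ^ i * z ^ (n - i) = z ^ n := by
      rw [← pow_add]; congr 1; omega
    calc c i * z ^ i * ((starRingEnd ℂ) α ^ (n-i) * z ^ (n-i))
        = (starRingEnd ℂ) α ^ (n-i) * c i * (z ^ i * z ^ (n-i)) := by ring
      _ = (starRingEnd ℂ) α ^ (n-i) * c i * z ^ n := by rw [hzp]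
  have hsummable : Summable (fun n => Sd α c n * z ^ n) := by
    have := (summable_norm_sum_mul_range_of_summable_norm hf hg).of_norm
    refine this.congr (fun n => ?_)
    exact hkey n
  have htsum : ∑' n, Sd α c n * z ^ n = S * (1 - w)⁻¹ := by
    have hprod := tsum_mul_tsum_eq_tsum_sum_range_of_summable_norm hf hg
    have h1 : ∑' n, c n * z ^ n = S := h.tsum_eq
    have h2 : ∑' n, w ^ n = (1 - w)⁻¹ := tsum_geometric_of_norm_lt_one hw1
    rw [h1, h2] at hprod
    rw [hprod]
    exact tsum_congr (fun n => (hkey n).symm)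
  have := hsummable.hasSum
  rwa [htsum] at this

lemma summable_shiftC_norm {k : ℕ → ℂ} {ρ : ℝ}
    (h : Summable (fun n => ‖k n‖ * ρ ^ n)) :
    Summable (fun n => ‖shiftC k n‖ * ρ ^ n) := by
  apply (summable_nat_add_iff (f := fun n => ‖shiftC k n‖ * ρ ^ n) 1).1
  have := h.mul_left ρ
  refine this.congr (fun n => ?_)
  show ρ * (‖k n‖ * ρ ^ n) = ‖shiftC k (n+1)‖ * ρ ^ (n+1)
  simp [shiftC]; ring

lemma summable_Tm_norm (α : ℂ) {k : ℕ → ℂ} {ρ : ℝ} (h0 : 0 ≤ ρ)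
    (h : Summable (fun n => ‖k n‖ * ρ ^ n)) :
    Summable (fun n => ‖Tm α k n‖ * ρ ^ n) := by
  have hs := summable_shiftC_norm h
  refine ((hs.add (h.mul_left ‖α‖)).of_nonneg_of_le (fun n => by positivity) (fun n => ?_))
  have h1 : ‖Tm α k n‖ ≤ ‖shiftC k n‖ + ‖α‖ * ‖k n‖ := by
    calc ‖Tm α k n‖ ≤ ‖shiftC k n‖ + ‖α * k n‖ := norm_sub_le _ _
      _ = ‖shiftC k n‖ + ‖α‖ * ‖k n‖ := by rw [norm_mul]
  calc ‖Tm α k n‖ * ρ ^ n ≤ (‖shiftC k n‖ + ‖α‖ * ‖k n‖) * ρ ^ n :=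
        mul_le_mul_of_nonneg_right h1 (by positivity)
    _ = ‖shiftC k n‖ * ρ ^ n + ‖α‖ * (‖k n‖ * ρ ^ n) := by ring

lemma summable_Sd_norm (α : ℂ) {c : ℕ → ℂ} {ρ : ℝ} (hα : ‖α‖ < 1)
    (h0 : 0 ≤ ρ) (h1 : ρ < 1)
    (h : Summable (fun n => ‖c n‖ * ρ ^ n)) :
    Summable (fun n => ‖Sd α c n‖ * ρ ^ n) := by
  set f : ℕ → ℝ := fun i => ‖c i‖ * ρ ^ i with hf
  set g : ℕ → ℝ := fun j => (‖α‖ * ρ) ^ j with hg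
  have hfn : Summable (fun i => ‖f i‖) := by
    refine h.congr (fun i => ?_)
    rw [Real.norm_of_nonneg (by positivity)]
  have hαρ : ‖α‖ * ρ < 1 := by nlinarith [norm_nonneg α]
  have hgn : Summable (fun j => ‖g j‖) := by
    have := summable_geometric_of_lt_one (by positivity : (0:ℝ) ≤ ‖α‖ * ρ) hαρ
    refine this.congr (fun j => ?_)
    rw [Real.norm_of_nonneg (by positivity)]
  have hconv := (summable_norm_sum_mul_range_of_summable_norm hfn hgn).of_norm
  refine hconv.of_nonneg_of_le (fun n => by positivity) (fun n => ?_)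
  have hle : ‖Sd α c n‖ ≤ ∑ i ∈ range (n+1), ‖α‖ ^ (n-i) * ‖c i‖ := by
    refine (norm_sum_le _ _).trans (le_of_eq (Finset.sum_congr rfl fun i _ => ?_))
    rw [norm_mul, norm_pow]
    simp
  calc ‖Sd α c n‖ * ρ ^ n ≤ (∑ i ∈ range (n+1), ‖α‖ ^ (n-i) * ‖c i‖) * ρ ^ n :=
        mul_le_mul_of_nonneg_right hle (by positivity)
    _ = ∑ i ∈ range (n+1), f i * g (n-i) := by
        rw [Finset.sum_mul]
        refine Finset.sum_congr rfl fun i hi => ?_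
        have hi' : i ≤ n := by simpa [Nat.lt_succ_iff] using hi
        have hρ : ρ ^ i * ρ ^ (n-i) = ρ ^ n := by rw [← pow_add]; congr 1; omega
        rw [hf, hg]
        simp only [mul_pow]
        calc ‖α‖ ^ (n-i) * ‖c i‖ * ρ ^ n = ‖c i‖ * ‖α‖ ^ (n-i) * (ρ ^ i * ρ ^ (n-i)) := by
              rw [hρ]; ring
          _ = ‖c i‖ * ρ ^ i * (‖α‖ ^ (n-i) * ρ ^ (n-i)) := by ring

lemma abel_compare {w a c : ℕ → ℝ} (hw : Antitone w) (hw0 : ∀ n, 0 ≤ w n)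
    (ha : ∀ n, 0 ≤ a n) (hc : ∀ n, 0 ≤ c n)
    (hpart : ∀ N, ∑ n ∈ range N, a n ≤ ∑ n ∈ range N, c n)
    (hsum : Summable (fun n => w n * c n)) :
    Summable (fun n => w n * a n) ∧ ∑' n, w n * a n ≤ ∑' n, w n * c n := by
  have key : ∀ N, ∑ n ∈ range N, w n * a n
      + w N * ((∑ n ∈ range N, c n) - ∑ n ∈ range N, a n) ≤ ∑ n ∈ range N, w n * c n := by
    intro N
    induction N with
    | zero => simp
    | succ N ihN =>
      have hwN : w (N+1) ≤ w N := hw (Nat.le_succ N)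
      have hCA : 0 ≤ (∑ n ∈ range (N+1), c n) - ∑ n ∈ range (N+1), a n :=
        sub_nonneg.2 (hpart (N+1))
      rw [Finset.sum_range_succ (f := fun n => w n * a n),
        Finset.sum_range_succ (f := fun n => w n * c n),
        Finset.sum_range_succ (f := fun n => a n), Finset.sum_range_succ (f := fun n => c n)]
      have h1 : w (N+1) * ((∑ n ∈ range N, c n + c N) - (∑ n ∈ range N, a n + a N))
          ≤ w N * ((∑ n ∈ range N, c n + c N) - (∑ n ∈ range N, a n + a N)) := by
        apply mul_le_mul_of_nonneg_right hwN
        have := hpart (N+1)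
        rw [Finset.sum_range_succ (f := fun n => a n), Finset.sum_range_succ (f := fun n => c n)]
          at this
        linarith
      nlinarith [ihN]
  have hb : ∀ N, ∑ n ∈ range N, w n * a n ≤ ∑' n, w n * c n := by
    intro N
    have h2 : w N * ((∑ n ∈ range N, c n) - ∑ n ∈ range N, a n) ≥ 0 :=
      mul_nonneg (hw0 N) (sub_nonneg.2 (hpart N))
    have h3 := key N
    have h4 := Summable.sum_le_tsum (range N) (fun n _ => mul_nonneg (hw0 n) (hc n)) hsum
    linarith
  have hS := summable_of_sum_range_le (fun n => mul_nonneg (hw0 n) (ha n)) hb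
  refine ⟨hS, ?_⟩
  calc ∑' n, w n * a n ≤ ∑' n, w n * c n := Summable.tsum_le_of_sum_range_le hS hb

lemma bl_pointwise (α : ℂ) (c : ℕ → ℂ) (n : ℕ) :
    ‖c n‖^2 - ‖bl α c n‖^2
      = (1 - ‖α‖^2) * (‖Sd α c n‖^2 - ‖shiftC (Sd α c) n‖^2) := by
  have h1 := norm_alg α (shiftC (Sd α c) n) (Sd α c n)
  have h2 : bl α c n = shiftC (Sd α c) n - α * Sd α c n := rfl
  have h3 := Sd_inv α c n
  rw [h2, h3]
  linarith [h1]

lemma telescope_sq (k : ℕ → ℂ) (N : ℕ) :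
    ∑ n ∈ range (N+1), (‖k n‖^2 - ‖shiftC k n‖^2) = ‖k N‖^2 := by
  induction N with
  | zero => simp [shiftC]
  | succ N ihN =>
    rw [Finset.sum_range_succ, ihN]
    have : ‖shiftC k (N+1)‖ = ‖k N‖ := rfl
    rw [this]; ring

lemma bl_contract (α : ℂ) (hα : ‖α‖ ≤ 1) {w : ℕ → ℝ} (hw : Antitone w) (hw0 : ∀ n, 0 ≤ w n)
    {c : ℕ → ℂ} (hsum : Summable fun n => w n * ‖c n‖^2) :
    Summable (fun n => w n * ‖bl α c n‖^2)
      ∧ ∑' n, w n * ‖bl α c n‖^2 ≤ ∑' n, w n * ‖c n‖^2 := by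
  refine abel_compare hw hw0 (fun n => by positivity) (fun n => by positivity)
    (fun N => ?_) hsum
  cases N with
  | zero => simp
  | succ N =>
    have h1 : ∑ n ∈ range (N+1), (‖c n‖^2 - ‖bl α c n‖^2)
        = (1-‖α‖^2) * ∑ n ∈ range (N+1), (‖Sd α c n‖^2 - ‖shiftC (Sd α c) n‖^2) := by
      rw [Finset.mul_sum]
      exact Finset.sum_congr rfl (fun n _ => bl_pointwise α c n)
    rw [telescope_sq] at h1
    have h2 : 0 ≤ (1-‖α‖^2) * ‖Sd α c N‖^2 := by
      have h5 : (0:ℝ) ≤ ‖α‖ := norm_nonneg α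
      have h4 : ‖α‖^2 ≤ 1 := by nlinarith
      exact mul_nonneg (by linarith) (sq_nonneg _)
    rw [Finset.sum_sub_distrib] at h1
    linarith

lemma div_bound (α : ℂ) (hα : ‖α‖ < 1) {w : ℕ → ℝ} (hw : Monotone w) (hw0 : 0 ≤ w 0)
    {k : ℕ → ℂ}
    (hdec : ∀ ρ : ℝ, 0 ≤ ρ → ρ < 1 → Summable (fun n => ‖k n‖ * ρ ^ n))
    (hfs : Summable (fun n => w n * ‖Tm α k n‖^2)) :
    Summable (fun n => w n * ‖k n‖^2) := by
  set fs := Tm α k with hfsdef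
  have hwn : ∀ n, 0 ≤ w n := fun n => le_trans hw0 (hw (Nat.zero_le n))
  set r := ‖α‖ with hr
  have hr0 : 0 ≤ r := norm_nonneg α
  have hr1 : r < 1 := hα
  have hinv : (0:ℝ) ≤ (1-r)⁻¹ := by
    rw [inv_nonneg]; linarith
  -- telescoping sum
  have tele : ∀ n M, ∑ i ∈ range M, α^i * fs (n+1+i) = k n - α^M * k (n+M) := by
    intro n M
    induction M with
    | zero => simp
    | succ M ihM =>
      rw [Finset.sum_range_succ, ihM]
      have hs : shiftC k (n+1+M) = k (n+M) := by
        have : n+1+M = (n+M)+1 := by omega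
        rw [this]
        rfl
      have : fs (n+1+M) = k (n+M) - α * k (n+1+M) := by
        rw [hfsdef]; show shiftC k (n+1+M) - α * k (n+1+M) = _; rw [hs]
      rw [this]
      have hnm : n + (M+1) = n+1+M := by omega
      rw [hnm, pow_succ]
      ring
  -- limit of the remainder
  have hlim : ∀ n, Tendsto (fun M => α^M * k (n+M)) atTop (nhds 0) := by
    intro n
    set ρ := (1+r)/2 with hρ
    have hρ0 : 0 < ρ := by rw [hρ]; linarith
    have hρ1 : ρ < 1 := by rw [hρ]; linarith
    have hrρ : r ≤ ρ := by rw [hρ]; linarith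
    have h1 : Tendsto (fun j => ‖k j‖ * ρ^j) atTop (nhds 0) :=
      (hdec ρ (le_of_lt hρ0) hρ1).tendsto_atTop_zero
    have h2 : Tendsto (fun M => ‖k (n+M)‖ * ρ^(n+M)) atTop (nhds 0) := by
      have := h1.comp (tendsto_add_atTop_nat n)
      refine this.congr (fun M => ?_)
      simp [Function.comp, add_comm]
    have h3 : Tendsto (fun M => ρ⁻¹^n * (‖k (n+M)‖ * ρ^(n+M))) atTop (nhds 0) := by
      simpa using h2.const_mul (ρ⁻¹^n)
    apply squeeze_zero_norm _ h3
    intro M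
    rw [norm_mul, norm_pow]
    calc r^M * ‖k (n+M)‖ ≤ ρ^M * ‖k (n+M)‖ := by
          apply mul_le_mul_of_nonneg_right (pow_le_pow_left₀ hr0 hrρ M) (norm_nonneg _)
      _ = ρ⁻¹^n * (‖k (n+M)‖ * ρ^(n+M)) := by
          rw [pow_add]
          have hρn : (ρ^n)⁻¹ * ρ^n = 1 := inv_mul_cancel₀ (pow_ne_zero _ hρ0.ne')
          linear_combination (-(ρ^M * ‖k (n+M)‖)) * hρn
  have hpart : ∀ n, Tendsto (fun M => ∑ i ∈ range M, α^i * fs (n+1+i)) atTop (nhds (k n)) := by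
    intro n
    have : (fun M => ∑ i ∈ range M, α^i * fs (n+1+i))
        = fun M => k n - α^M * k (n+M) := by funext M; exact tele n M
    rw [this]
    simpa using tendsto_const_nhds.sub (hlim n)
  -- tail summability of v
  set v : ℕ → ℝ := fun j => w j * ‖fs j‖^2 with hv
  have hvn : ∀ j, 0 ≤ v j := fun j => mul_nonneg (hwn j) (by positivity)
  have hvtail : ∀ n, Summable (fun i => v (n+1+i)) := by
    intro n
    have := (summable_nat_add_iff (f := v) (n+1)).2 hfs
    exact this.congr (fun i => by rw [add_comm])
  have hRsum : ∀ n, Summable (fun i => r^i * v (n+1+i)) := by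
    intro n
    refine (hvtail n).of_nonneg_of_le (fun i => mul_nonneg (pow_nonneg hr0 i) (hvn _)) (fun i => ?_)
    calc r^i * v (n+1+i) ≤ 1 * v (n+1+i) := by
          apply mul_le_mul_of_nonneg_right _ (hvn _)
          exact pow_le_one₀ hr0 (le_of_lt hr1)
      _ = v (n+1+i) := one_mul _
  set R : ℕ → ℝ := fun n => ∑' i, r^i * v (n+1+i) with hR
  have hgeo : ∀ M, ∑ i ∈ range M, r^i ≤ (1-r)⁻¹ := by
    intro M
    have := Summable.sum_le_tsum (range M) (fun i _ => by positivity)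
      (summable_geometric_of_lt_one hr0 hr1)
    rwa [tsum_geometric_of_lt_one hr0 hr1] at this
  -- pointwise bound
  have hptw : ∀ n, w n * ‖k n‖^2 ≤ (1-r)⁻¹ * R n := by
    intro n
    have hMbound : ∀ M, w n * ‖∑ i ∈ range M, α^i * fs (n+1+i)‖^2 ≤ (1-r)⁻¹ * R n := by
      intro M
      have h1 : ‖∑ i ∈ range M, α^i * fs (n+1+i)‖ ≤ ∑ i ∈ range M, r^i * ‖fs (n+1+i)‖ := by
        refine (norm_sum_le _ _).trans (le_of_eq (Finset.sum_congr rfl fun i _ => ?_))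
        rw [norm_mul, norm_pow]
      have hcs : (∑ i ∈ range M, r^i * ‖fs (n+1+i)‖)^2
          ≤ (∑ i ∈ range M, r^i) * ∑ i ∈ range M, r^i * ‖fs (n+1+i)‖^2 := by
        have := Finset.sum_mul_sq_le_sq_mul_sq (range M)
          (fun i => Real.sqrt (r^i)) (fun i => Real.sqrt (r^i) * ‖fs (n+1+i)‖)
        have e1 : ∀ i : ℕ, Real.sqrt (r^i) * (Real.sqrt (r^i) * ‖fs (n+1+i)‖)
            = r^i * ‖fs (n+1+i)‖ := by
          intro i
          rw [← mul_assoc, Real.mul_self_sqrt (by positivity)]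
        have e2 : ∀ i : ℕ, Real.sqrt (r^i)^2 = r^i := fun i => Real.sq_sqrt (by positivity)
        have e3 : ∀ i : ℕ, (Real.sqrt (r^i) * ‖fs (n+1+i)‖)^2 = r^i * ‖fs (n+1+i)‖^2 := by
          intro i
          rw [mul_pow, e2]
        calc (∑ i ∈ range M, r^i * ‖fs (n+1+i)‖)^2
            = (∑ i ∈ range M, Real.sqrt (r^i) * (Real.sqrt (r^i) * ‖fs (n+1+i)‖))^2 := by
              rw [Finset.sum_congr rfl (fun i _ => (e1 i).symm)]
          _ ≤ (∑ i ∈ range M, Real.sqrt (r^i)^2) * ∑ i ∈ range M,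
                (Real.sqrt (r^i) * ‖fs (n+1+i)‖)^2 := this
          _ = (∑ i ∈ range M, r^i) * ∑ i ∈ range M, r^i * ‖fs (n+1+i)‖^2 := by
              rw [Finset.sum_congr rfl (fun i _ => e2 i),
                Finset.sum_congr rfl (fun i _ => e3 i)]
      have h2 : w n * ‖∑ i ∈ range M, α^i * fs (n+1+i)‖^2
          ≤ (1-r)⁻¹ * ∑ i ∈ range M, r^i * (w n * ‖fs (n+1+i)‖^2) := by
        have hb1 : ‖∑ i ∈ range M, α^i * fs (n+1+i)‖^2
            ≤ (∑ i ∈ range M, r^i * ‖fs (n+1+i)‖)^2 := by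
          apply sq_le_sq' _ h1
          have := norm_nonneg (∑ i ∈ range M, α^i * fs (n+1+i))
          have hpos : 0 ≤ ∑ i ∈ range M, r^i * ‖fs (n+1+i)‖ :=
            Finset.sum_nonneg (fun i _ => by positivity)
          linarith
        calc w n * ‖∑ i ∈ range M, α^i * fs (n+1+i)‖^2
            ≤ w n * ((∑ i ∈ range M, r^i) * ∑ i ∈ range M, r^i * ‖fs (n+1+i)‖^2) := by
              apply mul_le_mul_of_nonneg_left (le_trans hb1 hcs) (hwn n)
          _ ≤ w n * ((1-r)⁻¹ * ∑ i ∈ range M, r^i * ‖fs (n+1+i)‖^2) := by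
              apply mul_le_mul_of_nonneg_left _ (hwn n)
              apply mul_le_mul_of_nonneg_right (hgeo M)
              exact Finset.sum_nonneg (fun i _ => by positivity)
          _ = (1-r)⁻¹ * ∑ i ∈ range M, r^i * (w n * ‖fs (n+1+i)‖^2) := by
              rw [Finset.mul_sum, Finset.mul_sum, Finset.mul_sum]
              refine Finset.sum_congr rfl (fun i _ => ?_)
              ring
      refine h2.trans ?_
      apply mul_le_mul_of_nonneg_left _ hinv
      calc ∑ i ∈ range M, r^i * (w n * ‖fs (n+1+i)‖^2)
          ≤ ∑ i ∈ range M, r^i * v (n+1+i) := by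
            refine Finset.sum_le_sum (fun i _ => ?_)
            apply mul_le_mul_of_nonneg_left _ (pow_nonneg hr0 i)
            rw [hv]
            apply mul_le_mul_of_nonneg_right (hw (by omega)) (by positivity)
        _ ≤ R n := Summable.sum_le_tsum (range M) (fun i _ => mul_nonneg (pow_nonneg hr0 i) (hvn _)) (hRsum n)
    have htd : Tendsto (fun M => w n * ‖∑ i ∈ range M, α^i * fs (n+1+i)‖^2)
        atTop (nhds (w n * ‖k n‖^2)) := by
      have := ((hpart n).norm.pow 2).const_mul (w n)
      simpa using this
    exact le_of_tendsto htd (Filter.Eventually.of_forall hMbound)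
  -- summability via bounded partial sums
  set V : ℝ := ∑' j, v j with hV
  have hVn : 0 ≤ V := tsum_nonneg hvn
  have hRpartial : ∀ N, ∑ n ∈ range N, R n ≤ (1-r)⁻¹ * V := by
    intro N
    have hswap : ∑ n ∈ range N, R n = ∑' i, ∑ n ∈ range N, r^i * v (n+1+i) := by
      rw [hR]
      exact (Summable.tsum_finsetSum (fun n _ => hRsum n)).symm
    rw [hswap]
    have hterm : ∀ i : ℕ, ∑ n ∈ range N, r^i * v (n+1+i) ≤ r^i * V := by
      intro i
      rw [← Finset.mul_sum]
      apply mul_le_mul_of_nonneg_left _ (by positivity)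
      have hemb : ∀ x y : ℕ, x+1+i = y+1+i → x = y := by omega
      have := Summable.sum_le_tsum ((range N).map ⟨fun n => n+1+i, fun x y h => hemb x y h⟩)
        (fun j _ => hvn j) hfs
      rwa [Finset.sum_map] at this
    have hsum1 : Summable (fun i => ∑ n ∈ range N, r^i * v (n+1+i)) := by
      have : ∀ n ∈ range N, Summable (fun i => r^i * v (n+1+i)) := fun n _ => hRsum n
      exact summable_sum this
    calc ∑' i, ∑ n ∈ range N, r^i * v (n+1+i) ≤ ∑' i, r^i * V :=
          Summable.tsum_le_tsum hterm hsum1 ((summable_geometric_of_lt_one hr0 hr1).mul_right V)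
      _ = (∑' i : ℕ, r^i) * V := tsum_mul_right
      _ = (1-r)⁻¹ * V := by rw [tsum_geometric_of_lt_one hr0 hr1]
  apply summable_of_sum_range_le (c := (1-r)⁻¹ * ((1-r)⁻¹ * V))
    (fun n => mul_nonneg (hwn n) (by positivity))
  intro N
  calc ∑ n ∈ range N, w n * ‖k n‖^2 ≤ ∑ n ∈ range N, (1-r)⁻¹ * R n :=
        Finset.sum_le_sum (fun n _ => hptw n)
    _ = (1-r)⁻¹ * ∑ n ∈ range N, R n := by rw [Finset.mul_sum]
    _ ≤ (1-r)⁻¹ * ((1-r)⁻¹ * V) := mul_le_mul_of_nonneg_left (hRpartial N) hinv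

lemma step_identity (γ : ℕ → ℝ) (hmono : Monotone γ) (hγ0 : 0 ≤ γ 0)
    {B : ℝ} (hB0 : 0 ≤ B) (hB : ∀ n, γ (n+1) ≤ γ n + B)
    (α : ℂ) (hα : ‖α‖ < 1) (k : ℕ → ℂ)
    (hdec : ∀ ρ : ℝ, 0 ≤ ρ → ρ < 1 → Summable (fun n => ‖k n‖ * ρ ^ n))
    (hsum : Summable (fun n => (γ n + 1) * ‖Tm α k n‖^2)) :
    Summable (fun n => (γ n + 1) * ‖k n - (starRingEnd ℂ) α * shiftC k n‖^2)
    ∧ Summable (fun n => (γ (n+1) - γ n) * ‖k n‖^2)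
    ∧ ∑' n, γ n * ‖k n - (starRingEnd ℂ) α * shiftC k n‖^2
        = ∑' n, γ n * ‖Tm α k n‖^2
          - (1 - ‖α‖^2) * ∑' n, (γ (n+1) - γ n) * ‖k n‖^2 := by
  have hγn : ∀ n, 0 ≤ γ n := fun n => le_trans hγ0 (hmono (Nat.zero_le n))
  set gs : ℕ → ℂ := fun n => k n - (starRingEnd ℂ) α * shiftC k n with hgsdef
  set fs : ℕ → ℂ := fun n => Tm α k n with hfsdef
  have hwmono : Monotone (fun n => γ n + 1) := fun a b hab => by
    simp only [add_le_add_iff_right]; exact hmono hab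
  have hk2 : Summable (fun n => (γ n + 1) * ‖k n‖^2) :=
    div_bound α hα hwmono (by linarith) hdec hsum
  have hshift : Summable (fun n => (γ n + 1) * ‖shiftC k n‖^2) := by
    apply (summable_nat_add_iff (f := fun n => (γ n + 1) * ‖shiftC k n‖^2) 1).1
    refine (hk2.mul_left (B+1)).of_nonneg_of_le
      (fun n => mul_nonneg (by linarith [hγn (n+1)]) (by positivity)) (fun n => ?_)
    have h1 : ‖shiftC k (n+1)‖ = ‖k n‖ := rfl
    rw [h1]
    have h2 : γ (n+1) + 1 ≤ (B+1) * (γ n + 1) := by nlinarith [hγn n, hB n]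
    calc (γ (n+1) + 1) * ‖k n‖^2 ≤ ((B+1)*(γ n + 1)) * ‖k n‖^2 :=
          mul_le_mul_of_nonneg_right h2 (by positivity)
      _ = (B+1) * ((γ n + 1) * ‖k n‖^2) := by ring
  have hαle : ‖(starRingEnd ℂ) α‖ ≤ 1 := by
    rw [RingHomIsometric.norm_map]; exact le_of_lt hα
  have hgs2 : Summable (fun n => (γ n + 1) * ‖gs n‖^2) := by
    refine ((hk2.mul_left 2).add (hshift.mul_left 2)).of_nonneg_of_le
      (fun n => mul_nonneg (by linarith [hγn n]) (by positivity)) (fun n => ?_)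
    have h1 : ‖gs n‖ ≤ ‖k n‖ + ‖shiftC k n‖ := by
      refine (norm_sub_le _ _).trans ?_
      have : ‖(starRingEnd ℂ) α * shiftC k n‖ ≤ ‖shiftC k n‖ := by
        rw [norm_mul]
        calc ‖(starRingEnd ℂ) α‖ * ‖shiftC k n‖ ≤ 1 * ‖shiftC k n‖ :=
              mul_le_mul_of_nonneg_right hαle (norm_nonneg _)
          _ = ‖shiftC k n‖ := one_mul _
      linarith
    have h2 : ‖gs n‖^2 ≤ 2*‖k n‖^2 + 2*‖shiftC k n‖^2 := by
      nlinarith [norm_nonneg (gs n), norm_nonneg (k n), norm_nonneg (shiftC k n),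
        sq_nonneg (‖k n‖ - ‖shiftC k n‖)]
    calc (γ n + 1) * ‖gs n‖^2 ≤ (γ n + 1) * (2*‖k n‖^2 + 2*‖shiftC k n‖^2) :=
          mul_le_mul_of_nonneg_left h2 (by linarith [hγn n])
      _ = 2 * ((γ n + 1) * ‖k n‖^2) + 2 * ((γ n + 1) * ‖shiftC k n‖^2) := by ring
  have hΓk : Summable (fun n => (γ (n+1) - γ n) * ‖k n‖^2) := by
    refine (hk2.mul_left B).of_nonneg_of_le
      (fun n => mul_nonneg (by linarith [hmono (Nat.le_succ n)]) (by positivity))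
      (fun n => ?_)
    have h1 : γ (n+1) - γ n ≤ B * (γ n + 1) := by nlinarith [hγn n, hB n]
    calc (γ (n+1) - γ n) * ‖k n‖^2 ≤ (B * (γ n + 1)) * ‖k n‖^2 :=
          mul_le_mul_of_nonneg_right h1 (by positivity)
      _ = B * ((γ n + 1) * ‖k n‖^2) := by ring
  refine ⟨hgs2, hΓk, ?_⟩
  -- summable of the γ-weighted versions
  have hfsγ : Summable (fun n => γ n * ‖fs n‖^2) := by
    refine hsum.of_nonneg_of_le (fun n => mul_nonneg (hγn n) (by positivity)) (fun n => ?_)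
    apply mul_le_mul_of_nonneg_right (by linarith) (by positivity)
  have hgsγ : Summable (fun n => γ n * ‖gs n‖^2) := by
    refine hgs2.of_nonneg_of_le (fun n => mul_nonneg (hγn n) (by positivity)) (fun n => ?_)
    apply mul_le_mul_of_nonneg_right (by linarith) (by positivity)
  have hkγ1 : Summable (fun n => (γ n + 1) * ‖k n‖^2) := hk2
  -- finite identity
  have hfin : ∀ N, ∑ n ∈ range (N+1), (γ n * ‖fs n‖^2 - γ n * ‖gs n‖^2)
      = (1 - ‖α‖^2) * (∑ n ∈ range N, (γ (n+1) - γ n) * ‖k n‖^2 - γ N * ‖k N‖^2) := by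
    intro N
    have hpt : ∀ n, γ n * ‖fs n‖^2 - γ n * ‖gs n‖^2
        = (1-‖α‖^2) * (γ n * (‖shiftC k n‖^2 - ‖k n‖^2)) := by
      intro n
      have := norm_alg α (shiftC k n) (k n)
      have hfseq : fs n = shiftC k n - α * k n := rfl
      have hgseq : gs n = k n - (starRingEnd ℂ) α * shiftC k n := rfl
      rw [hfseq, hgseq]
      linear_combination (γ n) * this
    have habel : ∑ n ∈ range (N+1), γ n * (‖shiftC k n‖^2 - ‖k n‖^2)
        = ∑ n ∈ range N, (γ (n+1) - γ n) * ‖k n‖^2 - γ N * ‖k N‖^2 := by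
      induction N with
      | zero => simp [shiftC]
      | succ N ihN =>
        rw [Finset.sum_range_succ, ihN,
          Finset.sum_range_succ (f := fun n => (γ (n+1) - γ n) * ‖k n‖^2)]
        have : ‖shiftC k (N+1)‖ = ‖k N‖ := rfl
        rw [this]
        ring
    calc ∑ n ∈ range (N+1), (γ n * ‖fs n‖^2 - γ n * ‖gs n‖^2)
        = ∑ n ∈ range (N+1), (1-‖α‖^2) * (γ n * (‖shiftC k n‖^2 - ‖k n‖^2)) :=
          Finset.sum_congr rfl (fun n _ => hpt n)
      _ = (1-‖α‖^2) * ∑ n ∈ range (N+1), γ n * (‖shiftC k n‖^2 - ‖k n‖^2) := by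
          rw [Finset.mul_sum]
      _ = (1-‖α‖^2) * (∑ n ∈ range N, (γ (n+1) - γ n) * ‖k n‖^2 - γ N * ‖k N‖^2) := by
          rw [habel]
  -- limits
  have hL : Tendsto (fun N => ∑ n ∈ range (N+1), (γ n * ‖fs n‖^2 - γ n * ‖gs n‖^2))
      atTop (nhds ((∑' n, γ n * ‖fs n‖^2) - ∑' n, γ n * ‖gs n‖^2)) := by
    have h1 := (hfsγ.hasSum.sub hgsγ.hasSum).tendsto_sum_nat
    exact h1.comp (tendsto_add_atTop_nat 1)
  have hγk0 : Tendsto (fun N => γ N * ‖k N‖^2) atTop (nhds 0) := by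
    apply squeeze_zero (fun N => mul_nonneg (hγn N) (by positivity))
      (fun N => ?_) hk2.tendsto_atTop_zero
    apply mul_le_mul_of_nonneg_right (by linarith) (by positivity)
  have hR : Tendsto (fun N => (1-‖α‖^2) * (∑ n ∈ range N, (γ (n+1) - γ n) * ‖k n‖^2
      - γ N * ‖k N‖^2)) atTop
      (nhds ((1-‖α‖^2) * ∑' n, (γ (n+1) - γ n) * ‖k n‖^2)) := by
    have h1 := hΓk.hasSum.tendsto_sum_nat
    have h2 := h1.sub hγk0
    have := h2.const_mul (1-‖α‖^2)
    simpa using this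
  have heq : (∑' n, γ n * ‖fs n‖^2) - ∑' n, γ n * ‖gs n‖^2
      = (1-‖α‖^2) * ∑' n, (γ (n+1) - γ n) * ‖k n‖^2 := by
    exact tendsto_nhds_unique (hL.congr hfin) hR
  linarith

lemma chainB_abs (α : ℕ → ℂ) (g : ℕ → ℂ)
    (hgdec : ∀ ρ : ℝ, 0 ≤ ρ → ρ < 1 → Summable (fun n => ‖g n‖ * ρ ^ n)) :
    ∀ s, (∀ i ∈ Icc 1 s, ‖α i‖ < 1) →
    ∀ ρ : ℝ, 0 ≤ ρ → ρ < 1 → Summable (fun n => ‖chainB α g s n‖ * ρ ^ n) := by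
  intro s
  induction s with
  | zero => intro _ ρ h0 h1; exact hgdec ρ h0 h1
  | succ s ihs =>
    intro hα ρ h0 h1
    have hs := ihs (fun i hi => hα i (by simp at hi ⊢; omega)) ρ h0 h1
    have hα1 : ‖α (s+1)‖ < 1 := hα (s+1) (by simp)
    exact summable_Tm_norm _ h0 (summable_Sd_norm _ hα1 h0 h1 hs)

lemma chainB_hasSum (α : ℕ → ℂ) (g : ℕ → ℂ)
    (hgdec : ∀ ρ : ℝ, 0 ≤ ρ → ρ < 1 → Summable (fun n => ‖g n‖ * ρ ^ n))
    {z W : ℂ} (hz : ‖z‖ < 1) (hW : HasSum (fun n => g n * z ^ n) W) :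
    ∀ s, (∀ i ∈ Icc 1 s, ‖α i‖ < 1) →
    HasSum (fun n => chainB α g s n * z ^ n) ((∏ i ∈ Icc 1 s, bf (α i) z) * W) := by
  intro s
  induction s with
  | zero => intro _; simpa [chainB] using hW
  | succ s ihs =>
    intro hα
    have hα' : ∀ i ∈ Icc 1 s, ‖α i‖ < 1 := fun i hi => hα i (by simp at hi ⊢; omega)
    have hα1 : ‖α (s+1)‖ < 1 := hα (s+1) (by simp)
    have hs := ihs hα'
    have habs : Summable (fun n => ‖chainB α g s n‖ * ‖z‖ ^ n) :=
      chainB_abs α g hgdec s hα' ‖z‖ (norm_nonneg z) hz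
    have h1 := hasSum_Sd (α (s+1)) hα1 hz habs hs
    have h2 := hasSum_Tm (α (s+1)) h1
    have h3 : (z - α (s+1)) * ((∏ i ∈ Icc 1 s, bf (α i) z) * W
        * (1 - (starRingEnd ℂ) (α (s+1)) * z)⁻¹)
        = (∏ i ∈ Icc 1 (s+1), bf (α i) z) * W := by
      rw [Finset.prod_Icc_succ_top (by omega : 1 ≤ s+1)]
      rw [bf, div_eq_mul_inv]
      ring
    rw [← h3]
    exact h2

lemma chainB_contract (α : ℕ → ℂ) (c : ℕ → ℂ) {w : ℕ → ℝ}
    (hw : Antitone w) (hw0 : ∀ n, 0 ≤ w n)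
    (hsum : Summable fun n => w n * ‖c n‖^2) :
    ∀ s, (∀ i ∈ Icc 1 s, ‖α i‖ ≤ 1) →
    Summable (fun n => w n * ‖chainB α c s n‖^2)
      ∧ ∑' n, w n * ‖chainB α c s n‖^2 ≤ ∑' n, w n * ‖c n‖^2 := by
  intro s
  induction s with
  | zero => intro _; exact ⟨hsum, le_refl _⟩
  | succ s ihs =>
    intro hα
    have hα' : ∀ i ∈ Icc 1 s, ‖α i‖ ≤ 1 := fun i hi => hα i (by simp at hi ⊢; omega)
    have hα1 : ‖α (s+1)‖ ≤ 1 := hα (s+1) (by simp)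
    obtain ⟨hs1, hs2⟩ := ihs hα'
    obtain ⟨hc1, hc2⟩ := bl_contract (α (s+1)) hα1 hw hw0 hs1
    exact ⟨hc1, le_trans hc2 hs2⟩

lemma prod_split {α : ℕ → ℂ} {m j : ℕ} (hj1 : 1 ≤ j) (hjm : j ≤ m) {z W : ℂ}
    (hz : ‖z‖ < 1) (hα : ∀ i ∈ Icc 1 m, ‖α i‖ < 1) (hzj : z ≠ α j) :
    (∏ i ∈ Icc 1 (m-j), bf (α (j+i)) z) *
      ((∏ i ∈ Icc 1 (j-1), bf (α i) z) * W * (1 - (starRingEnd ℂ) (α j) * z)⁻¹)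
      = ((∏ i ∈ Icc 1 m, bf (α i) z) * W) / (z - α j) := by
  obtain ⟨j', rfl⟩ : ∃ j', j = j'+1 := ⟨j-1, by omega⟩
  -- rewrite the shifted product
  have hIoc : Ioc (j'+1) m = (Icc 1 (m-(j'+1))).map (addLeftEmbedding (j'+1)) := by
    rw [Finset.map_add_left_Icc]
    have e : j'+1 + (m - (j'+1)) = m := by omega
    rw [e]
    have h2 := Finset.Icc_add_one_left_eq_Ioc (j'+1) m
    simpa using h2.symm
  have hmap : (∏ i ∈ Icc 1 (m-(j'+1)), bf (α ((j'+1)+i)) z)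
      = ∏ x ∈ Ioc (j'+1) m, bf (α x) z := by
    rw [hIoc, Finset.prod_map]
    rfl
  have hsplit : (∏ i ∈ Icc 1 m, bf (α i) z)
      = (∏ i ∈ Icc 1 (j'+1), bf (α i) z) * ∏ x ∈ Ioc (j'+1) m, bf (α x) z := by
    have e1 : Icc 1 m = Ioc 0 m := Finset.Icc_add_one_left_eq_Ioc 0 m
    have e2 : Icc 1 (j'+1) = Ioc 0 (j'+1) := Finset.Icc_add_one_left_eq_Ioc 0 (j'+1)
    rw [e1, e2]
    exact (Finset.prod_Ioc_consecutive _ (by omega) hjm).symm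
  have htop : (∏ i ∈ Icc 1 (j'+1), bf (α i) z)
      = (∏ i ∈ Icc 1 j', bf (α i) z) * bf (α (j'+1)) z :=
    Finset.prod_Icc_succ_top (by omega) _
  have hj'eq : (j'+1) - 1 = j' := by omega
  rw [hj'eq, hmap, hsplit, htop]
  have ha : z - α (j'+1) ≠ 0 := sub_ne_zero.2 hzj
  have hb : 1 - (starRingEnd ℂ) (α (j'+1)) * z ≠ 0 :=
    onenz (hα (j'+1) (by simp; omega)) hz
  rw [bf]
  field_simp

lemma descend (γ : ℕ → ℝ) (hmono : Monotone γ) (hγ0 : 0 ≤ γ 0)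
    {B : ℝ} (hB0 : 0 ≤ B) (hB : ∀ n, γ (n+1) ≤ γ n + B)
    (α : ℕ → ℂ) (g : ℕ → ℂ)
    (hgdec : ∀ ρ : ℝ, 0 ≤ ρ → ρ < 1 → Summable (fun n => ‖g n‖ * ρ ^ n)) :
    ∀ t, (∀ i ∈ Icc 1 t, ‖α i‖ < 1) →
    Summable (fun n => (γ n + 1) * ‖chainB α g t n‖^2) →
    (Summable (fun n => (γ n + 1) * ‖g n‖^2)
     ∧ (∀ i ∈ Icc 1 t, Summable (fun n =>
          (γ (n+1) - γ n) * ‖Sd (α i) (chainB α g (i-1)) n‖^2))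
     ∧ ∑' n, γ n * ‖g n‖^2
        = ∑' n, γ n * ‖chainB α g t n‖^2
          - ∑ i ∈ Icc 1 t, (1-‖α i‖^2)
              * ∑' n, (γ (n+1) - γ n) * ‖Sd (α i) (chainB α g (i-1)) n‖^2) := by
  intro t
  induction t with
  | zero =>
    intro _ hsum
    refine ⟨hsum, by simp, by simp [chainB]⟩
  | succ t iht =>
    intro hα hsum
    have hα' : ∀ i ∈ Icc 1 t, ‖α i‖ < 1 := fun i hi => hα i (by simp at hi ⊢; omega)
    have hα1 : ‖α (t+1)‖ < 1 := hα (t+1) (by simp)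
    set k : ℕ → ℂ := Sd (α (t+1)) (chainB α g t) with hk
    have hdec : ∀ ρ : ℝ, 0 ≤ ρ → ρ < 1 → Summable (fun n => ‖k n‖ * ρ ^ n) := by
      intro ρ h0 h1
      exact summable_Sd_norm _ hα1 h0 h1 (chainB_abs α g hgdec t hα' ρ h0 h1)
    have hTm : Summable (fun n => (γ n + 1) * ‖Tm (α (t+1)) k n‖^2) := hsum
    obtain ⟨hgs2, hΓk, hid⟩ := step_identity γ hmono hγ0 hB0 hB (α (t+1)) hα1 k hdec hTm
    -- gs = chainB α g t
    have hgseq : ∀ n, k n - (starRingEnd ℂ) (α (t+1)) * shiftC k n = chainB α g t n :=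
      fun n => (Sd_inv (α (t+1)) (chainB α g t) n).symm
    have hgs2' : Summable (fun n => (γ n + 1) * ‖chainB α g t n‖^2) := by
      refine hgs2.congr (fun n => ?_)
      rw [hgseq n]
    obtain ⟨hmain, hall, hident⟩ := iht hα' hgs2'
    refine ⟨hmain, ?_, ?_⟩
    · intro i hi
      rcases Finset.mem_Icc.1 hi with ⟨hi1, hi2⟩
      by_cases hit : i = t+1
      · subst hit
        have : (t+1) - 1 = t := by omega
        rw [this]
        exact hΓk
      · exact hall i (Finset.mem_Icc.2 ⟨hi1, by omega⟩)
    · have hid' : ∑' n, γ n * ‖chainB α g t n‖^2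
          = ∑' n, γ n * ‖chainB α g (t+1) n‖^2
            - (1 - ‖α (t+1)‖^2) * ∑' n, (γ (n+1) - γ n) * ‖k n‖^2 := by
        have e1 : ∑' n, γ n * ‖chainB α g t n‖^2
            = ∑' n, γ n * ‖k n - (starRingEnd ℂ) (α (t+1)) * shiftC k n‖^2 :=
          tsum_congr (fun n => by rw [hgseq n])
        have e2 : ∑' n, γ n * ‖chainB α g (t+1) n‖^2
            = ∑' n, γ n * ‖Tm (α (t+1)) k n‖^2 := tsum_congr (fun n => rfl)
        rw [e1, e2]
        exact hid
      rw [hident, hid']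
      rw [Finset.sum_Icc_succ_top (by omega : 1 ≤ t+1)]
      have e3 : (t+1) - 1 = t := by omega
      rw [e3]
      ring

end BlaschkeAux

/-- Theorem 2: if the differences `γ_{n+1}-γ_n` are monotone decreasing and `F ∈ X_γ`
has finitely many zeros `α_1,…,α_m` in `𝔻` with Blaschke decomposition `F = B·G`, then
`‖G‖_{X_γ}² ≤ ‖F‖_{X_γ}² − Σ_j (1-|α_j|²)‖F/(·-α_j)‖_{Y_γ}²`. -/
theorem stmt7 (γ : ℕ → ℝ) (hmono : Monotone γ) (h0 : γ 0 = 0)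
    (hconc : ∀ n, γ (n + 2) - γ (n + 1) ≤ γ (n + 1) - γ n)
    (m : ℕ) (α : ℕ → ℂ) (hα : ∀ j ∈ Icc 1 m, ‖α j‖ < 1)
    (F G : ℂ → ℂ) (f g : ℕ → ℂ) (K : ℕ → ℕ → ℂ)
    (hf : IsCoeffs f F) (hg : IsCoeffs g G)
    (hG0 : ∀ z : ℂ, ‖z‖ < 1 → G z ≠ 0)
    (hfac : ∀ z : ℂ, ‖z‖ < 1 →
      F z = (∏ j ∈ Icc 1 m, (z - α j) / (1 - (starRingEnd ℂ) (α j) * z)) * G z)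
    -- `K j` are the Taylor coefficients of `F(z)/(z-α_j)` (singularity removed)
    (hK : ∀ j ∈ Icc 1 m, ∀ z : ℂ, ‖z‖ < 1 → z ≠ α j →
      HasSum (fun n => K j n * z ^ n) (F z / (z - α j)))
    (hH2 : Summable fun n => ‖f n‖ ^ 2)
    (hX : Summable fun n => γ n * ‖f n‖ ^ 2) :
    (∀ j ∈ Icc 1 m, Summable fun n => (γ (n + 1) - γ n) * ‖K j n‖ ^ 2) ∧
      xnorm2 γ g ≤
        xnorm2 γ f - ∑ j ∈ Icc 1 m, (1 - ‖α j‖ ^ 2) * ynorm2 γ (K j) := by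
  have hγ0' : (0:ℝ) ≤ γ 0 := le_of_eq h0.symm
  have hγn : ∀ n, 0 ≤ γ n := fun n => le_trans hγ0' (hmono (Nat.zero_le n))
  have hB0 : (0:ℝ) ≤ γ 1 := hγn 1
  have hΓanti : Antitone (fun n => γ (n+1) - γ n) :=
    antitone_nat_of_succ_le (fun n => hconc n)
  have hΓ0 : ∀ n, 0 ≤ γ (n+1) - γ n := fun n => sub_nonneg.2 (hmono (Nat.le_succ n))
  have hB : ∀ n, γ (n+1) ≤ γ n + γ 1 := by
    intro n
    have h1 := hΓanti (Nat.zero_le n)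
    norm_num at h1
    linarith
  have hgdec : ∀ ρ : ℝ, 0 ≤ ρ → ρ < 1 → Summable (fun n => ‖g n‖ * ρ ^ n) :=
    fun ρ a b => abs_summable_of_punctured (α := 2)
      (fun z hz _ => (hg z hz).summable) a b
  have hfP : ∀ n, f n = chainB α g m n := by
    have hdiff : ∀ z : ℂ, ‖z‖ < 1 → z ≠ 2 →
        HasSum (fun n => (f n - chainB α g m n) * z ^ n) 0 := by
      intro z hz _
      have h1 := hf z hz
      have h2 := chainB_hasSum α g hgdec hz (hg z hz) m hα
      have h3 := h1.sub h2
      have h4 : (∏ i ∈ Icc 1 m, bf (α i) z) * G z = F z := by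
        rw [hfac z hz]
        simp only [bf]
      rw [h4, sub_self] at h3
      have he : (fun n => (f n - chainB α g m n) * z ^ n)
          = fun n => f n * z ^ n - chainB α g m n * z ^ n := by
        funext n; ring
      rw [he]
      exact h3
    exact fun n => sub_eq_zero.1 (coeff_unique hdiff n)
  have hinit : Summable (fun n => (γ n + 1) * ‖chainB α g m n‖ ^ 2) := by
    have h5 : Summable (fun n => (γ n + 1) * ‖f n‖ ^ 2) := by
      refine (hX.add hH2).congr (fun n => ?_); ring
    exact h5.congr (fun n => by rw [hfP n])
  obtain ⟨hgsum, hSdsum, hident⟩ := descend γ hmono hγ0' hB0 hB α g hgdec m hα hinit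
  have hKj : ∀ j ∈ Icc 1 m,
      (Summable fun n => (γ (n+1) - γ n) * ‖K j n‖ ^ 2) ∧
      ∑' n, (γ (n+1) - γ n) * ‖K j n‖ ^ 2
        ≤ ∑' n, (γ (n+1) - γ n) * ‖Sd (α j) (chainB α g (j-1)) n‖ ^ 2 := by
    intro j hj
    rcases Finset.mem_Icc.1 hj with ⟨hj1, hjm⟩
    have hαj : ‖α j‖ < 1 := hα j hj
    have hαsub : ∀ i ∈ Icc 1 (j-1), ‖α i‖ < 1 := fun i hi => by
      rcases Finset.mem_Icc.1 hi with ⟨a, b⟩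
      exact hα i (Finset.mem_Icc.2 ⟨a, by omega⟩)
    have hα'lt : ∀ i ∈ Icc 1 (m-j), ‖α (j+i)‖ < 1 := fun i hi => by
      rcases Finset.mem_Icc.1 hi with ⟨a, b⟩
      exact hα (j+i) (Finset.mem_Icc.2 ⟨by omega, by omega⟩)
    have hc0dec : ∀ ρ : ℝ, 0 ≤ ρ → ρ < 1 →
        Summable (fun n => ‖Sd (α j) (chainB α g (j-1)) n‖ * ρ ^ n) := fun ρ a b =>
      summable_Sd_norm _ hαj a b (chainB_abs α g hgdec (j-1) hαsub ρ a b)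
    have hKeq : ∀ n, K j n
        = chainB (fun i => α (j+i)) (Sd (α j) (chainB α g (j-1))) (m-j) n := by
      have hdiff : ∀ z : ℂ, ‖z‖ < 1 → z ≠ α j →
          HasSum (fun n => (K j n
            - chainB (fun i => α (j+i)) (Sd (α j) (chainB α g (j-1))) (m-j) n) * z ^ n) 0 := by
        intro z hz hzj
        have h1 := hK j hj z hz hzj
        have hbase := hasSum_Sd (α j) hαj hz
          (chainB_abs α g hgdec (j-1) hαsub ‖z‖ (norm_nonneg z) hz)
          (chainB_hasSum α g hgdec hz (hg z hz) (j-1) hαsub)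
        have h2 := chainB_hasSum (fun i => α (j+i)) _ hc0dec hz hbase (m-j) hα'lt
        have hval : (∏ i ∈ Icc 1 (m-j), bf (α (j+i)) z) *
            ((∏ i ∈ Icc 1 (j-1), bf (α i) z) * G z * (1 - (starRingEnd ℂ) (α j) * z)⁻¹)
            = F z / (z - α j) := by
          rw [prod_split hj1 hjm hz hα hzj, hfac z hz]
          simp only [bf]
        rw [hval] at h2
        have h3 := h1.sub h2
        rw [sub_self] at h3
        have he : (fun n => (K j n
              - chainB (fun i => α (j+i)) (Sd (α j) (chainB α g (j-1))) (m-j) n) * z ^ n)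
            = fun n => K j n * z ^ n
              - chainB (fun i => α (j+i)) (Sd (α j) (chainB α g (j-1))) (m-j) n * z ^ n := by
          funext n; ring
        rw [he]
        exact h3
      exact fun n => sub_eq_zero.1 (coeff_unique hdiff n)
    have hstart := hSdsum j hj
    obtain ⟨hc1, hc2⟩ := chainB_contract (fun i => α (j+i)) _ hΓanti hΓ0 hstart (m-j)
      (fun i hi => le_of_lt (hα'lt i hi))
    constructor
    · exact hc1.congr (fun n => by rw [hKeq n])
    · calc ∑' n, (γ (n+1) - γ n) * ‖K j n‖ ^ 2
          = ∑' n, (γ (n+1) - γ n)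
              * ‖chainB (fun i => α (j+i)) (Sd (α j) (chainB α g (j-1))) (m-j) n‖ ^ 2 :=
            tsum_congr (fun n => by rw [hKeq n])
        _ ≤ _ := hc2
  refine ⟨fun j hj => (hKj j hj).1, ?_⟩
  have hxg : xnorm2 γ g = ∑' n, γ n * ‖g n‖ ^ 2 := rfl
  have hxf : ∑' n, γ n * ‖chainB α g m n‖ ^ 2 = xnorm2 γ f :=
    tsum_congr (fun n => by rw [← hfP n])
  have hfinal : ∑ j ∈ Icc 1 m, (1 - ‖α j‖ ^ 2) * ynorm2 γ (K j)
      ≤ ∑ j ∈ Icc 1 m, (1 - ‖α j‖ ^ 2)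
          * ∑' n, (γ (n+1) - γ n) * ‖Sd (α j) (chainB α g (j-1)) n‖ ^ 2 := by
    refine Finset.sum_le_sum (fun j hj => ?_)
    have h6 : 0 ≤ 1 - ‖α j‖ ^ 2 := by
      have h7 := hα j hj
      have h8 := norm_nonneg (α j)
      nlinarith
    have h9 : ynorm2 γ (K j) = ∑' n, (γ (n+1) - γ n) * ‖K j n‖ ^ 2 := rfl
    rw [h9]
    exact mul_le_mul_of_nonneg_left (hKj j hj).2 h6
  rw [hxg, hident, hxf]
  linarith
end

section
/- Let (γ_n) be monotone increasing with γ_0 = 0, let F ∈ X_γ have zeros α_1, …, α_m in D ordered by increasing modulus (m finite or infinite), with Blaschke decomposition F = B·G. Define H_{α_k}(z) = (∏_{j=k+1}^m (z−α_j)/(1−ᾱ_j z))·G(z)/(1−ᾱ_k z). If the difference sequence Γ_n = γ_{n+1}−γ_n is monotone increasing, then for each k, ‖G(e^{i·})/(1−ᾱ_k e^{i·})‖_{Y_γ}^2 ≤ ‖H_{α_k}‖_{Y_γ}^2 ≤ ‖F(e^{i·})/(e^{i·}−α_k)‖_{Y_γ}^2. -/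
open Finset Filter

noncomputable def ynorm2e (γ : ℕ → ℝ) (a : ℕ → ℂ) : ENNReal :=
  ∑' n, ENNReal.ofReal ((γ (n + 1) - γ n) * ‖a n‖ ^ 2)

namespace Stmt8

/-- single Blaschke factor -/
noncomputable def blas (α z : ℂ) : ℂ := (z - α) / (1 - (starRingEnd ℂ) α * z)

def SumsTo (S : Set ℂ) (e : ℕ → ℂ) (φ : ℂ → ℂ) : Prop :=
  ∀ z : ℂ, ‖z‖ < 1 → z ∉ S → HasSum (fun n => e n * z ^ n) (φ z)

def shf (e : ℕ → ℂ) : ℕ → ℂ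
  | 0 => 0
  | n + 1 => e n

noncomputable def geo (α : ℂ) (e : ℕ → ℂ) (n : ℕ) : ℂ :=
  ∑ j ∈ Finset.range (n + 1), α ^ (n - j) * e j

noncomputable def mstep (α : ℂ) (e : ℕ → ℂ) (n : ℕ) : ℂ :=
  shf (geo ((starRingEnd ℂ) α) e) n - α * geo ((starRingEnd ℂ) α) e n

noncomputable def T (k : ℕ) (e : ℕ → ℂ) : ENNReal :=
  ∑' n, ENNReal.ofReal (‖e (n + k)‖ ^ 2)

lemma T_congr {k : ℕ} {a b : ℕ → ℂ} (h : ∀ n, a n = b n) : T k a = T k b := by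
  simp only [T, h]

lemma sumsTo_mono {S S' : Set ℂ} (hsub : S ⊆ S') {e : ℕ → ℂ} {φ : ℂ → ℂ}
    (h : SumsTo S e φ) : SumsTo S' e φ :=
  fun z hz hzS => h z hz (fun hm => hzS (hsub hm))

lemma exists_real_avoid (S : Set ℂ) (hS : S.Finite) {a b : ℝ} (hab : a < b) :
    ∃ t : ℝ, a < t ∧ t < b ∧ ((t : ℂ) ∉ S) := by
  have hinf : (Set.Ioo a b).Infinite := Set.infinite_coe_iff.mp (Set.Ioo.infinite hab)
  have hfin : ((fun t : ℝ => (t : ℂ)) ⁻¹' S).Finite :=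
    hS.preimage (Function.Injective.injOn (fun x y h => by exact_mod_cast h))
  have : (Set.Ioo a b \ ((fun t : ℝ => (t : ℂ)) ⁻¹' S)).Infinite := hinf.diff hfin
  obtain ⟨t, ht⟩ := this.nonempty
  exact ⟨t, ht.1.1, ht.1.2, ht.2⟩

lemma norm_real_lt {ρ : ℝ} (h0 : 0 < ρ) (h1 : ρ < 1) : ‖(ρ : ℂ)‖ < 1 := by
  rw [Complex.norm_real, Real.norm_eq_abs, abs_of_pos h0]; exact h1

lemma growth {S : Set ℂ} (hS : S.Finite) {e : ℕ → ℂ} {φ : ℂ → ℂ} (h : SumsTo S e φ)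
    {r : ℝ} (h0 : 0 < r) (h1 : r < 1) : ∃ C, 0 ≤ C ∧ ∀ n, ‖e n‖ ≤ C / r ^ n := by
  obtain ⟨ρ, hρr, hρ1, hρS⟩ := exists_real_avoid S hS h1
  have hρ0 : 0 < ρ := h0.trans hρr
  have hsum : HasSum (fun n => e n * (ρ : ℂ) ^ n) (φ ρ) := h _ (norm_real_lt hρ0 hρ1) hρS
  obtain ⟨C, hC⟩ := hsum.summable.tendsto_atTop_zero.norm.bddAbove_range
  have hC0 : 0 ≤ C := le_trans (norm_nonneg _) (hC ⟨0, rfl⟩)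
  refine ⟨C, hC0, fun n => ?_⟩
  have hn : ‖e n‖ * ρ ^ n ≤ C := by
    have := hC ⟨n, rfl⟩
    simpa [norm_mul, norm_pow, Complex.norm_real, Real.norm_eq_abs, abs_of_pos hρ0] using this
  have h2 : ‖e n‖ ≤ C / ρ ^ n := by
    rw [le_div_iff₀ (pow_pos hρ0 n)]; exact hn
  refine h2.trans (div_le_div_of_nonneg_left hC0 (pow_pos h0 n) ?_)
  exact pow_le_pow_left₀ h0.le hρr.le n

lemma growth2 {S : Set ℂ} (hS : S.Finite) {e : ℕ → ℂ} {φ : ℂ → ℂ} (h : SumsTo S e φ) :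
    ∃ C, 0 ≤ C ∧ ∀ n, ‖e n‖ ≤ C * 2 ^ n := by
  obtain ⟨C, hC0, hC⟩ := growth hS h (r := 1/2) (by norm_num) (by norm_num)
  refine ⟨C, hC0, fun n => ?_⟩
  have hCn := hC n
  have h2 : ((1:ℝ)/2) ^ n = ((2:ℝ) ^ n)⁻¹ := by rw [one_div, inv_pow]
  rw [h2, div_inv_eq_mul] at hCn
  exact hCn

lemma hasSum_shf {e : ℕ → ℂ} {z s : ℂ} (h : HasSum (fun n => e n * z ^ n) s) :
    HasSum (fun n => shf e n * z ^ n) (z * s) := by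
  have h1 : HasSum (fun n => e n * z ^ (n + 1)) (z * s) := by
    have := h.mul_left z
    have hfun : (fun n => e n * z ^ (n + 1)) = fun n => z * (e n * z ^ n) := by
      funext n; ring
    rw [hfun]; exact this
  have h2 : HasSum (fun n => shf e (n + 1) * z ^ (n + 1)) (z * s) := h1
  have h3 := (hasSum_nat_add_iff (f := fun n => shf e n * z ^ n) 1).mp h2
  simpa [shf] using h3

lemma sumsTo_shf {S : Set ℂ} {e : ℕ → ℂ} {φ : ℂ → ℂ} (h : SumsTo S e φ) :
    SumsTo S (shf e) (fun z => z * φ z) :=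
  fun z hz hzS => hasSum_shf (h z hz hzS)

lemma prod_Ioc_shift (g : ℕ → ℂ) (a M : ℕ) :
    ∏ j ∈ Ioc a (a + M), g j = ∏ i ∈ range M, g (a + 1 + i) := by
  induction M with
  | zero => simp
  | succ M ih =>
    rw [show a + (M + 1) = (a + M) + 1 by omega,
      Finset.prod_Ioc_succ_top (by omega), ih, Finset.prod_range_succ]
    congr 2
    omega

lemma geo_succ (α : ℂ) (e : ℕ → ℂ) (n : ℕ) :
    geo α e (n + 1) = α * geo α e n + e (n + 1) := by
  unfold geo
  rw [Finset.sum_range_succ (n := n + 1), Finset.mul_sum]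
  congr 1
  · apply Finset.sum_congr rfl
    intro j hj
    rw [Finset.mem_range] at hj
    have : n + 1 - j = (n - j) + 1 := by omega
    rw [this, pow_succ]
    ring
  · simp

lemma e_eq_geo (α : ℂ) (e : ℕ → ℂ) (n : ℕ) :
    e n = geo α e n - α * shf (geo α e) n := by
  cases n with
  | zero => simp [geo, shf]
  | succ n => rw [geo_succ]; simp [shf]

lemma key_id (α A Ap : ℂ) :
    ‖Ap - α * A‖ ^ 2 + (1 - ‖α‖ ^ 2) * ‖A‖ ^ 2
      = ‖A - (starRingEnd ℂ) α * Ap‖ ^ 2 + (1 - ‖α‖ ^ 2) * ‖Ap‖ ^ 2 := by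
  simp only [Complex.sq_norm, Complex.normSq_apply, Complex.sub_re,
    Complex.sub_im, Complex.mul_re, Complex.mul_im, Complex.conj_re, Complex.conj_im]
  ring

lemma summable_norm_of_sumsTo {S : Set ℂ} (hS : S.Finite) {e : ℕ → ℂ} {φ : ℂ → ℂ}
    (h : SumsTo S e φ) {z : ℂ} (hz : ‖z‖ < 1) :
    Summable (fun n => ‖e n * z ^ n‖) := by
  have hz0 : 0 ≤ ‖z‖ := norm_nonneg z
  obtain ⟨r, hr0, hzr, hr1⟩ : ∃ r : ℝ, 0 < r ∧ ‖z‖ < r ∧ r < 1 :=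
    ⟨(1 + ‖z‖) / 2, by positivity, by linarith, by linarith⟩
  obtain ⟨C, hC0, hC⟩ := growth hS h hr0 hr1
  have hgsum : Summable (fun n => C * (‖z‖ / r) ^ n) := by
    apply Summable.mul_left
    apply summable_geometric_of_lt_one (by positivity)
    rw [div_lt_one hr0]; exact hzr
  refine Summable.of_nonneg_of_le (fun n => norm_nonneg _) (fun n => ?_) hgsum
  rw [norm_mul, norm_pow]
  calc ‖e n‖ * ‖z‖ ^ n ≤ C / r ^ n * ‖z‖ ^ n :=
        mul_le_mul_of_nonneg_right (hC n) (pow_nonneg hz0 n)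
    _ = C * (‖z‖ / r) ^ n := by rw [div_pow]; ring

lemma sumsTo_geo {S : Set ℂ} (hS : S.Finite) {e : ℕ → ℂ} {φ : ℂ → ℂ} (h : SumsTo S e φ)
    {α : ℂ} (hα : ‖α‖ < 1) :
    SumsTo S (geo α e) (fun z => φ z / (1 - α * z)) := by
  intro z hz hzS
  have hαz : ‖α * z‖ < 1 := by
    calc ‖α * z‖ = ‖α‖ * ‖z‖ := norm_mul _ _
      _ ≤ ‖α‖ * 1 := mul_le_mul_of_nonneg_left hz.le (norm_nonneg _)
      _ < 1 := by simpa using hα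
  have hf : Summable (fun n => ‖e n * z ^ n‖) := summable_norm_of_sumsTo hS h hz
  have hg : Summable (fun n => ‖(α * z) ^ n‖) := by
    simpa [norm_pow] using summable_geometric_of_lt_one (norm_nonneg (α*z)) hαz
  have hgs : HasSum (fun n => (α * z) ^ n) (1 - α * z)⁻¹ := hasSum_geometric_of_norm_lt_one hαz
  have hprod := tsum_mul_tsum_eq_tsum_sum_range_of_summable_norm hf hg
  rw [(h z hz hzS).tsum_eq, hgs.tsum_eq] at hprod
  have hsumm : Summable (fun n => ∑ k ∈ range (n + 1), (e k * z ^ k) * (α * z) ^ (n - k)) :=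
    (summable_norm_sum_mul_range_of_summable_norm hf hg).of_norm
  have key : (fun n => geo α e n * z ^ n)
      = fun n => ∑ k ∈ range (n + 1), (e k * z ^ k) * (α * z) ^ (n - k) := by
    funext n
    rw [geo, Finset.sum_mul]
    apply Finset.sum_congr rfl
    intro j hj
    rw [Finset.mem_range] at hj
    have hzn : (z : ℂ) ^ n = z ^ j * z ^ (n - j) := by
      rw [← pow_add]; congr 1; omega
    rw [mul_pow, hzn]; ring
  have hfin : HasSum (fun n => ∑ k ∈ range (n + 1), (e k * z ^ k) * (α * z) ^ (n - k))
      (φ z * (1 - α * z)⁻¹) := by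
    rw [hprod]; exact hsumm.hasSum
  simp only [div_eq_mul_inv]
  rw [key]; exact hfin

lemma one_sub_ne {α z : ℂ} (hα : ‖α‖ < 1) (hz : ‖z‖ < 1) :
    1 - (starRingEnd ℂ) α * z ≠ 0 := by
  intro h
  have h1 : ‖(starRingEnd ℂ) α * z‖ < 1 := by
    rw [norm_mul, RCLike.norm_conj]
    calc ‖α‖ * ‖z‖ ≤ ‖α‖ * 1 := mul_le_mul_of_nonneg_left hz.le (norm_nonneg _)
      _ < 1 := by simpa using hα
  have : (1:ℂ) = (starRingEnd ℂ) α * z := by linear_combination h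
  rw [← this] at h1
  simp at h1

lemma sumsTo_mstep {S : Set ℂ} (hS : S.Finite) {e : ℕ → ℂ} {φ : ℂ → ℂ} (h : SumsTo S e φ)
    {α : ℂ} (hα : ‖α‖ < 1) :
    SumsTo S (mstep α e) (fun z => blas α z * φ z) := by
  have hαc : ‖(starRingEnd ℂ) α‖ < 1 := by rwa [RCLike.norm_conj]
  have hA : SumsTo S (geo ((starRingEnd ℂ) α) e)
      (fun z => φ z / (1 - (starRingEnd ℂ) α * z)) := sumsTo_geo hS h hαc
  intro z hz hzS
  have h1 := (sumsTo_shf hA z hz hzS).sub ((hA z hz hzS).mul_left α)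
  have h2 : (fun n => shf (geo ((starRingEnd ℂ) α) e) n * z ^ n
      - α * (geo ((starRingEnd ℂ) α) e n * z ^ n))
      = fun n => mstep α e n * z ^ n := by
    funext n; rw [mstep]; ring
  rw [h2] at h1
  have hne := one_sub_ne hα hz
  have hval : blas α z * φ z = z * (φ z / (1 - (starRingEnd ℂ) α * z))
      - α * (φ z / (1 - (starRingEnd ℂ) α * z)) := by
    rw [blas]; ring
  show HasSum (fun n => mstep α e n * z ^ n) (blas α z * φ z)
  rw [hval]; exact h1

lemma A_rep {α : ℂ} (A : ℕ → ℂ) (n : ℕ) : ∀ j : ℕ,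
    A n = (∑ i ∈ range j, α ^ i * (shf A (n + 1 + i) - α * A (n + 1 + i)))
      + α ^ j * A (n + j) := by
  intro j
  induction j with
  | zero => simp
  | succ j ih =>
    rw [Finset.sum_range_succ]
    have hc : shf A (n + 1 + j) - α * A (n + 1 + j) = A (n + j) - α * A (n + j + 1) := by
      have : n + 1 + j = (n + j) + 1 := by omega
      rw [this]; rfl
    have hAnj : A (n + j) = (shf A (n + 1 + j) - α * A (n + 1 + j)) + α * A (n + j + 1) := by
      rw [hc]; ring
    calc A n = (∑ i ∈ range j, α ^ i * (shf A (n + 1 + i) - α * A (n + 1 + i)))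
          + α ^ j * A (n + j) := ih
      _ = _ := by
          rw [hAnj]
          have : n + (j + 1) = n + j + 1 := by omega
          rw [this, pow_succ]
          ring

lemma A_tendsto {α : ℂ} (hα : ‖α‖ < 1) (A : ℕ → ℂ)
    (hgrow : ∀ r : ℝ, 0 < r → r < 1 → ∃ C, 0 ≤ C ∧ ∀ n, ‖A n‖ ≤ C / r ^ n)
    (hc0 : Tendsto (fun n => shf A n - α * A n) atTop (nhds 0)) :
    Tendsto A atTop (nhds 0) := by
  have hα0 : 0 ≤ ‖α‖ := norm_nonneg α
  have h1α : 0 < 1 - ‖α‖ := by linarith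
  obtain ⟨r, hαr, hr1⟩ : ∃ r : ℝ, ‖α‖ < r ∧ r < 1 :=
    ⟨(1 + ‖α‖) / 2, by linarith, by linarith⟩
  have hr0 : 0 < r := hα0.trans_lt hαr
  obtain ⟨C, hC0, hC⟩ := hgrow r hr0 hr1
  rw [NormedAddCommGroup.tendsto_nhds_zero]
  intro ε hε
  set ε' := ε * (1 - ‖α‖) / 2 with hε'
  have hε'0 : 0 < ε' := by positivity
  have hev : ∀ᶠ t in atTop, ‖shf A t - α * A t‖ ≤ ε' := by
    have := (NormedAddCommGroup.tendsto_nhds_zero.mp hc0) ε' hε'0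
    filter_upwards [this] with t ht using by simpa using ht.le
  obtain ⟨N, hN⟩ := eventually_atTop.mp hev
  rw [eventually_atTop]
  refine ⟨N, fun n hn => ?_⟩
  have hbound : ∀ j : ℕ, ‖A n‖ ≤ ε' * (1 - ‖α‖)⁻¹ + (C / r ^ n) * (‖α‖ / r) ^ j := by
    intro j
    have := A_rep (α := α) A n j
    have h2 : ‖A n‖ ≤ (∑ i ∈ range j, ‖α‖ ^ i * ‖shf A (n + 1 + i) - α * A (n + 1 + i)‖)
        + ‖α‖ ^ j * ‖A (n + j)‖ := by
      rw [this]
      refine (norm_add_le _ _).trans (add_le_add ?_ ?_)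
      · refine (norm_sum_le _ _).trans (Finset.sum_le_sum fun i _ => ?_)
        rw [norm_mul, norm_pow]
      · rw [norm_mul, norm_pow]
    refine h2.trans (add_le_add ?_ ?_)
    · calc ∑ i ∈ range j, ‖α‖ ^ i * ‖shf A (n + 1 + i) - α * A (n + 1 + i)‖
          ≤ ∑ i ∈ range j, ‖α‖ ^ i * ε' := by
            refine Finset.sum_le_sum fun i _ => ?_
            exact mul_le_mul_of_nonneg_left (hN _ (by omega)) (pow_nonneg hα0 i)
        _ = (∑ i ∈ range j, ‖α‖ ^ i) * ε' := by rw [Finset.sum_mul]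
        _ ≤ (1 - ‖α‖)⁻¹ * ε' := by
            refine mul_le_mul_of_nonneg_right ?_ hε'0.le
            refine (Summable.sum_le_tsum (L := SummationFilter.unconditional ℕ) (range j) (fun i _ => by positivity) ?_).trans_eq ?_
            · exact summable_geometric_of_lt_one hα0 hα
            · exact tsum_geometric_of_lt_one hα0 hα
        _ = ε' * (1 - ‖α‖)⁻¹ := mul_comm _ _
    · calc ‖α‖ ^ j * ‖A (n + j)‖ ≤ ‖α‖ ^ j * (C / r ^ (n + j)) :=
            mul_le_mul_of_nonneg_left (hC _) (pow_nonneg hα0 j)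
        _ = (C / r ^ n) * (‖α‖ / r) ^ j := by
            rw [pow_add, div_pow]
            field_simp
  have hlim : Tendsto (fun j => ε' * (1 - ‖α‖)⁻¹ + (C / r ^ n) * (‖α‖ / r) ^ j) atTop
      (nhds (ε' * (1 - ‖α‖)⁻¹ + (C / r ^ n) * 0)) := by
    refine tendsto_const_nhds.add (Tendsto.const_mul _ ?_)
    apply tendsto_pow_atTop_nhds_zero_of_lt_one (by positivity)
    rw [div_lt_one hr0]; exact hαr
  have hle : ‖A n‖ ≤ ε' * (1 - ‖α‖)⁻¹ + (C / r ^ n) * 0 :=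
    ge_of_tendsto hlim (Eventually.of_forall hbound)
  rw [mul_zero, add_zero] at hle
  have hlt : ε' * (1 - ‖α‖)⁻¹ < ε := by
    rw [← div_eq_mul_inv, div_lt_iff₀ h1α]
    have : 0 < ε * (1 - ‖α‖) := by positivity
    rw [hε']; linarith
  exact hle.trans_lt hlt

lemma tails {α : ℂ} (hα : ‖α‖ < 1) (A : ℕ → ℂ)
    (hA0 : Tendsto A atTop (nhds 0)) (k : ℕ) :
    T k (fun n => A n - (starRingEnd ℂ) α * shf A n) ≤ T k (fun n => shf A n - α * A n) := by
  set β : ℝ := 1 - ‖α‖ ^ 2 with hβ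
  have hβ0 : 0 ≤ β := by
    have h2 : ‖α‖ ^ 2 < 1 := by nlinarith [norm_nonneg α]
    rw [hβ]; linarith
  set a : ℕ → ℂ := fun n => A n - (starRingEnd ℂ) α * shf A n with ha
  set c : ℕ → ℂ := fun n => shf A n - α * A n with hc
  have P : ∀ L, (∑ i ∈ range L, ‖a (i + k)‖ ^ 2) + β * ‖shf A k‖ ^ 2
      = (∑ i ∈ range L, ‖c (i + k)‖ ^ 2) + β * ‖shf A (k + L)‖ ^ 2 := by
    intro L
    induction L with
    | zero => simp
    | succ L ih =>
      rw [Finset.sum_range_succ, Finset.sum_range_succ]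
      have hk : ‖c (L + k)‖ ^ 2 + β * ‖A (L + k)‖ ^ 2
          = ‖a (L + k)‖ ^ 2 + β * ‖shf A (L + k)‖ ^ 2 := key_id α (A (L + k)) (shf A (L + k))
      have hsh : shf A (k + (L + 1)) = A (L + k) := by
        have : k + (L + 1) = (L + k) + 1 := by omega
        rw [this]; rfl
      have hsh2 : shf A (k + L) = shf A (L + k) := by rw [Nat.add_comm]
      rw [hsh]
      rw [hsh2] at ih
      nlinarith [ih, hk]
  rw [T, T]
  refine ENNReal.tsum_le_of_sum_range_le fun R => ?_
  have hmain : ∀ L, R ≤ L →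
      (∑ i ∈ range R, ENNReal.ofReal (‖a (i + k)‖ ^ 2))
        ≤ (∑' n, ENNReal.ofReal (‖c (n + k)‖ ^ 2)) + ENNReal.ofReal (β * ‖shf A (k + L)‖ ^ 2) := by
    intro L hRL
    have h1 : (∑ i ∈ range R, ‖a (i + k)‖ ^ 2) ≤ (∑ i ∈ range L, ‖c (i + k)‖ ^ 2)
        + β * ‖shf A (k + L)‖ ^ 2 := by
      have hmono : (∑ i ∈ range R, ‖a (i + k)‖ ^ 2) ≤ (∑ i ∈ range L, ‖a (i + k)‖ ^ 2) :=
        Finset.sum_le_sum_of_subset_of_nonneg (Finset.range_subset_range.mpr hRL)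
          (fun i _ _ => by positivity)
      nlinarith [P L, mul_nonneg hβ0 (sq_nonneg ‖shf A k‖), hmono]
    calc (∑ i ∈ range R, ENNReal.ofReal (‖a (i + k)‖ ^ 2))
        = ENNReal.ofReal (∑ i ∈ range R, ‖a (i + k)‖ ^ 2) :=
          (ENNReal.ofReal_sum_of_nonneg fun i _ => by positivity).symm
      _ ≤ ENNReal.ofReal ((∑ i ∈ range L, ‖c (i + k)‖ ^ 2) + β * ‖shf A (k + L)‖ ^ 2) :=
          ENNReal.ofReal_le_ofReal h1
      _ ≤ ENNReal.ofReal (∑ i ∈ range L, ‖c (i + k)‖ ^ 2)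
            + ENNReal.ofReal (β * ‖shf A (k + L)‖ ^ 2) := ENNReal.ofReal_add_le
      _ ≤ (∑' n, ENNReal.ofReal (‖c (n + k)‖ ^ 2)) + ENNReal.ofReal (β * ‖shf A (k + L)‖ ^ 2) := by
          refine add_le_add_left ?_ _
          rw [ENNReal.ofReal_sum_of_nonneg fun i _ => by positivity]
          exact ENNReal.sum_le_tsum _
  have hshlim : Tendsto (fun L => ENNReal.ofReal (β * ‖shf A (k + L)‖ ^ 2)) atTop (nhds 0) := by
    have h1 : Tendsto (fun L : ℕ => shf A (k + L)) atTop (nhds 0) := by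
      have h2 : Tendsto (fun L : ℕ => shf A L) atTop (nhds 0) := by
        rw [← Filter.tendsto_add_atTop_iff_nat 1]
        simpa [shf] using hA0
      have := (Filter.tendsto_add_atTop_iff_nat (f := fun L => shf A L) k).mpr h2
      simpa [Nat.add_comm] using this
    have h2 : Tendsto (fun L => β * ‖shf A (k + L)‖ ^ 2) atTop (nhds 0) := by
      simpa using (h1.norm.pow 2).const_mul β
    have := ENNReal.tendsto_ofReal h2
    simpa using this
  have hfinal : Tendsto (fun L => (∑' n, ENNReal.ofReal (‖c (n + k)‖ ^ 2))
      + ENNReal.ofReal (β * ‖shf A (k + L)‖ ^ 2)) atTop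
      (nhds ((∑' n, ENNReal.ofReal (‖c (n + k)‖ ^ 2)) + 0)) :=
    tendsto_const_nhds.add hshlim
  rw [add_zero] at hfinal
  exact ge_of_tendsto hfinal (eventually_atTop.mpr ⟨R, hmain⟩)

lemma coeff_zero {S : Set ℂ} (hS : S.Finite) {d : ℕ → ℂ}
    (h : SumsTo S d (fun _ => 0)) : d 0 = 0 := by
  obtain ⟨C, hC0, hC'⟩ := growth2 hS h
  have key : ∀ ε : ℝ, 0 < ε → ε ≤ 1/4 → ‖d 0‖ ≤ 4 * C * ε := by
    intro ε hε hε4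
    obtain ⟨t, ht0, htε, htS⟩ := exists_real_avoid S hS (a := 0) (b := ε) hε
    have ht4 : t ≤ 1/4 := le_of_lt (lt_of_lt_of_le htε hε4)
    have h2t : 2 * t < 1 := by linarith
    have h2t0 : (0:ℝ) ≤ 2 * t := by linarith
    have hs : HasSum (fun n => d n * (t:ℂ) ^ n) 0 := h t (norm_real_lt ht0 (by linarith)) htS
    have hsummable := hs.summable
    have h0eq : (0 : ℂ) = d 0 * (t:ℂ) ^ 0 + ∑' n, d (n+1) * (t:ℂ) ^ (n+1) := by
      rw [← hs.tsum_eq]; exact Summable.tsum_eq_zero_add hsummable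
    have hd0 : ‖d 0‖ = ‖∑' n, d (n+1) * (t:ℂ) ^ (n+1)‖ := by
      have : d 0 = -∑' n, d (n+1) * (t:ℂ) ^ (n+1) := by
        have := h0eq; simp at this ⊢; linear_combination -this
      rw [this, norm_neg]
    have hnorms : ∀ n, ‖d (n+1) * (t:ℂ) ^ (n+1)‖ ≤ (C * (2*t)) * (2*t) ^ n := by
      intro n
      rw [norm_mul, norm_pow, Complex.norm_real, Real.norm_eq_abs, abs_of_pos ht0]
      calc ‖d (n+1)‖ * t ^ (n+1) ≤ (C * 2 ^ (n+1)) * t ^ (n+1) :=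
            mul_le_mul_of_nonneg_right (hC' _) (pow_nonneg ht0.le _)
        _ = (C * (2*t)) * (2*t) ^ n := by rw [mul_pow]; ring
    have hgeo : Summable (fun n : ℕ => (C * (2*t)) * (2*t) ^ n) :=
      (summable_geometric_of_lt_one h2t0 h2t).mul_left _
    have hsn : Summable (fun n => ‖d (n+1) * (t:ℂ) ^ (n+1)‖) :=
      Summable.of_nonneg_of_le (fun n => norm_nonneg _) hnorms hgeo
    calc ‖d 0‖ ≤ ∑' n, ‖d (n+1) * (t:ℂ) ^ (n+1)‖ := by
          rw [hd0]; exact norm_tsum_le_tsum_norm hsn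
      _ ≤ ∑' n, (C * (2*t)) * (2*t) ^ n := Summable.tsum_le_tsum hnorms hsn hgeo
      _ = (C * (2*t)) * (1 - 2*t)⁻¹ := by
          rw [tsum_mul_left, tsum_geometric_of_lt_one h2t0 h2t]
      _ ≤ (C * (2*t)) * 2 := by
          refine mul_le_mul_of_nonneg_left ?_ (by positivity)
          have h1 : (0:ℝ) < 1/2 := by norm_num
          have h2 : (1:ℝ)/2 ≤ 1 - 2*t := by linarith
          have := inv_anti₀ h1 h2
          simpa using this.trans_eq (by norm_num)
      _ = 4 * C * t := by ring
      _ ≤ 4 * C * ε := by nlinarith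
  by_contra hne
  have hpos : 0 < ‖d 0‖ := norm_pos_iff.mpr hne
  set ε := min (1/4) (‖d 0‖ / (8 * C + 1)) with hε
  have hεpos : 0 < ε := lt_min (by norm_num) (by positivity)
  have h1 := key ε hεpos (min_le_left _ _)
  have h2 : ε ≤ ‖d 0‖ / (8 * C + 1) := min_le_right _ _
  have h3 : 4 * C * ε ≤ 4 * C * (‖d 0‖ / (8 * C + 1)) := by
    apply mul_le_mul_of_nonneg_left h2 (by positivity)
  have h4 : 4 * C * (‖d 0‖ / (8 * C + 1)) < ‖d 0‖ := by
    have he : 4 * C * (‖d 0‖ / (8 * C + 1)) = ‖d 0‖ * (4 * C / (8 * C + 1)) := by ring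
    rw [he]
    have hlt : 4 * C / (8 * C + 1) < 1 := by
      rw [div_lt_one (by positivity)]; linarith
    exact mul_lt_of_lt_one_right hpos hlt
  linarith

lemma coeff_all {S : Set ℂ} (hS : S.Finite) (h0 : (0 : ℂ) ∈ S) {d : ℕ → ℂ}
    (h : SumsTo S d (fun _ => 0)) : ∀ n, d n = 0 := by
  intro n
  induction n generalizing d with
  | zero => exact coeff_zero hS h
  | succ n ih =>
    have hd0 : d 0 = 0 := coeff_zero hS h
    have hshift : SumsTo S (fun n => d (n + 1)) (fun _ => 0) := by
      intro z hz hzS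
      have hz0 : z ≠ 0 := fun hzz => hzS (hzz ▸ h0)
      have h1 : HasSum (fun n => d n * z ^ n) 0 := h z hz hzS
      have h2 : HasSum (fun n => d (n + 1) * z ^ (n + 1)) 0 := by
        refine (hasSum_nat_add_iff (f := fun n => d n * z ^ n) 1).mpr ?_
        simpa [hd0] using h1
      have h3 := h2.mul_right z⁻¹
      rw [zero_mul] at h3
      show HasSum (fun n => d (n + 1) * z ^ n) (0:ℂ)
      have hfun : (fun n => d (n + 1) * z ^ n) = fun n => d (n + 1) * z ^ (n + 1) * z⁻¹ := by
        funext n; rw [pow_succ, mul_assoc, mul_assoc, mul_inv_cancel₀ hz0, mul_one]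
      rw [hfun]; exact h3
    exact ih hshift

lemma sumsTo_unique {S : Set ℂ} (hS : S.Finite) {e e' : ℕ → ℂ} {φ : ℂ → ℂ}
    (h1 : SumsTo S e φ) (h2 : SumsTo S e' φ) : e = e' := by
  funext n
  have hS' : (S ∪ {0}).Finite := hS.union (Set.finite_singleton 0)
  have h0 : (0:ℂ) ∈ S ∪ {0} := Or.inr rfl
  have hdiff : SumsTo (S ∪ {0}) (fun n => e n - e' n) (fun _ => 0) := by
    intro z hz hzS
    have hzS' : z ∉ S := fun hm => hzS (Or.inl hm)
    have hh := (h1 z hz hzS').sub (h2 z hz hzS')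
    rw [sub_self] at hh
    show HasSum (fun n => (e n - e' n) * z ^ n) (0:ℂ)
    have hfun : (fun n => (e n - e' n) * z ^ n) = fun n => e n * z ^ n - e' n * z ^ n := by
      funext n; ring
    rw [hfun]; exact hh
  have := coeff_all hS' h0 hdiff n
  exact sub_eq_zero.mp this

lemma chain : ∀ (p : ℕ) (β : ℕ → ℂ), (∀ i, i < p → ‖β i‖ < 1) →
    ∀ (S : Set ℂ), S.Finite → ∀ (a : ℕ → ℂ) (φ : ℂ → ℂ), SumsTo S a φ →
    ∀ (c : ℕ → ℂ), SumsTo S c (fun z => (∏ i ∈ range p, blas (β i) z) * φ z) →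
    Tendsto c atTop (nhds 0) →
    Tendsto a atTop (nhds 0) ∧ ∀ k, T k a ≤ T k c := by
  intro p
  induction p with
  | zero =>
    intro β hβ S hS a φ ha c hc hc0
    have hc' : SumsTo S c φ := by
      intro z hz hzS
      simpa using hc z hz hzS
    have heq : a = c := sumsTo_unique hS ha hc'
    exact ⟨heq ▸ hc0, fun k => heq ▸ le_refl _⟩
  | succ p ih =>
    intro β hβ S hS a φ ha c hc hc0
    have hβp : ‖β p‖ < 1 := hβ p (Nat.lt_succ_self p)
    set A := geo ((starRingEnd ℂ) (β p)) a with hA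
    have ha' : SumsTo S (mstep (β p) a) (fun z => blas (β p) z * φ z) :=
      sumsTo_mstep hS ha hβp
    have hc' : SumsTo S c (fun z => (∏ i ∈ range p, blas (β i) z) * (blas (β p) z * φ z)) := by
      intro z hz hzS
      have hh := hc z hz hzS
      show HasSum _ ((∏ i ∈ range p, blas (β i) z) * (blas (β p) z * φ z))
      rw [← mul_assoc, ← Finset.prod_range_succ]
      exact hh
    obtain ⟨ha'0, htl⟩ := ih β (fun i hi => hβ i (hi.trans (Nat.lt_succ_self p))) S hS
      (mstep (β p) a) _ ha' c hc' hc0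
    have hαc : ‖(starRingEnd ℂ) (β p)‖ < 1 := by rwa [RCLike.norm_conj]
    have hAsum : SumsTo S A (fun z => φ z / (1 - (starRingEnd ℂ) (β p) * z)) :=
      sumsTo_geo hS ha hαc
    have hgrow : ∀ r : ℝ, 0 < r → r < 1 → ∃ C, 0 ≤ C ∧ ∀ n, ‖A n‖ ≤ C / r ^ n :=
      fun r h0 h1 => growth hS hAsum h0 h1
    have hc0' : Tendsto (fun n => shf A n - β p * A n) atTop (nhds 0) := ha'0
    have hA0 : Tendsto A atTop (nhds 0) := A_tendsto hβp A hgrow hc0'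
    have haeq : ∀ n, a n = A n - (starRingEnd ℂ) (β p) * shf A n :=
      fun n => e_eq_geo _ a n
    constructor
    · have hsh : Tendsto (fun n => shf A n) atTop (nhds 0) := by
        rw [← Filter.tendsto_add_atTop_iff_nat 1]
        simpa [shf] using hA0
      have hten : Tendsto (fun n => A n - (starRingEnd ℂ) (β p) * shf A n) atTop (nhds 0) := by
        simpa using hA0.sub (hsh.const_mul ((starRingEnd ℂ) (β p)))
      have hfun : a = fun n => A n - (starRingEnd ℂ) (β p) * shf A n := funext haeq
      rw [hfun]
      exact hten
    · intro k
      have h1 : T k a = T k (fun n => A n - (starRingEnd ℂ) (β p) * shf A n) := T_congr haeq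
      have h2 : T k (mstep (β p) a) = T k (fun n => shf A n - β p * A n) :=
        T_congr (fun n => rfl)
      rw [h1]
      exact (tails hβp A hA0 k).trans (h2 ▸ htl k)

lemma ynorm_eq (γ : ℕ → ℝ) (hmono : Monotone γ)
    (hconv : ∀ n, γ (n + 1) - γ n ≤ γ (n + 2) - γ (n + 1)) (a : ℕ → ℂ) :
    ynorm2e γ a = ENNReal.ofReal (γ 1 - γ 0) * T 0 a
      + ∑' j, ENNReal.ofReal ((γ (j + 2) - γ (j + 1)) - (γ (j + 1) - γ j)) * T (j + 1) a := by
  set Γ : ℕ → ℝ := fun n => γ (n + 1) - γ n with hΓ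
  have hΓ0 : ∀ n, 0 ≤ Γ n := fun n => sub_nonneg.mpr (hmono (Nat.le_succ n))
  set δ : ℕ → ENNReal := fun j => ENNReal.ofReal (Γ (j + 1) - Γ j) with hδ
  have hδ0 : ∀ j, 0 ≤ Γ (j + 1) - Γ j := fun j => sub_nonneg.mpr (hconv j)
  set X : ℕ → ENNReal := fun n => ENNReal.ofReal (‖a n‖ ^ 2) with hX
  have hsplit : ∀ n, ENNReal.ofReal (Γ n) = ENNReal.ofReal (Γ 0) + ∑ j ∈ range n, δ j := by
    intro n
    induction n with
    | zero => simp
    | succ n ih =>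
      have : Γ (n + 1) = Γ n + (Γ (n + 1) - Γ n) := by ring
      rw [this, ENNReal.ofReal_add (hΓ0 n) (hδ0 n), ih, Finset.sum_range_succ, add_assoc]
  have hmain : ynorm2e γ a = ∑' n, (ENNReal.ofReal (Γ 0) + ∑ j ∈ range n, δ j) * X n := by
    rw [ynorm2e]
    congr 1
    funext n
    rw [← hsplit n, ← ENNReal.ofReal_mul (hΓ0 n)]
  rw [hmain]
  have hdistrib : ∀ n, (ENNReal.ofReal (Γ 0) + ∑ j ∈ range n, δ j) * X n
      = ENNReal.ofReal (Γ 0) * X n + ∑ j ∈ range n, δ j * X n := by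
    intro n; rw [add_mul, Finset.sum_mul]
  simp only [hdistrib]
  rw [ENNReal.tsum_add]
  congr 1
  · rw [ENNReal.tsum_mul_left]
    congr 1
  · have h1 : ∀ n, (∑ j ∈ range n, δ j * X n) = ∑' j, (if j < n then δ j * X n else 0) := by
      intro n
      rw [tsum_eq_sum (s := range n) (fun j hj => if_neg (by simpa using hj))]
      exact Finset.sum_congr rfl fun j hj => (if_pos (by simpa using hj)).symm
    simp only [h1]
    rw [ENNReal.tsum_comm]
    congr 1
    funext j
    have h2 := Summable.sum_add_tsum_nat_add' (f := fun n => if j < n then δ j * X n else 0)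
      (k := j + 1) ENNReal.summable
    rw [← h2]
    have h3 : ∑ n ∈ range (j + 1), (if j < n then δ j * X n else 0) = 0 := by
      apply Finset.sum_eq_zero
      intro n hn
      rw [Finset.mem_range] at hn
      exact if_neg (by omega)
    rw [h3, zero_add]
    have h4 : ∀ n : ℕ, (if j < n + (j + 1) then δ j * X (n + (j + 1)) else 0)
        = δ j * X (n + (j + 1)) := fun n => if_pos (by omega)
    simp only [h4]
    rw [ENNReal.tsum_mul_left]
    rfl

lemma ynorm_le (γ : ℕ → ℝ) (hmono : Monotone γ)
    (hconv : ∀ n, γ (n + 1) - γ n ≤ γ (n + 2) - γ (n + 1)) (a c : ℕ → ℂ)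
    (h : ∀ k, T k a ≤ T k c) : ynorm2e γ a ≤ ynorm2e γ c := by
  rw [ynorm_eq γ hmono hconv a, ynorm_eq γ hmono hconv c]
  refine add_le_add (mul_le_mul_right (h 0) _) (ENNReal.tsum_le_tsum fun j => ?_)
  exact mul_le_mul_right (h (j + 1)) _

lemma T_zero_term (e : ℕ → ℂ) (n : ℕ) : ENNReal.ofReal (‖e n‖ ^ 2) ≤ T 0 e := by
  have := ENNReal.le_tsum (f := fun n => ENNReal.ofReal (‖e (n + 0)‖ ^ 2)) n
  simpa [T] using this

lemma T_top {e : ℕ → ℂ} (h : T 0 e = ⊤) (t : ℕ) : T t e = ⊤ := by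
  have h0 : ∑' n, ENNReal.ofReal (‖e n‖ ^ 2) = ⊤ := by simpa [T] using h
  have hsplit := Summable.sum_add_tsum_nat_add' (f := fun n => ENNReal.ofReal (‖e n‖ ^ 2))
    (k := t) ENNReal.summable
  rw [h0] at hsplit
  by_contra hne
  have hfin : (∑ i ∈ range t, ENNReal.ofReal (‖e i‖ ^ 2)) ≠ ⊤ := by
    refine (ENNReal.sum_lt_top.mpr fun i _ => ?_).ne
    exact ENNReal.ofReal_lt_top
  exact (ENNReal.add_ne_top.mpr ⟨hfin, hne⟩) hsplit

lemma tendsto_norm_f_zero {f : ℕ → ℂ} (hH2 : Summable fun n => ‖f n‖ ^ 2) :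
    Tendsto (fun n => ‖f n‖) atTop (nhds 0) := by
  have h2 := hH2.tendsto_atTop_zero
  have h3 := h2.sqrt
  rw [Real.sqrt_zero] at h3
  refine h3.congr fun n => ?_
  rw [Real.sqrt_sq (norm_nonneg _)]

lemma tail_est {e : ℕ → ℂ} {D : ℝ} (hD : ∀ n, ‖e n‖ ≤ D * 2 ^ n) {t : ℝ} (ht0 : 0 < t)
    (ht4 : t ≤ 1/4) {s : ℂ} (hs : HasSum (fun n => e n * (t:ℂ) ^ n) s) :
    ‖s - e 0‖ ≤ 4 * D * t := by
  have hD0 : 0 ≤ D := by have := (norm_nonneg (e 0)).trans (by simpa using hD 0); linarith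
  have h2t : 2 * t < 1 := by linarith
  have h2t0 : (0:ℝ) ≤ 2 * t := by linarith
  have htail : s - e 0 = ∑' n, e (n + 1) * (t:ℂ) ^ (n + 1) := by
    have h1 := Summable.tsum_eq_zero_add hs.summable
    rw [hs.tsum_eq] at h1
    simp only [pow_zero, mul_one] at h1
    linear_combination h1
  have hnorms : ∀ n, ‖e (n + 1) * (t:ℂ) ^ (n + 1)‖ ≤ (D * (2 * t)) * (2 * t) ^ n := by
    intro n
    rw [norm_mul, norm_pow, Complex.norm_real, Real.norm_eq_abs, abs_of_pos ht0]
    calc ‖e (n + 1)‖ * t ^ (n + 1) ≤ (D * 2 ^ (n + 1)) * t ^ (n + 1) :=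
          mul_le_mul_of_nonneg_right (hD _) (pow_nonneg ht0.le _)
      _ = (D * (2 * t)) * (2 * t) ^ n := by rw [mul_pow]; ring
  have hgeo : Summable (fun n : ℕ => (D * (2 * t)) * (2 * t) ^ n) :=
    (summable_geometric_of_lt_one h2t0 h2t).mul_left _
  have hsn : Summable (fun n => ‖e (n + 1) * (t:ℂ) ^ (n + 1)‖) :=
    Summable.of_nonneg_of_le (fun n => norm_nonneg _) hnorms hgeo
  calc ‖s - e 0‖ ≤ ∑' n, ‖e (n + 1) * (t:ℂ) ^ (n + 1)‖ := by
        rw [htail]; exact norm_tsum_le_tsum_norm hsn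
    _ ≤ ∑' n, (D * (2 * t)) * (2 * t) ^ n := Summable.tsum_le_tsum hnorms hsn hgeo
    _ = (D * (2 * t)) * (1 - 2 * t)⁻¹ := by
        rw [tsum_mul_left, tsum_geometric_of_lt_one h2t0 h2t]
    _ ≤ (D * (2 * t)) * 2 := by
        refine mul_le_mul_of_nonneg_left ?_ (by positivity)
        have h2 : (1:ℝ)/2 ≤ 1 - 2 * t := by linarith
        have := inv_anti₀ (by norm_num : (0:ℝ) < 1/2) h2
        simpa using this.trans_eq (by norm_num)
    _ = 4 * D * t := by ring

lemma coeff_tendsto0 (B C : ℝ) (q : ℕ → ℕ → ℂ) (uu : ℕ → ℂ) (φ : ℕ → ℂ → ℂ) (ψ : ℂ → ℂ)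
    (hB : ∀ N n, ‖q N n‖ ≤ B) (hC : 0 ≤ C) (hCu : ∀ n, ‖uu n‖ ≤ C * 2 ^ n)
    (hq : ∀ N (z : ℂ), ‖z‖ < 1 → z ≠ 0 → HasSum (fun n => q N n * z ^ n) (φ N z))
    (hus : ∀ z : ℂ, ‖z‖ < 1 → z ≠ 0 → HasSum (fun n => uu n * z ^ n) (ψ z))
    (hlim : ∀ z : ℂ, ‖z‖ < 1 → z ≠ 0 → Tendsto (fun N => φ N z) atTop (nhds (ψ z))) :
    Tendsto (fun N => q N 0) atTop (nhds (uu 0)) := by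
  have hB0 : 0 ≤ B := le_trans (norm_nonneg _) (hB 0 0)
  rw [Metric.tendsto_atTop]
  intro ε hε
  set t := min (1/4) (ε / (8 * B + 16 * C + 1)) with htdef
  have ht0 : 0 < t := lt_min (by norm_num) (by positivity)
  have ht4 : t ≤ 1/4 := min_le_left _ _
  have htε : t ≤ ε / (8 * B + 16 * C + 1) := min_le_right _ _
  have ht1 : ‖(t:ℂ)‖ < 1 := norm_real_lt ht0 (by linarith)
  have htne : (t:ℂ) ≠ 0 := by
    simp only [ne_eq, Complex.ofReal_eq_zero]; linarith
  have hterm1 : ∀ N, ‖φ N (t:ℂ) - q N 0‖ ≤ 4 * B * t := fun N =>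
    tail_est (e := q N)
      (fun n => (hB N n).trans (le_mul_of_one_le_right hB0 (one_le_pow₀ (by norm_num))))
      ht0 ht4 (hq N t ht1 htne)
  have hterm3 : ‖ψ (t:ℂ) - uu 0‖ ≤ 4 * C * t :=
    tail_est (e := uu) hCu ht0 ht4 (hus t ht1 htne)
  have hev : ∀ᶠ N in atTop, ‖φ N (t:ℂ) - ψ (t:ℂ)‖ < ε / 4 := by
    have h1 := hlim t ht1 htne
    rw [Metric.tendsto_atTop] at h1
    obtain ⟨N0, hN0⟩ := h1 (ε / 4) (by positivity)
    rw [eventually_atTop]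
    exact ⟨N0, fun N hN => by rw [← dist_eq_norm]; exact hN0 N hN⟩
  obtain ⟨N0, hN0⟩ := eventually_atTop.mp hev
  refine ⟨N0, fun N hN => ?_⟩
  rw [dist_eq_norm]
  have hsum : q N 0 - uu 0 = -(φ N (t:ℂ) - q N 0) + (φ N (t:ℂ) - ψ (t:ℂ)) + (ψ (t:ℂ) - uu 0) := by
    ring
  rw [hsum]
  have hle : ‖-(φ N (t:ℂ) - q N 0) + (φ N (t:ℂ) - ψ (t:ℂ)) + (ψ (t:ℂ) - uu 0)‖
      ≤ ‖φ N (t:ℂ) - q N 0‖ + ‖φ N (t:ℂ) - ψ (t:ℂ)‖ + ‖ψ (t:ℂ) - uu 0‖ := by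
    refine (norm_add_le _ _).trans (add_le_add (((norm_add_le _ _).trans
      (add_le_add (norm_neg _).le (le_refl _)))) (le_refl _))
  have h4 : 4 * B * t + 4 * C * t ≤ ε / 2 := by
    have hpos : (0:ℝ) < 8 * B + 16 * C + 1 := by positivity
    have := mul_le_mul_of_nonneg_left htε (by positivity : (0:ℝ) ≤ 4 * B + 4 * C)
    calc 4 * B * t + 4 * C * t = (4 * B + 4 * C) * t := by ring
      _ ≤ (4 * B + 4 * C) * (ε / (8 * B + 16 * C + 1)) := this
      _ = ε * ((4 * B + 4 * C) / (8 * B + 16 * C + 1)) := by ring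
      _ ≤ ε * (1 / 2) := mul_le_mul_of_nonneg_left
          (by rw [div_le_iff₀ hpos]; linarith) hε.le
      _ = ε / 2 := by ring
  calc ‖-(φ N (t:ℂ) - q N 0) + (φ N (t:ℂ) - ψ (t:ℂ)) + (ψ (t:ℂ) - uu 0)‖
      ≤ ‖φ N (t:ℂ) - q N 0‖ + ‖φ N (t:ℂ) - ψ (t:ℂ)‖ + ‖ψ (t:ℂ) - uu 0‖ := hle
    _ < 4 * B * t + ε / 4 + 4 * C * t := by
        have := hN0 N hN
        have h1 := hterm1 N
        linarith
    _ ≤ ε / 2 + ε / 4 := by linarith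
    _ < ε := by linarith


lemma coeff_tendsto : ∀ (n : ℕ) (B C : ℝ) (q : ℕ → ℕ → ℂ) (uu : ℕ → ℂ)
    (φ : ℕ → ℂ → ℂ) (ψ : ℂ → ℂ),
    (∀ N n, ‖q N n‖ ≤ B) → 0 ≤ C → (∀ n, ‖uu n‖ ≤ C * 2 ^ n) →
    (∀ N (z : ℂ), ‖z‖ < 1 → z ≠ 0 → HasSum (fun n => q N n * z ^ n) (φ N z)) →
    (∀ z : ℂ, ‖z‖ < 1 → z ≠ 0 → HasSum (fun n => uu n * z ^ n) (ψ z)) →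
    (∀ z : ℂ, ‖z‖ < 1 → z ≠ 0 → Tendsto (fun N => φ N z) atTop (nhds (ψ z))) →
    Tendsto (fun N => q N n) atTop (nhds (uu n)) := by
  intro n
  induction n with
  | zero => exact fun B C q uu φ ψ hB hC hCu hq hus hlim =>
      coeff_tendsto0 B C q uu φ ψ hB hC hCu hq hus hlim
  | succ n ih =>
    intro B C q uu φ ψ hB hC hCu hq hus hlim
    have hbase : Tendsto (fun N => q N 0) atTop (nhds (uu 0)) :=
      coeff_tendsto0 B C q uu φ ψ hB hC hCu hq hus hlim
    set q' : ℕ → ℕ → ℂ := fun N j => q N (j + 1) with hq'def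
    set uu' : ℕ → ℂ := fun j => uu (j + 1) with huu'def
    set φ' : ℕ → ℂ → ℂ := fun N z => (φ N z - q N 0) * z⁻¹ with hφ'def
    set ψ' : ℂ → ℂ := fun z => (ψ z - uu 0) * z⁻¹ with hψ'def
    have hshift : ∀ (e : ℕ → ℂ) (s : ℂ) (z : ℂ), ‖z‖ < 1 → z ≠ 0 →
        HasSum (fun n => e n * z ^ n) s →
        HasSum (fun j => e (j + 1) * z ^ j) ((s - e 0) * z⁻¹) := by
      intro e s z hz hz0 hsum
      have h2 : HasSum (fun j => e (j + 1) * z ^ (j + 1)) (s - e 0) := by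
        refine (hasSum_nat_add_iff (f := fun n => e n * z ^ n) 1).mpr ?_
        simpa using hsum
      have h3 := h2.mul_right z⁻¹
      have h4 : (fun j => e (j + 1) * z ^ (j + 1) * z⁻¹) = fun j => e (j + 1) * z ^ j := by
        funext j
        rw [pow_succ]
        field_simp
      rwa [h4] at h3
    have hq2 : ∀ N (z : ℂ), ‖z‖ < 1 → z ≠ 0 → HasSum (fun n => q' N n * z ^ n) (φ' N z) :=
      fun N z hz hz0 => hshift (q N) (φ N z) z hz hz0 (hq N z hz hz0)
    have hus2 : ∀ z : ℂ, ‖z‖ < 1 → z ≠ 0 → HasSum (fun n => uu' n * z ^ n) (ψ' z) :=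
      fun z hz hz0 => hshift uu (ψ z) z hz hz0 (hus z hz hz0)
    have hlim2 : ∀ z : ℂ, ‖z‖ < 1 → z ≠ 0 → Tendsto (fun N => φ' N z) atTop (nhds (ψ' z)) :=
      fun z hz hz0 => ((hlim z hz hz0).sub hbase).mul_const z⁻¹
    have hB2 : ∀ N n, ‖q' N n‖ ≤ B := fun N n => hB N (n + 1)
    have hC2 : ∀ n, ‖uu' n‖ ≤ (2 * C) * 2 ^ n := by
      intro n
      calc ‖uu (n + 1)‖ ≤ C * 2 ^ (n + 1) := hCu (n + 1)
        _ = (2 * C) * 2 ^ n := by rw [pow_succ]; ring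
    exact ih B (2 * C) q' uu' φ' ψ' hB2 (by linarith) hC2 hq2 hus2 hlim2

lemma wex_block {α : ℂ} (hαk : ‖α‖ < 1) (f : ℕ → ℂ) (F : ℂ → ℂ)
    (hf : ∀ z : ℂ, ‖z‖ < 1 → HasSum (fun n => f n * z ^ n) (F z))
    (hf0 : Tendsto (fun n => ‖f n‖) atTop (nhds 0)) (hFα : F α = 0) :
    ∃ wex : ℕ → ℂ, SumsTo {α} wex (fun z => F z / (z - α)) ∧ Tendsto wex atTop (nhds 0) := by
  have hα0 : 0 ≤ ‖α‖ := norm_nonneg α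
  have h1α : 0 < 1 - ‖α‖ := by linarith
  obtain ⟨Bf, hBf⟩ := hf0.bddAbove_range
  have hBf' : ∀ n, ‖f n‖ ≤ Bf := fun n => hBf ⟨n, rfl⟩
  have hBf0 : 0 ≤ Bf := (norm_nonneg _).trans (hBf' 0)
  set wex : ℕ → ℂ := fun n => ∑' j, α ^ j * f (n + 1 + j) with hwex
  have hsummable : ∀ n, Summable (fun j => α ^ j * f (n + 1 + j)) := by
    intro n
    refine Summable.of_norm (Summable.of_nonneg_of_le (fun j => norm_nonneg _)
      (fun j => ?_) ((summable_geometric_of_lt_one hα0 hαk).mul_right Bf))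
    rw [norm_mul, norm_pow]
    exact mul_le_mul_of_nonneg_left (hBf' _) (by positivity)
  -- decay of wex
  have hwex0 : Tendsto wex atTop (nhds 0) := by
    rw [NormedAddCommGroup.tendsto_nhds_zero]
    intro ε hε
    set ε' := ε * (1 - ‖α‖) / 2 with hε'
    have hε'0 : 0 < ε' := by positivity
    have hev := (NormedAddCommGroup.tendsto_nhds_zero.mp (tendsto_norm_zero.comp hf0)) ε' hε'0
    -- simpler: use hf0 directly
    clear hev
    have hev : ∀ᶠ n in atTop, ‖f n‖ ≤ ε' := by
      have h2 := (Metric.tendsto_atTop.mp hf0) ε' hε'0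
      obtain ⟨N, hN⟩ := h2
      rw [eventually_atTop]
      refine ⟨N, fun n hn => ?_⟩
      have := hN n hn
      rw [Real.dist_eq, abs_sub_comm, abs_of_nonpos (by simp [norm_nonneg])] at this
      simp at this ⊢
      linarith [this]
    obtain ⟨N, hN⟩ := eventually_atTop.mp hev
    rw [eventually_atTop]
    refine ⟨N, fun n hn => ?_⟩
    have hb : ∀ j, ‖α ^ j * f (n + 1 + j)‖ ≤ ε' * ‖α‖ ^ j := by
      intro j
      rw [norm_mul, norm_pow]
      rw [mul_comm (ε' : ℝ)]
      exact mul_le_mul_of_nonneg_left (hN _ (by omega)) (by positivity)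
    have hgeo : Summable (fun j : ℕ => ε' * ‖α‖ ^ j) :=
      (summable_geometric_of_lt_one hα0 hαk).mul_left _
    have hsn : Summable fun j => ‖α ^ j * f (n + 1 + j)‖ :=
      Summable.of_nonneg_of_le (fun j => norm_nonneg _) hb hgeo
    calc ‖wex n‖ ≤ ∑' j, ‖α ^ j * f (n + 1 + j)‖ := norm_tsum_le_tsum_norm hsn
      _ ≤ ∑' j, ε' * ‖α‖ ^ j := Summable.tsum_le_tsum hb hsn hgeo
      _ = ε' * (1 - ‖α‖)⁻¹ := by rw [tsum_mul_left, tsum_geometric_of_lt_one hα0 hαk]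
      _ < ε := by
          rw [← div_eq_mul_inv, div_lt_iff₀ h1α, hε']
          have : 0 < ε * (1 - ‖α‖) := by positivity
          linarith
  -- recurrence : shf wex n - α * wex n = f n
  have hFαsum : HasSum (fun j => f j * α ^ j) 0 := by
    have := hf α hαk
    rwa [hFα] at this
  have hkey : ∀ n, shf wex n - α * wex n = f n := by
    intro n
    cases n with
    | zero =>
      have h1 : (0:ℂ) = f 0 * α ^ 0 + ∑' j, f (j + 1) * α ^ (j + 1) := by
        rw [← hFαsum.tsum_eq]
        exact Summable.tsum_eq_zero_add hFαsum.summable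
      have h2 : α * wex 0 = ∑' j, f (j + 1) * α ^ (j + 1) := by
        have hd : wex 0 = ∑' (j : ℕ), α ^ j * f (0 + 1 + j) := rfl
        rw [hd, ← tsum_mul_left]
        congr 1
        funext j
        have harg : 0 + 1 + j = j + 1 := by omega
        rw [harg, pow_succ]
        ring
      show (0:ℂ) - α * wex 0 = f 0
      rw [h2]
      simp only [pow_zero, mul_one] at h1
      linear_combination h1
    | succ n =>
      show wex n - α * wex (n + 1) = f (n + 1)
      have h1 : wex n = f (n + 1) + α * wex (n + 1) := by
        have hd : wex n = ∑' (j : ℕ), α ^ j * f (n + 1 + j) := rfl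
        have h2 := Summable.tsum_eq_zero_add (hsummable n)
        simp only [pow_zero, one_mul] at h2
        have h3 : ∑' (j : ℕ), α ^ (j + 1) * f (n + 1 + (j + 1)) = α * wex (n + 1) := by
          have hd2 : wex (n + 1) = ∑' (j : ℕ), α ^ j * f (n + 1 + 1 + j) := rfl
          rw [hd2, ← tsum_mul_left]
          congr 1
          funext j
          have harg : n + 1 + (j + 1) = n + 1 + 1 + j := by omega
          rw [harg, pow_succ]
          ring
        rw [hd, h2, h3]
      rw [h1]; ring
  -- SumsTo
  refine ⟨wex, ?_, hwex0⟩
  intro z hz hzS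
  have hzα : z ≠ α := by simpa using hzS
  have hwb : ∀ n, ‖wex n‖ ≤ Bf * (1 - ‖α‖)⁻¹ := by
    intro n
    have hb : ∀ j, ‖α ^ j * f (n + 1 + j)‖ ≤ Bf * ‖α‖ ^ j := by
      intro j
      rw [norm_mul, norm_pow, mul_comm Bf]
      exact mul_le_mul_of_nonneg_left (hBf' _) (by positivity)
    have hgeo : Summable (fun j : ℕ => Bf * ‖α‖ ^ j) :=
      (summable_geometric_of_lt_one hα0 hαk).mul_left _
    have hsn : Summable fun j => ‖α ^ j * f (n + 1 + j)‖ :=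
      Summable.of_nonneg_of_le (fun j => norm_nonneg _) hb hgeo
    calc ‖wex n‖ ≤ ∑' j, ‖α ^ j * f (n + 1 + j)‖ := norm_tsum_le_tsum_norm hsn
      _ ≤ ∑' j, Bf * ‖α‖ ^ j := Summable.tsum_le_tsum hb hsn hgeo
      _ = Bf * (1 - ‖α‖)⁻¹ := by rw [tsum_mul_left, tsum_geometric_of_lt_one hα0 hαk]
  have hWsummable : Summable (fun n => wex n * z ^ n) := by
    refine Summable.of_norm (Summable.of_nonneg_of_le (fun n => norm_nonneg _) (fun n => ?_)
      ((summable_geometric_of_lt_one (norm_nonneg z) hz).mul_left (Bf * (1 - ‖α‖)⁻¹)))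
    rw [norm_mul, norm_pow]
    exact mul_le_mul_of_nonneg_right (hwb n) (by positivity)
  have hW := hWsummable.hasSum
  set Wz := ∑' n, wex n * z ^ n with hWz
  have h2 := (hasSum_shf hW).sub (hW.mul_left α)
  have h3 : (fun n => shf wex n * z ^ n - α * (wex n * z ^ n)) = fun n => f n * z ^ n := by
    funext n
    rw [← hkey n]
    ring
  rw [h3] at h2
  have h4 : z * Wz - α * Wz = F z := h2.unique (hf z hz)
  have h5 : Wz = F z / (z - α) := by
    rw [eq_div_iff (sub_ne_zero.mpr hzα)]
    linear_combination h4
  show HasSum (fun n => wex n * z ^ n) (F z / (z - α))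
  rw [← h5]
  exact hW

end Stmt8

open Stmt8 in
/-- Lemma (increasing differences): with `F ∈ X_γ` having zeros `α_1, α_2, …` (ordered by
increasing modulus, `m` finite or infinite), Blaschke decomposition `F = B·G`, partial
decompositions `F_k` (so `F = (∏_{j=1}^k (z-α_j)/(1-ᾱ_j z))·F_k` and `F_k → G`), and
`H_{α_k} = F_k/(1-ᾱ_k z)`: if `γ_{n+1}-γ_n` is monotone increasing then for each `k`,
`‖G/(1-ᾱ_k·)‖_{Y_γ}² ≤ ‖H_{α_k}‖_{Y_γ}² ≤ ‖F/(·-α_k)‖_{Y_γ}²`. -/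
theorem stmt8 (γ : ℕ → ℝ) (hmono : Monotone γ) (h0 : γ 0 = 0)
    (hconv : ∀ n, γ (n + 1) - γ n ≤ γ (n + 2) - γ (n + 1))
    (m : ℕ∞) (α : ℕ → ℂ)
    (hα : ∀ j : ℕ, 1 ≤ j → (j : ℕ∞) ≤ m → ‖α j‖ < 1)
    (hord : ∀ j : ℕ, 1 ≤ j → ((j : ℕ∞) + 1) ≤ m → ‖α j‖ ≤ ‖α (j + 1)‖)
    (F G : ℂ → ℂ) (Fk : ℕ → ℂ → ℂ) (hFk0 : Fk 0 = F)
    (hfac : ∀ k : ℕ, (k : ℕ∞) ≤ m → ∀ z : ℂ, ‖z‖ < 1 →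
      F z = (∏ j ∈ Icc 1 k, (z - α j) / (1 - (starRingEnd ℂ) (α j) * z)) * Fk k z)
    (hG0 : ∀ z : ℂ, ‖z‖ < 1 → G z ≠ 0)
    (hGfin : ∀ mf : ℕ, m = (mf : ℕ∞) → ∀ z : ℂ, ‖z‖ < 1 → Fk mf z = G z)
    (hGinf : m = ⊤ → ∀ z : ℂ, ‖z‖ < 1 →
      Tendsto (fun k => Fk k z) atTop (nhds (G z)))
    (f : ℕ → ℂ) (hf : IsCoeffs f F)
    (hH2 : Summable fun n => ‖f n‖ ^ 2)
    (hX : Summable fun n => γ n * ‖f n‖ ^ 2)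
    (u v w : ℕ → ℕ → ℂ)
    -- `u k` : coefficients of `G(z)/(1-ᾱ_k z)`
    (hu : ∀ k : ℕ, 1 ≤ k → (k : ℕ∞) ≤ m → ∀ z : ℂ, ‖z‖ < 1 →
      HasSum (fun n => u k n * z ^ n) (G z / (1 - (starRingEnd ℂ) (α k) * z)))
    -- `v k` : coefficients of `H_{α_k}(z) = F_k(z)/(1-ᾱ_k z)`
    (hv : ∀ k : ℕ, 1 ≤ k → (k : ℕ∞) ≤ m → ∀ z : ℂ, ‖z‖ < 1 →
      HasSum (fun n => v k n * z ^ n) (Fk k z / (1 - (starRingEnd ℂ) (α k) * z)))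
    -- `w k` : coefficients of `F(z)/(z-α_k)` (singularity removed)
    (hw : ∀ k : ℕ, 1 ≤ k → (k : ℕ∞) ≤ m → ∀ z : ℂ, ‖z‖ < 1 → z ≠ α k →
      HasSum (fun n => w k n * z ^ n) (F z / (z - α k))) :
    ∀ k : ℕ, 1 ≤ k → (k : ℕ∞) ≤ m →
      ynorm2e γ (u k) ≤ ynorm2e γ (v k) ∧ ynorm2e γ (v k) ≤ ynorm2e γ (w k) := by
  classical
  intro k hk1 hkm
  have hcast : ∀ {a b : ℕ}, a ≤ b → ((a:ℕ∞) ≤ (b:ℕ∞)) := fun {a b} h => by exact_mod_cast h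
  have hαk : ‖α k‖ < 1 := hα k hk1 hkm
  -- SumsTo reformulations
  have hVS : SumsTo ∅ (v k) (fun z => Fk k z / (1 - (starRingEnd ℂ) (α k) * z)) :=
    fun z hz _ => hv k hk1 hkm z hz
  have hUS : SumsTo ∅ (u k) (fun z => G z / (1 - (starRingEnd ℂ) (α k) * z)) :=
    fun z hz _ => hu k hk1 hkm z hz
  have hWS : SumsTo {α k} (w k) (fun z => F z / (z - α k)) :=
    fun z hz hzS => hw k hk1 hkm z hz (by simpa using hzS)
  -- F (α k) = 0
  have hFα : F (α k) = 0 := by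
    have h1 := hfac k hkm (α k) hαk
    have h2 : (∏ j ∈ Icc 1 k, ((α k) - α j) / (1 - (starRingEnd ℂ) (α j) * (α k))) = 0 :=
      Finset.prod_eq_zero (Finset.mem_Icc.mpr ⟨hk1, le_refl k⟩) (by simp)
    rw [h1, h2, zero_mul]
  -- decay of w k
  have hf0 : Tendsto (fun n => ‖f n‖) atTop (nhds 0) := tendsto_norm_f_zero hH2
  obtain ⟨wex, hwexS, hwex0⟩ := wex_block hαk f F (fun z hz => hf z hz) hf0 hFα
  have hw_eq : w k = wex := sumsTo_unique (Set.finite_singleton _) hWS hwexS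
  have hw0 : Tendsto (w k) atTop (nhds 0) := hw_eq ▸ hwex0
  -- Part I : chain from v to w with k-1 factors
  have hwprod : SumsTo {α k} (w k)
      (fun z => (∏ i ∈ range (k-1), blas (α (1+i)) z)
        * (Fk k z / (1 - (starRingEnd ℂ) (α k) * z))) := by
    intro z hz hzS
    have hzα : z ≠ α k := by simpa using hzS
    have h1 := hWS z hz hzS
    have hF : F z = (∏ j ∈ Icc 1 k, blas (α j) z) * Fk k z := hfac k hkm z hz
    have hIcc : Icc 1 k = Ioc 0 k := by ext x; simp [Finset.mem_Icc, Finset.mem_Ioc]; omega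
    have hprod_eq : (∏ j ∈ Icc 1 k, blas (α j) z)
        = (∏ i ∈ range (k-1), blas (α (1+i)) z) * blas (α k) z := by
      rw [hIcc]
      have hsplit : ∏ j ∈ Ioc 0 k, blas (α j) z
          = (∏ j ∈ Ioc 0 (k-1), blas (α j) z) * ∏ j ∈ Ioc (k-1) k, blas (α j) z :=
        (Finset.prod_Ioc_consecutive _ (Nat.zero_le _) (by omega)).symm
      have hlast : Ioc (k-1) k = {k} := by ext x; simp [Finset.mem_Ioc]; omega
      have hre : ∏ j ∈ Ioc 0 (k-1), blas (α j) z
          = ∏ i ∈ range (k-1), blas (α (1+i)) z := by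
        have := prod_Ioc_shift (fun j => blas (α j) z) 0 (k-1)
        simpa using this
      rw [hsplit, hlast, hre, Finset.prod_singleton]
    have heq : F z / (z - α k) = (∏ i ∈ range (k-1), blas (α (1+i)) z)
        * (Fk k z / (1 - (starRingEnd ℂ) (α k) * z)) := by
      have hne1 : (1 : ℂ) - (starRingEnd ℂ) (α k) * z ≠ 0 := one_sub_ne hαk hz
      have hne2 : z - α k ≠ 0 := sub_ne_zero.mpr hzα
      rw [hF, hprod_eq]
      rw [blas]
      field_simp
    show HasSum _ ((∏ i ∈ range (k-1), blas (α (1+i)) z)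
        * (Fk k z / (1 - (starRingEnd ℂ) (α k) * z)))
    rw [← heq]
    exact h1
  have hβ1 : ∀ i, i < k - 1 → ‖α (1+i)‖ < 1 :=
    fun i hi => hα (1+i) (by omega) (le_trans (hcast (by omega)) hkm)
  obtain ⟨hv0, htlvw⟩ := chain (k-1) (fun i => α (1+i)) hβ1 {α k} (Set.finite_singleton _)
    (v k) _ (sumsTo_mono (Set.empty_subset _) hVS) (w k) hwprod hw0
  refine ⟨?_, ynorm_le γ hmono hconv _ _ htlvw⟩
  -- Part II
  -- the exceptional set
  set Sk : Set ℂ := α '' (Set.Icc 1 k) with hSkdef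
  have hSk : Sk.Finite := (Set.finite_Icc 1 k).image α
  have hzSk : ∀ z : ℂ, z ∉ Sk → ∀ j, 1 ≤ j → j ≤ k → z ≠ α j :=
    fun z hzS j hj1 hjk h => hzS ⟨j, ⟨hj1, hjk⟩, h.symm⟩
  -- cancellation identity
  have hcancel : ∀ (M : ℕ), ((k + M : ℕ) : ℕ∞) ≤ m → ∀ z : ℂ, ‖z‖ < 1 → z ∉ Sk →
      Fk k z = (∏ i ∈ range M, blas (α (k+1+i)) z) * Fk (k+M) z := by
    intro M hM z hz hzS
    have hFk : F z = (∏ j ∈ Icc 1 k, blas (α j) z) * Fk k z := hfac k hkm z hz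
    have hFN : F z = (∏ j ∈ Icc 1 (k+M), blas (α j) z) * Fk (k+M) z := hfac (k+M) hM z hz
    have hIcc1 : Icc 1 k = Ioc 0 k := by ext x; simp [Finset.mem_Icc, Finset.mem_Ioc]; omega
    have hIcc2 : Icc 1 (k+M) = Ioc 0 (k+M) := by
      ext x; simp [Finset.mem_Icc, Finset.mem_Ioc]; omega
    have hsplit := Finset.prod_Ioc_consecutive (fun j => blas (α j) z)
      (Nat.zero_le k) (Nat.le_add_right k M)
    have hP1ne : (∏ j ∈ Ioc 0 k, blas (α j) z) ≠ 0 := by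
      rw [Finset.prod_ne_zero_iff]
      intro j hj
      rw [Finset.mem_Ioc] at hj
      have hzne : z ≠ α j := hzSk z hzS j (by omega) hj.2
      exact div_ne_zero (sub_ne_zero.mpr hzne)
        (one_sub_ne (hα j (by omega) (le_trans (hcast hj.2) hkm)) hz)
    have hEq : (∏ j ∈ Ioc 0 k, blas (α j) z) * Fk k z
        = (∏ j ∈ Ioc 0 k, blas (α j) z) * ((∏ j ∈ Ioc k (k+M), blas (α j) z) * Fk (k+M) z) := by
      calc (∏ j ∈ Ioc 0 k, blas (α j) z) * Fk k z
          = (∏ j ∈ Icc 1 k, blas (α j) z) * Fk k z := by rw [hIcc1]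
        _ = F z := hFk.symm
        _ = (∏ j ∈ Icc 1 (k+M), blas (α j) z) * Fk (k+M) z := hFN
        _ = (∏ j ∈ Ioc 0 (k+M), blas (α j) z) * Fk (k+M) z := by rw [hIcc2]
        _ = _ := by rw [← hsplit, mul_assoc]
    have hres := mul_left_cancel₀ hP1ne hEq
    rw [hres, prod_Ioc_shift]
  -- v k sums to product * Fk (k+M)/(1-..)
  have hvprod : ∀ (M : ℕ), ((k + M : ℕ) : ℕ∞) ≤ m →
      SumsTo Sk (v k) (fun z => (∏ i ∈ range M, blas (α (k+1+i)) z)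
        * (Fk (k+M) z / (1 - (starRingEnd ℂ) (α k) * z))) := by
    intro M hM z hz hzS
    have h1 := hv k hk1 hkm z hz
    have h2 := hcancel M hM z hz hzS
    show HasSum _ ((∏ i ∈ range M, blas (α (k+1+i)) z)
        * (Fk (k+M) z / (1 - (starRingEnd ℂ) (α k) * z)))
    rw [← mul_div_assoc, ← h2]
    exact h1
  -- case split on m
  cases m with
  | top =>
    -- infinite case
    by_cases hT : T 0 (v k) = ⊤
    · refine ynorm_le γ hmono hconv _ _ (fun t => ?_)
      rw [T_top hT t]; exact le_top
    · -- construct explicit coefficients for Fk (k+M) / (1 - conj (α k) z)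
      have hp1 : ∀ N : ℕ, 1 ≤ N →
          SumsTo ∅ (fun n => v N n - (starRingEnd ℂ) (α N) * shf (v N) n) (Fk N) := by
        intro N hN z hz _
        have hαN : ‖α N‖ < 1 := hα N hN le_top
        have h1 : HasSum (fun n => v N n * z ^ n)
            (Fk N z / (1 - (starRingEnd ℂ) (α N) * z)) := hv N hN le_top z hz
        have h2 := h1.sub ((hasSum_shf h1).mul_left ((starRingEnd ℂ) (α N)))
        have h3 : (fun n => v N n * z ^ n
            - (starRingEnd ℂ) (α N) * (shf (v N) n * z ^ n))
            = fun n => (v N n - (starRingEnd ℂ) (α N) * shf (v N) n) * z ^ n := by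
          funext n; ring
        rw [h3] at h2
        have hne := one_sub_ne hαN hz
        have hval : Fk N z / (1 - (starRingEnd ℂ) (α N) * z)
            - (starRingEnd ℂ) (α N) * (z * (Fk N z / (1 - (starRingEnd ℂ) (α N) * z)))
            = Fk N z := by
          rw [show Fk N z / (1 - (starRingEnd ℂ) (α N) * z)
            - (starRingEnd ℂ) (α N) * (z * (Fk N z / (1 - (starRingEnd ℂ) (α N) * z)))
            = Fk N z / (1 - (starRingEnd ℂ) (α N) * z) * (1 - (starRingEnd ℂ) (α N) * z) by ring,
            div_mul_cancel₀ _ hne]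
        rw [← hval]; exact h2
      set qq : ℕ → ℕ → ℂ := fun M => geo ((starRingEnd ℂ) (α k))
        (fun n => v (k+M) n - (starRingEnd ℂ) (α (k+M)) * shf (v (k+M)) n) with hqqdef
      have hαkc : ‖(starRingEnd ℂ) (α k)‖ < 1 := by rwa [RCLike.norm_conj]
      have hqq : ∀ M, SumsTo ∅ (qq M)
          (fun z => Fk (k+M) z / (1 - (starRingEnd ℂ) (α k) * z)) := by
        intro M
        exact sumsTo_geo Set.finite_empty (hp1 (k+M) (by omega)) hαkc
      have hβ2 : ∀ M, ∀ i, i < M → ‖α (k+1+i)‖ < 1 :=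
        fun M i _ => hα (k+1+i) (by omega) le_top
      have htlqv : ∀ M t, T t (qq M) ≤ T t (v k) := by
        intro M t
        exact (chain M (fun i => α (k+1+i)) (hβ2 M) Sk hSk (qq M) _
          (sumsTo_mono (Set.empty_subset _) (hqq M)) (v k) (hvprod M le_top) hv0).2 t
      -- uniform bound
      set B : ℝ := Real.sqrt ((T 0 (v k)).toReal) with hBdef
      have hB : ∀ M n, ‖qq M n‖ ≤ B := by
        intro M n
        have h1 : ENNReal.ofReal (‖qq M n‖ ^ 2) ≤ T 0 (v k) :=
          (T_zero_term (qq M) n).trans (htlqv M 0)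
        have h2 : ‖qq M n‖ ^ 2 ≤ (T 0 (v k)).toReal :=
          (ENNReal.ofReal_le_iff_le_toReal hT).mp h1
        rw [hBdef]
        have h3 := Real.sqrt_le_sqrt h2
        rwa [Real.sqrt_sq (norm_nonneg _)] at h3
      -- growth bound on u
      obtain ⟨C, hC0, hCu⟩ := growth2 Set.finite_empty hUS
      -- pointwise limits
      have hφlim : ∀ z : ℂ, ‖z‖ < 1 → z ≠ 0 →
          Tendsto (fun M => Fk (k+M) z / (1 - (starRingEnd ℂ) (α k) * z)) atTop
            (nhds (G z / (1 - (starRingEnd ℂ) (α k) * z))) := by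
        intro z hz _
        have h1 := hGinf rfl z hz
        have h2 : Tendsto (fun M => Fk (k+M) z) atTop (nhds (G z)) := by
          have := (Filter.tendsto_add_atTop_iff_nat (f := fun N => Fk N z) k).mpr h1
          simpa [Nat.add_comm] using this
        exact h2.div_const _
      have hcoeff : ∀ n, Tendsto (fun M => qq M n) atTop (nhds (u k n)) := by
        intro n
        exact coeff_tendsto n B C qq (u k)
          (fun M z => Fk (k+M) z / (1 - (starRingEnd ℂ) (α k) * z))
          (fun z => G z / (1 - (starRingEnd ℂ) (α k) * z))
          hB hC0 hCu
          (fun M z hz _ => hqq M z hz (Set.notMem_empty z))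
          (fun z hz _ => hUS z hz (Set.notMem_empty z))
          hφlim
      refine ynorm_le γ hmono hconv _ _ (fun t => ?_)
      rw [show T t (u k) = ∑' n, ENNReal.ofReal (‖u k (n + t)‖ ^ 2) from rfl]
      refine ENNReal.tsum_le_of_sum_range_le fun R => ?_
      have hconv2 : Tendsto (fun M => ∑ i ∈ range R, ENNReal.ofReal (‖qq M (i + t)‖ ^ 2)) atTop
          (nhds (∑ i ∈ range R, ENNReal.ofReal (‖u k (i + t)‖ ^ 2))) := by
        refine tendsto_finset_sum _ (fun i _ => ?_)
        exact ENNReal.tendsto_ofReal (((hcoeff (i + t)).norm).pow 2)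
      refine le_of_tendsto hconv2 (Eventually.of_forall fun M => ?_)
      calc ∑ i ∈ range R, ENNReal.ofReal (‖qq M (i + t)‖ ^ 2)
          ≤ T t (qq M) := ENNReal.sum_le_tsum _
        _ ≤ T t (v k) := htlqv M t
  | coe mf =>
    -- finite case
    have hkmf : k ≤ mf := by exact_mod_cast hkm
    have hNM : k + (mf - k) = mf := by omega
    have hGsub : SumsTo Sk (v k) (fun z => (∏ i ∈ range (mf - k), blas (α (k+1+i)) z)
        * (G z / (1 - (starRingEnd ℂ) (α k) * z))) := by
      intro z hz hzS
      have h1 := hvprod (mf - k) (by rw [hNM]) z hz hzS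
      have h2 : Fk (k + (mf - k)) z = G z := by
        rw [hNM]; exact hGfin mf rfl z hz
      show HasSum _ ((∏ i ∈ range (mf - k), blas (α (k+1+i)) z)
        * (G z / (1 - (starRingEnd ℂ) (α k) * z)))
      rw [← h2]
      exact h1
    have hβ2 : ∀ i, i < mf - k → ‖α (k+1+i)‖ < 1 :=
      fun i hi => hα (k+1+i) (by omega) (hcast (by omega))
    obtain ⟨_, htluv⟩ := chain (mf - k) (fun i => α (k+1+i)) hβ2 Sk hSk (u k) _
      (sumsTo_mono (Set.empty_subset _) hUS) (v k) hGsub hv0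
    exact ynorm_le γ hmono hconv _ _ htluv
end
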